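/- arXiv:2012.14302 — 13 statements merged into one kernel-verified Lean document; each statement's English description precedes it below -/
import Mathlib

section
/- Let A be a complete topological ring, B a complete topological A-algebra, and (e_i)_{i∈ℕ} a family of A-linear maps B → B satisfying e_0 = id_B and e_j ∘ e_i = binom(i+j,i)·e_{i+j} for all i,j ∈ ℕ. Then the following are equivalent: (a) each e_i is continuous, e_n(b·b') = ∑_{i+j=n} e_i(b)·e_j(b') for all b,b' ∈ B and n ∈ ℕ, and the sequence (e_i) converges continuously to the zero endomorphism of B (so that (e_i) is a topologically integrable iterated higher A-derivation of B); (b) for every b ∈ B the family (e_i(b))_{i∈ℕ} converges to 0 in B, and the resulting map e : B → B{T} defined by e(b) = ∑_{i∈ℕ} e_i(b)T^i is a continuous A-algebra homomorphism (so that e is a restricted exponential A-homomorphism). -/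
open Filter Topology
open scoped UniformConvergence Uniformity

/-- A sequence of maps between topological additive groups *converges continuously*
to `f₀` if for every point `g` and every open subgroup `H'` of the target there exist an
open subgroup `H` of the source and an index `n₀` such that
`f n (g + x) - f₀ (g + x) ∈ H'` for every `x ∈ H` and every `n ≥ n₀`. -/
def ConvergesContinuouslyTo {G G' : Type*} [AddCommGroup G] [TopologicalSpace G]
    [AddCommGroup G'] [TopologicalSpace G'] (f : ℕ → G → G') (f₀ : G → G') : Prop :=
  ∀ g : G, ∀ H' : AddSubgroup G', IsOpen (H' : Set G') →
    ∃ H : AddSubgroup G, IsOpen (H : Set G) ∧ ∃ n₀ : ℕ,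
      ∀ x ∈ H, ∀ n, n₀ ≤ n → f n (g + x) - f₀ (g + x) ∈ H'

/-- A topological ring has a linear topology admitting a countable decreasing fundamental
system of open ideals starting with the whole ring. -/
def HasLinearRingTopology (A : Type*) [CommRing A] [TopologicalSpace A] : Prop :=
  ∃ a : ℕ → Ideal A, a 0 = ⊤ ∧ (∀ m n : ℕ, n ≤ m → a m ≤ a n) ∧
    (∀ n, IsOpen (a n : Set A)) ∧ ∀ s ∈ nhds (0 : A), ∃ n, (a n : Set A) ⊆ s

/-- for a family `(eᵢ)` of `A`-linear maps of `B` with `e₀ = id` and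
`e_j ∘ e_i = (i+j).choose i • e_{i+j}`, being a topologically integrable iterated higher
`A`-derivation is equivalent to the associated map `b ↦ ∑ eᵢ(b) Tⁱ` landing in the ring of
restricted power series `B{T}` (i.e. coefficients tending to `0`) and being a continuous
`A`-algebra homomorphism there (continuity w.r.t. the topology of `B{T}`, induced by the
uniform convergence topology on `ℕ →ᵤ B`). -/
theorem restrictedExponential_iff_topologicallyIntegrable
    (A B : Type*) [CommRing A] [UniformSpace A] [IsUniformAddGroup A] [IsTopologicalRing A]
    [CompleteSpace A] [T2Space A]
    [CommRing B] [Algebra A B] [UniformSpace B] [IsUniformAddGroup B] [IsTopologicalRing B]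
    [CompleteSpace B] [T2Space B]
    (hA : HasLinearRingTopology A) (hB : HasLinearRingTopology B)
    (halg : Continuous (algebraMap A B))
    (e : ℕ → B →ₗ[A] B)
    (h0 : e 0 = LinearMap.id)
    (hcomp : ∀ (i j : ℕ) (b : B), e j (e i b) = (i + j).choose i • e (i + j) b) :
    ((∀ i, Continuous (e i)) ∧
        (∀ (n : ℕ) (b b' : B),
          e n (b * b') = ∑ p ∈ Finset.HasAntidiagonal.antidiagonal n, e p.1 b * e p.2 b') ∧
        ConvergesContinuouslyTo (fun i b => e i b) (fun _ => 0)) ↔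
      ((∀ b : B, Tendsto (fun i => e i b) atTop (nhds 0)) ∧
        (∀ i, e i (1 : B) = if i = 0 then 1 else 0) ∧
        (∀ (n : ℕ) (b b' : B),
          e n (b * b') = ∑ p ∈ Finset.HasAntidiagonal.antidiagonal n, e p.1 b * e p.2 b') ∧
        Continuous (fun b : B => UniformFun.ofFun (fun i => e i b))) := by
  obtain ⟨a, ha0, hamono, haopen, habasis⟩ := hB
  have hanhds : ∀ m, (a m : Set B) ∈ 𝓝 (0 : B) :=
    fun m => (haopen m).mem_nhds (a m).zero_mem
  constructor
  · rintro ⟨hcont, hmul, hcc⟩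
    refine ⟨?_, ?_, hmul, ?_⟩
    · -- pointwise convergence to 0
      intro b
      rw [tendsto_def]
      intro s hs
      obtain ⟨m, hm⟩ := habasis s hs
      obtain ⟨H, -, n₀, hH⟩ := hcc b (a m).toAddSubgroup (haopen m)
      rw [Filter.mem_atTop_sets]
      refine ⟨n₀, fun n hn => hm ?_⟩
      have := hH 0 H.zero_mem n hn
      simpa using this
    · -- values at 1
      intro i
      induction i using Nat.strong_induction_on with
      | _ i ih =>
        rcases Nat.eq_zero_or_pos i with hi | hi
        · subst hi; simp [h0]
        · have hne : i ≠ 0 := hi.ne'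
          simp only [if_neg hne]
          have key : e i (1 : B) = e i 1 + e i 1 := by
            have h1 := hmul i 1 1
            rw [mul_one] at h1
            have hsub : ({((0 : ℕ), i), (i, (0 : ℕ))} : Finset (ℕ × ℕ)) ⊆
                Finset.HasAntidiagonal.antidiagonal i := by
              intro p hp
              simp only [Finset.mem_insert, Finset.mem_singleton] at hp
              rcases hp with rfl | rfl <;> simp [Finset.mem_antidiagonal]
            have hz : ∀ p ∈ Finset.HasAntidiagonal.antidiagonal i,
                p ∉ ({((0 : ℕ), i), (i, (0 : ℕ))} : Finset (ℕ × ℕ)) →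
                e p.1 (1 : B) * e p.2 1 = 0 := by
              rintro ⟨x, y⟩ hp hnp
              rw [Finset.HasAntidiagonal.mem_antidiagonal] at hp
              simp only [Finset.mem_insert, Finset.mem_singleton, Prod.mk.injEq, not_or] at hnp
              have hx0 : x ≠ 0 := fun h => hnp.1 ⟨h, by omega⟩
              have hxi : x ≠ i := fun h => hnp.2 ⟨h, by omega⟩
              have : e x (1 : B) = 0 := by
                have := ih x (by omega)
                simpa [hx0] using this
              simp [this]
            rw [← Finset.sum_subset hsub hz] at h1
            rw [Finset.sum_pair (by simp [hne] : ((0 : ℕ), i) ≠ (i, (0 : ℕ)))] at h1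
            simpa [h0] using h1
          have := key.symm
          rwa [add_eq_left] at this
    · -- continuity of the map to UniformFun
      let F : B →+ UniformFun ℕ B :=
        AddMonoidHom.mk' (fun b => UniformFun.ofFun fun i => e i b)
          (fun x y => funext fun i => map_add (e i) x y)
      have hF0 : ContinuousAt F 0 := by
        have h00 : F 0 = 0 := map_zero F
        rw [ContinuousAt, h00]
        rw [(UniformFun.hasBasis_nhds ℕ B 0).tendsto_right_iff]
        intro V hV
        rw [uniformity_eq_comap_nhds_zero B, mem_comap] at hV
        obtain ⟨S, hS, hSV⟩ := hV
        obtain ⟨m, hm⟩ := habasis S hS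
        obtain ⟨H, hHopen, n₀, hH⟩ := hcc 0 (a m).toAddSubgroup (haopen m)
        have hU : ((H : Set B) ∩ ⋂ i ∈ Finset.range n₀, (e i) ⁻¹' (a m)) ∈ 𝓝 (0 : B) := by
          refine Filter.inter_mem (hHopen.mem_nhds H.zero_mem) ?_
          rw [Filter.biInter_finset_mem]
          intro i _
          exact (hcont i).continuousAt.preimage_mem_nhds (by simpa using hanhds m)
        filter_upwards [hU] with b hb
        intro i
        apply hSV
        show (UniformFun.toFun ((0 : ℕ →ᵤ B)) i, UniformFun.toFun (F b) i) ∈ _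
        have hmem : e i b ∈ a m := by
          rcases lt_or_ge i n₀ with hi | hi
          · have := hb.2
            rw [Set.mem_iInter₂] at this
            exact this i (Finset.mem_range.mpr hi)
          · have := hH b hb.1 i hi
            simpa using this
        simpa [show UniformFun.toFun (F b) i = e i b from rfl] using hm hmem
      exact continuous_of_continuousAt_zero F hF0
  · rintro ⟨htend, -, hmul, hcont⟩
    have heval : ∀ i, Continuous (e i) := by
      intro i
      have : Continuous fun f : UniformFun ℕ B => UniformFun.toFun f i :=
        (UniformFun.uniformContinuous_eval B i).continuous
      exact this.comp hcont
    refine ⟨heval, hmul, ?_⟩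
    intro g H' hH'
    have hH'nhds : (H' : Set B) ∈ 𝓝 (0 : B) := hH'.mem_nhds H'.zero_mem
    -- entourage from H'
    have hV : {p : B × B | p.2 - p.1 ∈ H'} ∈ 𝓤 B := by
      rw [uniformity_eq_comap_nhds_zero B, mem_comap]
      exact ⟨H', hH'nhds, fun p hp => hp⟩
    -- continuity at g
    have hcg := hcont.continuousAt (x := g)
    rw [ContinuousAt, (UniformFun.hasBasis_nhds ℕ B _).tendsto_right_iff] at hcg
    have hU := hcg _ hV
    rw [eventually_iff_exists_mem] at hU
    obtain ⟨U, hUnhds, hUprop⟩ := hU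
    have hU0 : {x : B | g + x ∈ U} ∈ 𝓝 (0 : B) := by
      have : Continuous fun x : B => g + x := continuous_const.add continuous_id
      have := this.continuousAt (x := (0 : B))
      rw [ContinuousAt] at this
      apply this
      simpa using hUnhds
    obtain ⟨m, hm⟩ := habasis _ hU0
    obtain ⟨n₀, hn₀⟩ := eventually_atTop.mp (htend g hH'nhds)
    refine ⟨(a m).toAddSubgroup, haopen m, n₀, ?_⟩
    intro x hx n hn
    have hgx : g + x ∈ U := hm hx
    have h1 : e n (g + x) - e n g ∈ H' := hUprop (g + x) hgx n
    have h2 : e n g ∈ H' := hn₀ n hn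
    have : (e n (g + x) - e n g) + e n g ∈ H' := H'.add_mem h1 h2
    rw [sub_add_cancel] at this
    simpa using this
end

section
/- Let A be a complete topological ring, B a complete topological A-algebra, and (e_i)_{i∈ℕ} a restricted exponential system on B over A. Assume that B admits a fundamental system of neighborhoods of 0 consisting of open ideals all of which are prime ideals of B. Then B^e is factorially closed in B: whenever b, b' ∈ B satisfy b·b' ∈ B^e and b·b' ≠ 0, both b and b' belong to B^e. In particular, if B is not the zero ring, every invertible element of B belongs to B^e. -/
open Filter Topology

/-- A *restricted exponential system* on a topological `A`-algebra `B`
(equivalently, a topologically integrable iterated higher `A`-derivation of `B`):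
a family `(eᵢ)` of continuous `A`-module endomorphisms of `B` with `e₀ = id`,
satisfying the Leibniz rule, the iteration rule `e_j ∘ e_i = (i+j).choose i • e_{i+j}`,
and converging continuously to the zero endomorphism. -/
structure IsRestrictedExpSystem (A B : Type*) [CommRing A] [CommRing B] [Algebra A B]
    [TopologicalSpace B] (e : ℕ → B → B) : Prop where
  map_add : ∀ (i : ℕ) (b b' : B), e i (b + b') = e i b + e i b'
  map_smul : ∀ (i : ℕ) (a : A) (b : B), e i (a • b) = a • e i b
  continuous : ∀ i, Continuous (e i)
  zeroth : ∀ b, e 0 b = b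
  leibniz : ∀ (n : ℕ) (b b' : B),
    e n (b * b') = ∑ p ∈ Finset.HasAntidiagonal.antidiagonal n, e p.1 b * e p.2 b'
  comp : ∀ (i j : ℕ) (b : B), e j (e i b) = (i + j).choose i • e (i + j) b
  conv_zero : ConvergesContinuouslyTo e (fun _ => 0)

section Aux

variable {B : Type*} [CommRing B]

/-- `e i 1 = 0` for `i ≥ 1`, purely algebraically from the Leibniz rule. -/
lemma exp_one_aux (e : ℕ → B → B) (h0 : ∀ b, e 0 b = b)
    (hl : ∀ (n : ℕ) (b b' : B),
      e n (b * b') = ∑ p ∈ Finset.HasAntidiagonal.antidiagonal n, e p.1 b * e p.2 b') :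
    ∀ i, 1 ≤ i → e i (1 : B) = 0 := by
  intro i
  induction i using Nat.strong_induction_on with
  | _ n ih =>
    intro hn
    obtain ⟨m, rfl⟩ : ∃ m, n = m + 1 := ⟨n - 1, by omega⟩
    have h := hl (m + 1) 1 1
    rw [mul_one, Finset.Nat.sum_antidiagonal_eq_sum_range_succ_mk] at h
    rw [Finset.sum_range_succ, Finset.sum_range_succ'] at h
    have hmid : ∀ i ∈ Finset.range m, e (i + 1) 1 * e (m + 1 - (i + 1)) 1 = 0 := by
      intro i hi
      rw [ih (i + 1) (by simp at hi; omega) (by omega), zero_mul]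
    rw [Finset.sum_congr rfl hmid, Finset.sum_const_zero, zero_add] at h
    simp only [Nat.sub_self, Nat.sub_zero, h0, one_mul, mul_one] at h
    -- h : e (m+1) 1 = e (m+1) 1 + e (m+1) 1
    have h2 : e (m + 1) 1 + e (m + 1) 1 = e (m + 1) 1 + 0 := by
      rw [add_zero]; exact h.symm
    exact (add_left_cancel h2)

end Aux

section Key

variable {B : Type*} [CommRing B]

/-- Key lemma: modulo an open prime not containing `x*y`, all higher `e i x`, `e i y`
vanish, by a degree argument in `(B ⧸ 𝔭)[X]`. -/
lemma key_prime (e : ℕ → B → B)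
    (hl : ∀ (n : ℕ) (b b' : B),
      e n (b * b') = ∑ p ∈ Finset.HasAntidiagonal.antidiagonal n, e p.1 b * e p.2 b')
    (h0 : ∀ b, e 0 b = b)
    (𝔭 : Ideal B) (hp : 𝔭.IsPrime) (x y : B) (N : ℕ)
    (hNx : ∀ i, N < i → e i x ∈ 𝔭) (hNy : ∀ i, N < i → e i y ∈ 𝔭)
    (hxy : ∀ i, 1 ≤ i → e i (x * y) = 0) (hne : x * y ∉ 𝔭) :
    ∀ i, 1 ≤ i → e i x ∈ 𝔭 ∧ e i y ∈ 𝔭 := by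
  classical
  haveI : 𝔭.IsPrime := hp
  set q : B →+* B ⧸ 𝔭 := Ideal.Quotient.mk 𝔭 with hq
  set P : Polynomial (B ⧸ 𝔭) :=
    ∑ i ∈ Finset.range (N + 1), Polynomial.monomial i (q (e i x)) with hP
  set Q : Polynomial (B ⧸ 𝔭) :=
    ∑ i ∈ Finset.range (N + 1), Polynomial.monomial i (q (e i y)) with hQ
  have coeff_gen : ∀ (z : B), (∀ i, N < i → e i z ∈ 𝔭) → ∀ n,
      (∑ i ∈ Finset.range (N + 1), Polynomial.monomial i (q (e i z))).coeff n
        = q (e n z) := by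
    intro z hz n
    rw [Polynomial.finset_sum_coeff]
    simp only [Polynomial.coeff_monomial]
    rw [Finset.sum_ite_eq' (Finset.range (N + 1)) n (fun i => q (e i z))]
    by_cases hn : n ∈ Finset.range (N + 1)
    · simp [hn]
    · rw [if_neg hn]
      refine (Ideal.Quotient.eq_zero_iff_mem.mpr ?_).symm
      exact hz n (by simpa using hn)
  have hPc : ∀ n, P.coeff n = q (e n x) := coeff_gen x hNx
  have hQc : ∀ n, Q.coeff n = q (e n y) := coeff_gen y hNy
  have hmul : P * Q = Polynomial.C (q (x * y)) := by
    ext n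
    rw [Polynomial.coeff_mul]
    have hterm : ∀ p ∈ Finset.HasAntidiagonal.antidiagonal n,
        P.coeff p.1 * Q.coeff p.2 = q (e p.1 x * e p.2 y) := by
      intro p _
      rw [hPc, hQc, map_mul]
    rw [Finset.sum_congr rfl hterm, ← map_sum, ← hl n x y]
    cases n with
    | zero => rw [h0, Polynomial.coeff_C_zero]
    | succ m =>
        rw [hxy (m + 1) (by omega), map_zero, Polynomial.coeff_C,
          if_neg (by omega)]
  have hC0 : q (x * y) ≠ 0 := fun h => hne (Ideal.Quotient.eq_zero_iff_mem.mp h)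
  have hP0 : P ≠ 0 := by
    intro h; rw [h, zero_mul] at hmul
    exact hC0 (Polynomial.C_eq_zero.mp hmul.symm)
  have hQ0 : Q ≠ 0 := by
    intro h; rw [h, mul_zero] at hmul
    exact hC0 (Polynomial.C_eq_zero.mp hmul.symm)
  have hdeg : P.natDegree + Q.natDegree = 0 := by
    rw [← Polynomial.natDegree_mul hP0 hQ0, hmul, Polynomial.natDegree_C]
  intro i hi
  constructor
  · have : P.coeff i = 0 :=
      Polynomial.coeff_eq_zero_of_natDegree_lt (by omega)
    rw [hPc] at this
    exact Ideal.Quotient.eq_zero_iff_mem.mp this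
  · have : Q.coeff i = 0 :=
      Polynomial.coeff_eq_zero_of_natDegree_lt (by omega)
    rw [hQc] at this
    exact Ideal.Quotient.eq_zero_iff_mem.mp this

end Key

/-- From continuous convergence to zero: for each `b` and each open ideal `I`,
`e i b ∈ I` for all large `i`. -/
lemma eventually_mem {B : Type*} [CommRing B] [TopologicalSpace B]
    (e : ℕ → B → B) (hc : ConvergesContinuouslyTo e (fun _ => (0 : B)))
    (b : B) (I : Ideal B) (hI : IsOpen (I : Set B)) :
    ∃ n₀, ∀ i, n₀ ≤ i → e i b ∈ I := by
  obtain ⟨H, _, n₀, h⟩ := hc b I.toAddSubgroup (by simpa using hI)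
  refine ⟨n₀, fun i hi => ?_⟩
  have := h 0 H.zero_mem i hi
  simpa using this


/-- if `B` admits a fundamental system of neighborhoods of `0` consisting of
open prime ideals, then the ring of invariants of a restricted exponential system is
factorially closed in `B`; in particular, if `B` is nontrivial every unit of `B` is
invariant. -/
theorem invariants_factorially_closed
    (A B : Type*) [CommRing A] [UniformSpace A] [IsUniformAddGroup A] [IsTopologicalRing A]
    [CompleteSpace A] [T2Space A]
    [CommRing B] [Algebra A B] [UniformSpace B] [IsUniformAddGroup B] [IsTopologicalRing B]
    [CompleteSpace B] [T2Space B]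
    (hA : HasLinearRingTopology A) (hB : HasLinearRingTopology B)
    (halg : Continuous (algebraMap A B))
    (hprime : ∃ b : ℕ → Ideal B, (∀ n, (b n).IsPrime) ∧ (∀ n, IsOpen (b n : Set B)) ∧
      ∀ s ∈ nhds (0 : B), ∃ n, (b n : Set B) ⊆ s)
    (e : ℕ → B → B) (he : IsRestrictedExpSystem A B e) :
    (∀ x y : B, x * y ∈ {b : B | ∀ i, 1 ≤ i → e i b = 0} → x * y ≠ 0 →
        x ∈ {b : B | ∀ i, 1 ≤ i → e i b = 0} ∧ y ∈ {b : B | ∀ i, 1 ≤ i → e i b = 0}) ∧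
      (Nontrivial B → ∀ x : B, IsUnit x → x ∈ {b : B | ∀ i, 1 ≤ i → e i b = 0}) := by
  obtain ⟨bI, hbprime, hbopen, hbbasis⟩ := hprime
  -- the intersection of the fundamental system of primes is trivial
  have hinter : ∀ z : B, (∀ n, z ∈ bI n) → z = 0 := by
    intro z hz
    by_contra hzne
    obtain ⟨n, hn⟩ := hbbasis {z}ᶜ (compl_singleton_mem_nhds (Ne.symm hzne))
    exact hn (hz n) rfl
  -- main claim
  have main : ∀ x y : B, (∀ i, 1 ≤ i → e i (x * y) = 0) → x * y ≠ 0 →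
      ∀ i, 1 ≤ i → e i x = 0 ∧ e i y = 0 := by
    intro x y hxy hne i hi
    have step : ∀ n, e i x ∈ bI n ∧ e i y ∈ bI n := by
      intro n
      have h0n : (bI n : Set B) ∈ 𝓝 (0 : B) :=
        (hbopen n).mem_nhds (bI n).zero_mem
      have hU : (bI n : Set B) ∩ {x * y}ᶜ ∈ 𝓝 (0 : B) :=
        Filter.inter_mem h0n (compl_singleton_mem_nhds (Ne.symm hne))
      obtain ⟨k, hk⟩ := hbbasis _ hU
      have hknotxy : x * y ∉ bI k := fun h => (hk h).2 rfl
      obtain ⟨Nx, hNx⟩ := eventually_mem e he.conv_zero x (bI k) (hbopen k)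
      obtain ⟨Ny, hNy⟩ := eventually_mem e he.conv_zero y (bI k) (hbopen k)
      have hkey := key_prime e he.leibniz he.zeroth (bI k) (hbprime k) x y
        (max Nx Ny) (fun j hj => hNx j (by omega)) (fun j hj => hNy j (by omega))
        hxy hknotxy i hi
      exact ⟨(hk hkey.1).1, (hk hkey.2).1⟩
    exact ⟨hinter _ fun n => (step n).1, hinter _ fun n => (step n).2⟩
  constructor
  · intro x y hmem hne
    exact ⟨fun i hi => (main x y hmem hne i hi).1,
           fun i hi => (main x y hmem hne i hi).2⟩
  · intro hnt x hx
    obtain ⟨u, rfl⟩ := hx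
    have h1 : (u : B) * ↑u⁻¹ = 1 := u.mul_inv
    intro i hi
    have hone : ∀ j, 1 ≤ j → e j ((u : B) * ↑u⁻¹) = 0 := by
      intro j hj; rw [h1]; exact exp_one_aux e he.zeroth he.leibniz j hj
    have hne1 : (u : B) * ↑u⁻¹ ≠ 0 := by rw [h1]; exact one_ne_zero
    exact (main _ _ hone hne1 i hi).1
end

section
/- Let A be a complete topological ring, B a complete topological A-algebra, (e_i)_{i∈ℕ} a restricted exponential system on B over A, and a ∈ B^e an invariant element. Then the family (a^i·e_i)_{i∈ℕ}, where (a^i·e_i)(b) = a^i·e_i(b) for b ∈ B, is again a restricted exponential system on B over A. -/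
open Filter Topology

/-- if `(eᵢ)` is a restricted exponential system on `B` over `A` and `a` is an
invariant element, then the family `(aⁱ·eᵢ)` is again a restricted exponential system. -/
theorem replica_restrictedExpSystem
    (A B : Type*) [CommRing A] [UniformSpace A] [IsUniformAddGroup A] [IsTopologicalRing A]
    [CompleteSpace A] [T2Space A]
    [CommRing B] [Algebra A B] [UniformSpace B] [IsUniformAddGroup B] [IsTopologicalRing B]
    [CompleteSpace B] [T2Space B]
    (hA : HasLinearRingTopology A) (hB : HasLinearRingTopology B)
    (halg : Continuous (algebraMap A B))
    (e : ℕ → B → B) (he : IsRestrictedExpSystem A B e)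
    (a : B) (ha : ∀ i, 1 ≤ i → e i a = 0) :
    IsRestrictedExpSystem A B (fun i b => a ^ i * e i b) := by
  obtain ⟨I, hItop, hImono, hIopen, hIbasis⟩ := hB
  -- if `c` is invariant, then `e j (c * d) = c * e j d`
  have hinv : ∀ c : B, (∀ p, 1 ≤ p → e p c = 0) →
      ∀ (j : ℕ) (d : B), e j (c * d) = c * e j d := by
    intro c hc j d
    rw [he.leibniz, Finset.sum_eq_single_of_mem (0, j)]
    · rw [he.zeroth]
    · simp
    · rintro ⟨p, q⟩ hm hne
      have hpq : p + q = j := Finset.HasAntidiagonal.mem_antidiagonal.mp hm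
      have hp : 1 ≤ p := by
        rcases Nat.eq_zero_or_pos p with h | h
        · exfalso; apply hne; subst h; simpa using hpq
        · exact h
      rw [hc p hp, zero_mul]
  -- powers of `a` are invariant
  have hpow : ∀ i, 1 ≤ i → ∀ p, 1 ≤ p → e p (a ^ i) = 0 := by
    intro i hi
    induction i, hi using Nat.le_induction with
    | base => simpa using ha
    | succ i hi ih =>
      intro p hp
      rw [pow_succ, mul_comm, hinv a ha p (a ^ i), ih p hp, mul_zero]
  constructor
  · intro i b b'; rw [he.map_add, mul_add]
  · intro i a' b; rw [he.map_smul, mul_smul_comm]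
  · intro i; exact continuous_const.mul (he.continuous i)
  · intro b; simp [he.zeroth]
  · intro n b b'
    rw [he.leibniz, Finset.mul_sum]
    refine Finset.sum_congr rfl ?_
    rintro ⟨p, q⟩ hm
    have hpq : p + q = n := Finset.HasAntidiagonal.mem_antidiagonal.mp hm
    rw [← hpq, pow_add]; ring
  · intro i j b
    rcases Nat.eq_zero_or_pos i with hi | hi
    · subst hi
      simp [he.zeroth]
    · rw [hinv (a ^ i) (hpow i hi) j (e i b), he.comp]
      simp only [nsmul_eq_mul, pow_add]
      ring
  · intro g H' hH'
    obtain ⟨k, hk⟩ := hIbasis H' (hH'.mem_nhds H'.zero_mem)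
    obtain ⟨H, hHopen, n₀, hn⟩ := he.conv_zero g (I k).toAddSubgroup (hIopen k)
    refine ⟨H, hHopen, n₀, fun x hx n hn' => ?_⟩
    have h1 := hn x hx n hn'
    simp only [sub_zero] at h1 ⊢
    exact hk ((I k).mul_mem_left (a ^ n) h1)
end

section
/- Let A be a complete topological ring, let π : B → C be a surjective, open, continuous homomorphism of complete topological A-algebras, and let (e_i)_{i∈ℕ} be a restricted exponential system on B over A such that e_i(ker π) ⊆ ker π for every i ∈ ℕ. Then there exists a unique restricted exponential system (ē_i)_{i∈ℕ} on C over A such that ē_i ∘ π = π ∘ e_i for every i ∈ ℕ. -/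
open Filter Topology

/-- a restricted exponential system descends uniquely along a surjective open
continuous homomorphism `π : B → C` of complete topological `A`-algebras whose kernel is
stable under all the `eᵢ`. -/
theorem restrictedExpSystem_descends
    (A B C : Type*) [CommRing A] [UniformSpace A] [IsUniformAddGroup A] [IsTopologicalRing A]
    [CompleteSpace A] [T2Space A]
    [CommRing B] [Algebra A B] [UniformSpace B] [IsUniformAddGroup B] [IsTopologicalRing B]
    [CompleteSpace B] [T2Space B]
    [CommRing C] [Algebra A C] [UniformSpace C] [IsUniformAddGroup C] [IsTopologicalRing C]
    [CompleteSpace C] [T2Space C]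
    (hA : HasLinearRingTopology A) (hB : HasLinearRingTopology B)
    (hC : HasLinearRingTopology C)
    (halgB : Continuous (algebraMap A B)) (halgC : Continuous (algebraMap A C))
    (π : B →ₐ[A] C) (hsurj : Function.Surjective π) (hopen : IsOpenMap π)
    (hcont : Continuous π)
    (e : ℕ → B → B) (he : IsRestrictedExpSystem A B e)
    (hker : ∀ (i : ℕ) (b : B), π b = 0 → π (e i b) = 0) :
    ∃! ebar : ℕ → C → C, IsRestrictedExpSystem A C ebar ∧
      ∀ (i : ℕ) (b : B), ebar i (π b) = π (e i b) := by
  classical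
  set s := Function.surjInv hsurj with hs
  have hπs : ∀ c, π (s c) = c := fun c => Function.surjInv_eq hsurj c
  have hwd : ∀ i (b b' : B), π b = π b' → π (e i b) = π (e i b') := by
    intro i b b' h
    have h0 : π (b - b') = 0 := by rw [map_sub, h, sub_self]
    have h1 := hker i _ h0
    have hsub : e i (b - b') = e i b - e i b' :=
      (AddMonoidHom.mk' (e i) (he.map_add i)).map_sub b b'
    rw [hsub, map_sub, sub_eq_zero] at h1
    exact h1
  set ebar : ℕ → C → C := fun i c => π (e i (s c)) with hebar
  have hcomm : ∀ i (b : B), ebar i (π b) = π (e i b) := fun i b =>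
    hwd i _ _ (hπs _)
  have hquot : IsQuotientMap π := hopen.isQuotientMap hcont hsurj
  refine ⟨ebar, ⟨⟨?_, ?_, ?_, ?_, ?_, ?_, ?_⟩, hcomm⟩, ?_⟩
  · -- map_add
    intro i c c'
    obtain ⟨b, rfl⟩ := hsurj c
    obtain ⟨b', rfl⟩ := hsurj c'
    rw [← map_add, hcomm, hcomm, hcomm, he.map_add, map_add]
  · -- map_smul
    intro i a c
    obtain ⟨b, rfl⟩ := hsurj c
    have : a • π b = π (a • b) := (map_smul π a b).symm
    rw [this, hcomm, hcomm, he.map_smul, map_smul]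
  · -- continuous
    intro i
    rw [hquot.continuous_iff]
    have : ebar i ∘ π = π ∘ e i := funext fun b => hcomm i b
    rw [this]
    exact hcont.comp (he.continuous i)
  · -- zeroth
    intro c
    obtain ⟨b, rfl⟩ := hsurj c
    rw [hcomm, he.zeroth]
  · -- leibniz
    intro n c c'
    obtain ⟨b, rfl⟩ := hsurj c
    obtain ⟨b', rfl⟩ := hsurj c'
    rw [← map_mul, hcomm, he.leibniz, map_sum]
    refine Finset.sum_congr rfl fun p _ => ?_
    rw [map_mul, hcomm, hcomm]
  · -- comp
    intro i j c
    obtain ⟨b, rfl⟩ := hsurj c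
    rw [hcomm, hcomm, he.comp, map_nsmul]
    exact congrArg _ (hcomm (i + j) b)
  · -- conv_zero
    intro g H' hH'
    obtain ⟨b, rfl⟩ := hsurj g
    set H'' : AddSubgroup B := H'.comap (π : B →+ C) with hH''def
    have hH''open : IsOpen (H'' : Set B) := hH'.preimage hcont
    obtain ⟨H, hHopen, n₀, hH⟩ := he.conv_zero b H'' hH''open
    refine ⟨H.map (π : B →+ C), hopen _ hHopen, n₀, ?_⟩
    rintro y hy n hn
    obtain ⟨x, hx, rfl⟩ := hy
    have : (π : B →+ C) x = π x := rfl
    rw [this, ← map_add, hcomm]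
    have h2 := hH x hx n hn
    simpa [hH''def] using h2
  · -- uniqueness
    intro f ⟨_, hf⟩
    funext i c
    obtain ⟨b, rfl⟩ := hsurj c
    rw [hf, hcomm]
end

section
/- Let A be a complete topological ring, B a complete topological A-algebra, and let (e_i)_{i∈ℕ} and (e'_j)_{j∈ℕ} be restricted exponential systems on B over A such that e_i ∘ e'_j = e'_j ∘ e_i for all i, j ∈ ℕ. Then the family (e''_n)_{n∈ℕ} defined by e''_n = ∑_{i+j=n} e'_j ∘ e_i is a restricted exponential system on B over A. -/
open Filter Topology

/-- Auxiliary shuffle lemma for quadruple antidiagonal sums. -/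
lemma antidiagonal_shuffle {M : Type*} [AddCommMonoid M] (n : ℕ) (f : ℕ → ℕ → ℕ → ℕ → M) :
    ∑ p ∈ Finset.HasAntidiagonal.antidiagonal n, ∑ q ∈ Finset.HasAntidiagonal.antidiagonal p.1,
      ∑ r ∈ Finset.HasAntidiagonal.antidiagonal p.2, f q.1 q.2 r.1 r.2
    = ∑ p ∈ Finset.HasAntidiagonal.antidiagonal n, ∑ q ∈ Finset.HasAntidiagonal.antidiagonal p.1,
      ∑ r ∈ Finset.HasAntidiagonal.antidiagonal p.2, f q.1 r.1 q.2 r.2 := by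
  have h1 : ∀ F : (_ : ℕ × ℕ) × ((ℕ × ℕ) × (ℕ × ℕ)) → M,
      ∑ x ∈ (Finset.HasAntidiagonal.antidiagonal n).sigma
        (fun p => Finset.HasAntidiagonal.antidiagonal p.1 ×ˢ Finset.HasAntidiagonal.antidiagonal p.2), F x
      = ∑ p ∈ Finset.HasAntidiagonal.antidiagonal n, ∑ q ∈ Finset.HasAntidiagonal.antidiagonal p.1,
          ∑ r ∈ Finset.HasAntidiagonal.antidiagonal p.2, F ⟨p, (q, r)⟩ := by
    intro F
    rw [Finset.sum_sigma]
    exact Finset.sum_congr rfl fun p _ => Finset.sum_product _ _ _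
  rw [← h1 (fun x => f x.2.1.1 x.2.1.2 x.2.2.1 x.2.2.2),
      ← h1 (fun x => f x.2.1.1 x.2.2.1 x.2.1.2 x.2.2.2)]
  refine Finset.sum_nbij'
    (fun x => ⟨(x.2.1.1 + x.2.2.1, x.2.1.2 + x.2.2.2), ((x.2.1.1, x.2.2.1), (x.2.1.2, x.2.2.2))⟩)
    (fun x => ⟨(x.2.1.1 + x.2.2.1, x.2.1.2 + x.2.2.2), ((x.2.1.1, x.2.2.1), (x.2.1.2, x.2.2.2))⟩)
    ?_ ?_ ?_ ?_ ?_
  · rintro ⟨⟨p1, p2⟩, ⟨⟨a, b⟩, ⟨c, d⟩⟩⟩ hx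
    simp only [Finset.mem_sigma, Finset.mem_product, Finset.HasAntidiagonal.mem_antidiagonal] at hx ⊢
    exact ⟨by omega, trivial, trivial⟩
  · rintro ⟨⟨p1, p2⟩, ⟨⟨a, b⟩, ⟨c, d⟩⟩⟩ hx
    simp only [Finset.mem_sigma, Finset.mem_product, Finset.HasAntidiagonal.mem_antidiagonal] at hx ⊢
    exact ⟨by omega, trivial, trivial⟩
  · rintro ⟨⟨p1, p2⟩, ⟨⟨a, b⟩, ⟨c, d⟩⟩⟩ hx
    simp only [Finset.mem_sigma, Finset.mem_product, Finset.HasAntidiagonal.mem_antidiagonal] at hx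
    obtain ⟨-, h2, h3⟩ := hx
    subst h2; subst h3; rfl
  · rintro ⟨⟨p1, p2⟩, ⟨⟨a, b⟩, ⟨c, d⟩⟩⟩ hx
    simp only [Finset.mem_sigma, Finset.mem_product, Finset.HasAntidiagonal.mem_antidiagonal] at hx
    obtain ⟨-, h2, h3⟩ := hx
    subst h2; subst h3; rfl
  · rintro ⟨⟨p1, p2⟩, ⟨⟨a, b⟩, ⟨c, d⟩⟩⟩ _
    rfl

/-- Any neighborhood of `0` in a ring with linear topology contains an open subgroup. -/
lemma exists_open_addSubgroup_subset {B : Type*} [CommRing B] [TopologicalSpace B]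
    (hB : HasLinearRingTopology B) {s : Set B} (hs : s ∈ nhds (0 : B)) :
    ∃ U : AddSubgroup B, IsOpen (U : Set B) ∧ (U : Set B) ⊆ s := by
  obtain ⟨a, -, -, hopen, hfund⟩ := hB
  obtain ⟨m, hm⟩ := hfund s hs
  exact ⟨(a m).toAddSubgroup, by simpa using hopen m, by simpa using hm⟩

/-- if `(eᵢ)` and `(e'ⱼ)` are commuting restricted exponential systems on `B`
over `A`, then `(e''ₙ)` with `e''ₙ = ∑_{i+j=n} e'ⱼ ∘ eᵢ` is again a restricted exponential
system. -/
theorem sum_restrictedExpSystem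
    (A B : Type*) [CommRing A] [UniformSpace A] [IsUniformAddGroup A] [IsTopologicalRing A]
    [CompleteSpace A] [T2Space A]
    [CommRing B] [Algebra A B] [UniformSpace B] [IsUniformAddGroup B] [IsTopologicalRing B]
    [CompleteSpace B] [T2Space B]
    (hA : HasLinearRingTopology A) (hB : HasLinearRingTopology B)
    (halg : Continuous (algebraMap A B))
    (e e' : ℕ → B → B)
    (he : IsRestrictedExpSystem A B e) (he' : IsRestrictedExpSystem A B e')
    (hcomm : ∀ (i j : ℕ) (b : B), e i (e' j b) = e' j (e i b)) :
    IsRestrictedExpSystem A B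
      (fun n b => ∑ p ∈ Finset.HasAntidiagonal.antidiagonal n, e' p.2 (e p.1 b)) := by
  -- additive homs
  have hesum : ∀ (i : ℕ) (s : Finset (ℕ × ℕ)) (F : ℕ × ℕ → B),
      e i (∑ q ∈ s, F q) = ∑ q ∈ s, e i (F q) := fun i s F =>
    map_sum (AddMonoidHom.mk' (e i) (he.map_add i)) F s
  have he'sum : ∀ (j : ℕ) (s : Finset (ℕ × ℕ)) (F : ℕ × ℕ → B),
      e' j (∑ q ∈ s, F q) = ∑ q ∈ s, e' j (F q) := fun j s F =>
    map_sum (AddMonoidHom.mk' (e' j) (he'.map_add j)) F s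
  have he'nsmul : ∀ (j k : ℕ) (b : B), e' j (k • b) = k • e' j b := fun j k b =>
    map_nsmul (AddMonoidHom.mk' (e' j) (he'.map_add j)) k b
  have hez : ∀ i, e i (0 : B) = 0 := fun i => by
    have h := he.map_add i 0 0
    rw [add_zero] at h
    exact (left_eq_add.mp h)
  have he'z : ∀ j, e' j (0 : B) = 0 := fun j => by
    have h := he'.map_add j 0 0
    rw [add_zero] at h
    exact (left_eq_add.mp h)
  -- equicontinuity at 0 of (e' j)
  have equicont : ∀ H' : AddSubgroup B, IsOpen (H' : Set B) →
      ∃ U : AddSubgroup B, IsOpen (U : Set B) ∧ ∀ j, ∀ x ∈ U, e' j x ∈ H' := by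
    intro H' hH'
    obtain ⟨H, hHo, n₀, hH⟩ := he'.conv_zero 0 H' hH'
    have hsnhds : (⋂ j ∈ Finset.range n₀, (e' j) ⁻¹' (H' : Set B)) ∈ nhds (0 : B) := by
      refine (Filter.biInter_finset_mem _).mpr fun j _ => ?_
      refine (hH'.preimage (he'.continuous j)).mem_nhds ?_
      simp [he'z j, H'.zero_mem]
    obtain ⟨W, hWo, hWsub⟩ := exists_open_addSubgroup_subset hB hsnhds
    refine ⟨W ⊓ H, by rw [AddSubgroup.coe_inf]; exact hWo.inter hHo, ?_⟩
    intro j x hx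
    rw [AddSubgroup.mem_inf] at hx
    rcases le_or_gt n₀ j with hj | hj
    · have := hH x hx.2 j hj
      simpa using this
    · have hmem := hWsub hx.1
      simp only [Set.mem_iInter, Set.mem_preimage] at hmem
      exact hmem j (Finset.mem_range.mpr hj)
  constructor
  · -- map_add
    intro i b b'
    simp only [he.map_add, he'.map_add, Finset.sum_add_distrib]
  · -- map_smul
    intro i a b
    simp only [he.map_smul, he'.map_smul, Finset.smul_sum]
  · -- continuous
    intro i
    exact continuous_finset_sum _ fun p _ => (he'.continuous p.2).comp (he.continuous p.1)
  · -- zeroth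
    intro b
    simp [Finset.Nat.antidiagonal_zero, he.zeroth, he'.zeroth]
  · -- leibniz
    intro n b b'
    calc ∑ p ∈ Finset.HasAntidiagonal.antidiagonal n, e' p.2 (e p.1 (b * b'))
        = ∑ p ∈ Finset.HasAntidiagonal.antidiagonal n, ∑ q ∈ Finset.HasAntidiagonal.antidiagonal p.1,
            ∑ r ∈ Finset.HasAntidiagonal.antidiagonal p.2, e' r.1 (e q.1 b) * e' r.2 (e q.2 b') := by
          refine Finset.sum_congr rfl fun p _ => ?_
          rw [he.leibniz, he'sum]
          exact Finset.sum_congr rfl fun q _ => he'.leibniz p.2 _ _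
      _ = ∑ p ∈ Finset.HasAntidiagonal.antidiagonal n, ∑ q ∈ Finset.HasAntidiagonal.antidiagonal p.1,
            ∑ r ∈ Finset.HasAntidiagonal.antidiagonal p.2, e' q.2 (e q.1 b) * e' r.2 (e r.1 b') :=
          antidiagonal_shuffle n (fun a₁ a₂ a₃ a₄ => e' a₃ (e a₁ b) * e' a₄ (e a₂ b'))
      _ = ∑ p ∈ Finset.HasAntidiagonal.antidiagonal n, (∑ q ∈ Finset.HasAntidiagonal.antidiagonal p.1, e' q.2 (e q.1 b)) *
            (∑ r ∈ Finset.HasAntidiagonal.antidiagonal p.2, e' r.2 (e r.1 b')) := by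
          exact Finset.sum_congr rfl fun p _ => (Finset.sum_mul_sum _ _ _ _).symm
  · -- comp
    intro i j b
    have key : ∀ p : ℕ × ℕ, p ∈ Finset.HasAntidiagonal.antidiagonal j →
        e' p.2 (e p.1 (∑ q ∈ Finset.HasAntidiagonal.antidiagonal i, e' q.2 (e q.1 b)))
        = ∑ q ∈ Finset.HasAntidiagonal.antidiagonal i,
            ((q.1 + p.1).choose q.1 * (q.2 + p.2).choose q.2) •
              e' (q.2 + p.2) (e (q.1 + p.1) b) := by
      intro p _
      rw [hesum, he'sum]
      refine Finset.sum_congr rfl fun q _ => ?_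
      rw [hcomm, he.comp q.1 p.1, he'nsmul, he'nsmul, he'.comp q.2 p.2, smul_smul]
    rw [Finset.sum_congr rfl key, Finset.smul_sum]
    have rhs1 : ∀ p : ℕ × ℕ, p ∈ Finset.HasAntidiagonal.antidiagonal (i + j) →
        (i + j).choose i • e' p.2 (e p.1 b)
        = ∑ q ∈ Finset.HasAntidiagonal.antidiagonal i,
            (p.1.choose q.1 * p.2.choose q.2) • e' p.2 (e p.1 b) := by
      intro p hp
      rw [Finset.HasAntidiagonal.mem_antidiagonal] at hp
      rw [← Finset.sum_smul]
      congr 1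
      rw [← hp, Nat.add_choose_eq]
    rw [Finset.sum_congr rfl rhs1]
    -- flatten both sides to products
    rw [← Finset.sum_product' (s := Finset.HasAntidiagonal.antidiagonal j) (t := Finset.HasAntidiagonal.antidiagonal i)
      (f := fun p q => ((q.1 + p.1).choose q.1 * (q.2 + p.2).choose q.2) •
          e' (q.2 + p.2) (e (q.1 + p.1) b)),
      ← Finset.sum_product' (s := Finset.HasAntidiagonal.antidiagonal (i + j)) (t := Finset.HasAntidiagonal.antidiagonal i)
      (f := fun p q => (p.1.choose q.1 * p.2.choose q.2) • e' p.2 (e p.1 b))]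
    classical
    rw [← Finset.sum_filter_of_ne (s := Finset.HasAntidiagonal.antidiagonal (i + j) ×ˢ Finset.HasAntidiagonal.antidiagonal i)
      (p := fun z => z.2.1 ≤ z.1.1 ∧ z.2.2 ≤ z.1.2)
      (f := fun z => (z.1.1.choose z.2.1 * z.1.2.choose z.2.2) • e' z.1.2 (e z.1.1 b)) ?_]
    · refine Finset.sum_nbij' (fun z => ((z.2.1 + z.1.1, z.2.2 + z.1.2), z.2))
        (fun z => ((z.1.1 - z.2.1, z.1.2 - z.2.2), z.2)) ?_ ?_ ?_ ?_ ?_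
      · rintro ⟨⟨a, c⟩, ⟨α, γ⟩⟩ hz
        simp only [Finset.mem_product, Finset.HasAntidiagonal.mem_antidiagonal, Finset.mem_filter] at hz ⊢
        omega
      · rintro ⟨⟨p, q⟩, ⟨α, γ⟩⟩ hz
        simp only [Finset.mem_product, Finset.HasAntidiagonal.mem_antidiagonal, Finset.mem_filter] at hz ⊢
        omega
      · rintro ⟨⟨a, c⟩, ⟨α, γ⟩⟩ hz
        simp only [Finset.mem_product, Finset.HasAntidiagonal.mem_antidiagonal] at hz
        dsimp only
        have h1 : α + a - α = a := by omega
        have h2 : γ + c - γ = c := by omega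
        rw [h1, h2]
      · rintro ⟨⟨p, q⟩, ⟨α, γ⟩⟩ hz
        simp only [Finset.mem_product, Finset.HasAntidiagonal.mem_antidiagonal, Finset.mem_filter] at hz
        dsimp only
        have h1 : α + (p - α) = p := by omega
        have h2 : γ + (q - γ) = q := by omega
        rw [h1, h2]
      · rintro ⟨⟨a, c⟩, ⟨α, γ⟩⟩ _
        rfl
    · rintro ⟨⟨p, q⟩, ⟨α, γ⟩⟩ hz hne
      simp only [Finset.mem_product, Finset.HasAntidiagonal.mem_antidiagonal] at hz
      by_contra hcon
      push_neg at hcon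
      apply hne
      show (p.choose α * q.choose γ) • e' q (e p b) = 0
      rcases le_or_gt α p with h1 | h1
      · rw [Nat.choose_eq_zero_of_lt (hcon h1), mul_zero, zero_smul]
      · rw [Nat.choose_eq_zero_of_lt h1, zero_mul, zero_smul]
  · -- conv_zero
    intro g H' hH'
    obtain ⟨U, hUo, hU⟩ := equicont H' hH'
    obtain ⟨H₁, hH₁o, N₁, h₁⟩ := he.conv_zero g U hUo
    have hK : ∀ i : ℕ, ∃ K : AddSubgroup B, IsOpen (K : Set B) ∧ ∃ N : ℕ,
        ∀ y ∈ K, ∀ n, N ≤ n → e' n (e i g + y) ∈ H' := by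
      intro i
      obtain ⟨K, hKo, N, hN⟩ := he'.conv_zero (e i g) H' hH'
      exact ⟨K, hKo, N, fun y hy n hn => by simpa using hN y hy n hn⟩
    choose K hKo N' hKspec using hK
    have hW : ∀ i : ℕ, ∃ W : AddSubgroup B, IsOpen (W : Set B) ∧ ∀ x ∈ W, e i x ∈ K i := by
      intro i
      have hs : (e i) ⁻¹' (K i : Set B) ∈ nhds (0 : B) := by
        refine ((hKo i).preimage (he.continuous i)).mem_nhds ?_
        simp [hez i, (K i).zero_mem]
      obtain ⟨W, hWo, hWs⟩ := exists_open_addSubgroup_subset hB hs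
      exact ⟨W, hWo, fun x hx => hWs hx⟩
    choose W hWo hWspec using hW
    have hinfopen : ∀ s : Finset ℕ, IsOpen ((s.inf W : AddSubgroup B) : Set B) := by
      intro s
      induction s using Finset.cons_induction with
      | empty => simp
      | cons a s ha ih =>
        rw [Finset.inf_cons, AddSubgroup.coe_inf]
        exact (hWo a).inter ih
    refine ⟨H₁ ⊓ (Finset.range N₁).inf W, ?_, N₁ + (Finset.range N₁).sup N', ?_⟩
    · rw [AddSubgroup.coe_inf]
      exact hH₁o.inter (hinfopen _)
    · intro x hx n hn
      rw [AddSubgroup.mem_inf] at hx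
      simp only [sub_zero]
      refine AddSubgroup.sum_mem H' fun p hp => ?_
      rw [Finset.HasAntidiagonal.mem_antidiagonal] at hp
      rcases le_or_gt N₁ p.1 with h1 | h1
      · -- p.1 large: e p.1 (g + x) ∈ U, then e' p.2 of it in H'
        have := h₁ x hx.1 p.1 h1
        rw [sub_zero] at this
        exact hU p.2 _ this
      · -- p.1 small: p.2 large
        have hxW : x ∈ W p.1 := by
          have hle := Finset.inf_le (f := W) (Finset.mem_range.mpr h1)
          exact hle hx.2
        have hsup : N' p.1 ≤ (Finset.range N₁).sup N' :=
          Finset.le_sup (Finset.mem_range.mpr h1)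
        have hp2 : N' p.1 ≤ p.2 := by omega
        have := hKspec p.1 (e p.1 x) (hWspec p.1 x hxW) p.2 hp2
        rwa [← he.map_add] at this
end

section
/- Let A be a complete topological ring and let (B_n)_{n∈ℕ} be an inverse system of complete topological A-algebras with surjective continuous transition homomorphisms p_{m,n} : B_m → B_n for all m ≥ n ≥ 0. Let B = lim_n B_n be the limit, endowed with the inverse limit topology, with canonical projections p_n : B → B_n. For each n ∈ ℕ let (e_{n,i})_{i∈ℕ} be a restricted exponential system on B_n over A such that e_{n,i} ∘ p_{m,n} = p_{m,n} ∘ e_{m,i} for all m ≥ n and all i ∈ ℕ. Then B is a complete topological A-algebra and there exists a unique restricted exponential system (e_i)_{i∈ℕ} on B over A satisfying p_n ∘ e_i = e_{n,i} ∘ p_n for all n, i ∈ ℕ. -/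
set_option maxHeartbeats 1000000
set_option synthInstance.maxHeartbeats 400000


open Filter Topology

/-- The inverse limit of an inverse system of `A`-algebras, as a subalgebra of the
product. -/
def invLimitSubalgebra (A : Type*) [CommRing A] (B : ℕ → Type*)
    [∀ n, CommRing (B n)] [∀ n, Algebra A (B n)]
    (p : ∀ m n : ℕ, n ≤ m → (B m →ₐ[A] B n)) : Subalgebra A (∀ n, B n) where
  carrier := {f | ∀ (m n : ℕ) (h : n ≤ m), p m n h (f m) = f n}
  mul_mem' := by
    intro f g hf hg m n h
    simp only [Pi.mul_apply, map_mul, hf m n h, hg m n h]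
  one_mem' := by intro m n h; simp
  add_mem' := by
    intro f g hf hg m n h
    simp only [Pi.add_apply, map_add, hf m n h, hg m n h]
  zero_mem' := by intro m n h; simp
  algebraMap_mem' := by
    intro a m n h
    simp [Pi.algebraMap_apply]


section Aux

/-- Construct a compatible family through a surjective inverse system hitting a
prescribed value at one index. -/
theorem invLimit_exists_compatible {B : ℕ → Type*}
    (q : ∀ m n : ℕ, n ≤ m → B m → B n)
    (hid : ∀ (n : ℕ) (b : B n), q n n le_rfl b = b)
    (hcomp : ∀ (k m n : ℕ) (hmk : m ≤ k) (hnm : n ≤ m) (b : B k),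
      q m n hnm (q k m hmk b) = q k n (le_trans hnm hmk) b)
    (hsurj : ∀ (m n : ℕ) (h : n ≤ m), Function.Surjective (q m n h))
    (n : ℕ) (b : B n) :
    ∃ f : ∀ k, B k, (∀ (m k : ℕ) (h : k ≤ m), q m k h (f m) = f k) ∧ f n = b := by
  classical
  let g : ∀ m, B m := fun m => Nat.rec (q n 0 (Nat.zero_le n) b)
    (fun m gm => if h : m + 1 ≤ n then q n (m+1) h b
      else Classical.choose (hsurj (m+1) m (Nat.le_succ m) gm)) m
  have hglow : ∀ (m : ℕ) (h : m ≤ n), g m = q n m h b := by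
    intro m h
    cases m with
    | zero => rfl
    | succ m =>
      show (if h : m + 1 ≤ n then q n (m+1) h b
        else Classical.choose (hsurj (m+1) m (Nat.le_succ m) (g m))) = _
      rw [dif_pos h]
  have hgsucc : ∀ m : ℕ, q (m+1) m (Nat.le_succ m) (g (m+1)) = g m := by
    intro m
    by_cases h : m + 1 ≤ n
    · rw [hglow (m+1) h, hcomp n (m+1) m h (Nat.le_succ m) b,
        hglow m (le_trans (Nat.le_succ m) h)]
    · have : g (m+1) = Classical.choose (hsurj (m+1) m (Nat.le_succ m) (g m)) := by
        show (if h : m + 1 ≤ n then q n (m+1) h b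
          else Classical.choose (hsurj (m+1) m (Nat.le_succ m) (g m))) = _
        rw [dif_neg h]
      rw [this]
      exact Classical.choose_spec (hsurj (m+1) m (Nat.le_succ m) (g m))
  have hall : ∀ (m k : ℕ) (h : k ≤ m), q m k h (g m) = g k := by
    intro m
    induction m with
    | zero =>
      intro k h
      have hk : k = 0 := Nat.le_zero.mp h
      subst hk
      exact hid 0 (g 0)
    | succ m ih =>
      intro k h
      by_cases hk : k = m + 1
      · subst hk; exact hid _ _
      · have hk' : k ≤ m := by omega
        calc q (m+1) k h (g (m+1))
            = q m k hk' (q (m+1) m (Nat.le_succ m) (g (m+1))) :=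
              (hcomp (m+1) m k (Nat.le_succ m) hk' (g (m+1))).symm
          _ = q m k hk' (g m) := by rw [hgsucc m]
          _ = g k := ih k hk'
  refine ⟨g, hall, ?_⟩
  rw [hglow n le_rfl, hid n b]

/-- The ideal of an inverse-limit subalgebra cut out by coordinatewise ideals. -/
def coordIdeal {A : Type*} [CommRing A] {B : ℕ → Type*}
    [∀ n, CommRing (B n)] [∀ n, Algebra A (B n)]
    (S : Subalgebra A (∀ n, B n)) (a : ∀ n, Ideal (B n)) : Ideal S where
  carrier := {f | ∀ n, (f : ∀ m, B m) n ∈ a n}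
  add_mem' := by
    intro f g hf hg n
    simp only [Set.mem_setOf_eq, Subalgebra.coe_add, Pi.add_apply] at *
    exact add_mem (hf n) (hg n)
  zero_mem' := by
    intro n
    simp only [Set.mem_setOf_eq, ZeroMemClass.coe_zero, Pi.zero_apply]
    exact zero_mem _
  smul_mem' := by
    intro c f hf n
    simp only [Set.mem_setOf_eq, smul_eq_mul, Subalgebra.coe_mul, Pi.mul_apply] at *
    exact Ideal.mul_mem_left _ _ (hf n)

theorem mem_coordIdeal {A : Type*} [CommRing A] {B : ℕ → Type*}
    [∀ n, CommRing (B n)] [∀ n, Algebra A (B n)]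
    {S : Subalgebra A (∀ n, B n)} {a : ∀ n, Ideal (B n)} {f : S} :
    f ∈ coordIdeal S a ↔ ∀ n, (f : ∀ m, B m) n ∈ a n := Iff.rfl

theorem coordIdeal_isOpen {A : Type*} [CommRing A] {B : ℕ → Type*}
    [∀ n, CommRing (B n)] [∀ n, Algebra A (B n)] [∀ n, TopologicalSpace (B n)]
    (S : Subalgebra A (∀ n, B n)) (a : ∀ n, Ideal (B n))
    (hopen : ∀ n, IsOpen (a n : Set (B n))) (N : ℕ)
    (htop : ∀ n, N ≤ n → a n = ⊤) :
    IsOpen ((coordIdeal S a : Ideal S) : Set S) := by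
  have hset : ((coordIdeal S a : Ideal S) : Set S)
      = ⋂ n : Fin N, (fun f : S => (f : ∀ m, B m) (n : ℕ)) ⁻¹' (a (n : ℕ) : Set (B (n : ℕ))) := by
    ext f
    simp only [Set.mem_iInter, Set.mem_preimage, SetLike.mem_coe, mem_coordIdeal]
    constructor
    · intro h n; exact h (n : ℕ)
    · intro h n
      by_cases hn : n < N
      · exact h ⟨n, hn⟩
      · rw [htop n (le_of_not_gt hn)]; trivial
  rw [hset]
  exact isOpen_iInter_of_finite fun n =>
    (hopen (n : ℕ)).preimage ((continuous_apply (n : ℕ)).comp continuous_subtype_val)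

end Aux

/-- the inverse limit `B = lim_n B_n` of an inverse system of complete
topological `A`-algebras with surjective continuous transition maps, endowed with the
inverse limit topology, is a complete topological `A`-algebra (Hausdorff, complete, with a
linear topology and continuous structural morphism, the projections being continuous and
surjective), and a compatible system of restricted exponential systems on the `B_n` lifts
to a unique restricted exponential system on `B`. -/
theorem restrictedExpSystem_invLimit
    (A : Type*) [CommRing A] [UniformSpace A] [IsUniformAddGroup A] [IsTopologicalRing A]
    [CompleteSpace A] [T2Space A] (hA : HasLinearRingTopology A)
    (B : ℕ → Type*) [∀ n, CommRing (B n)] [∀ n, Algebra A (B n)]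
    [∀ n, UniformSpace (B n)] [∀ n, IsUniformAddGroup (B n)] [∀ n, IsTopologicalRing (B n)]
    [∀ n, CompleteSpace (B n)] [∀ n, T2Space (B n)]
    (hB : ∀ n, HasLinearRingTopology (B n))
    (halg : ∀ n, Continuous (algebraMap A (B n)))
    (p : ∀ m n : ℕ, n ≤ m → (B m →ₐ[A] B n))
    (hp_id : ∀ (n : ℕ) (b : B n), p n n le_rfl b = b)
    (hp_comp : ∀ (k m n : ℕ) (hmk : m ≤ k) (hnm : n ≤ m) (b : B k),
      p m n hnm (p k m hmk b) = p k n (le_trans hnm hmk) b)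
    (hp_surj : ∀ (m n : ℕ) (h : n ≤ m), Function.Surjective (p m n h))
    (hp_cont : ∀ (m n : ℕ) (h : n ≤ m), Continuous (p m n h))
    (E : ∀ n : ℕ, ℕ → B n → B n)
    (hE : ∀ n, IsRestrictedExpSystem A (B n) (E n))
    (hEcompat : ∀ (m n : ℕ) (h : n ≤ m) (i : ℕ) (b : B m),
      E n i (p m n h b) = p m n h (E m i b)) :
    CompleteSpace (invLimitSubalgebra A B p) ∧
      T2Space (invLimitSubalgebra A B p) ∧
      IsUniformAddGroup (invLimitSubalgebra A B p) ∧
      IsTopologicalRing (invLimitSubalgebra A B p) ∧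
      HasLinearRingTopology (invLimitSubalgebra A B p) ∧
      Continuous (algebraMap A (invLimitSubalgebra A B p)) ∧
      (∀ n : ℕ, Continuous (fun f : invLimitSubalgebra A B p => (f : ∀ k, B k) n) ∧
        Function.Surjective (fun f : invLimitSubalgebra A B p => (f : ∀ k, B k) n)) ∧
      (∃! e : ℕ → invLimitSubalgebra A B p → invLimitSubalgebra A B p,
        IsRestrictedExpSystem A (invLimitSubalgebra A B p) e ∧
          ∀ (n i : ℕ) (b : invLimitSubalgebra A B p),
            ((e i b : ∀ k, B k) n) = E n i ((b : ∀ k, B k) n)) := by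
  classical
  set L := invLimitSubalgebra A B p with hLdef
  haveI : ∀ n, IsTopologicalAddGroup (B n) := fun n => inferInstance
  -- membership in L
  have hmem : ∀ f : L, ∀ (m n : ℕ) (h : n ≤ m), p m n h ((f : ∀ k, B k) m) = (f : ∀ k, B k) n :=
    fun f => f.2
  have hmk : ∀ (f : ∀ k, B k), (∀ (m n : ℕ) (h : n ≤ m), p m n h (f m) = f n) → f ∈ L :=
    fun f hf => hf
  -- 1. Complete
  have hclosed : IsClosed (L : Set (∀ n, B n)) := by
    have : (L : Set (∀ n, B n)) =
        ⋂ (m : ℕ) (n : ℕ) (h : n ≤ m), {f : ∀ k, B k | p m n h (f m) = f n} := by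
      ext f
      simp only [SetLike.mem_coe, Set.mem_iInter, Set.mem_setOf_eq]
      exact Iff.rfl
    rw [this]
    exact isClosed_iInter fun m => isClosed_iInter fun n => isClosed_iInter fun h =>
      isClosed_eq ((hp_cont m n h).comp (continuous_apply m)) (continuous_apply n)
  haveI hcompl : CompleteSpace L := hclosed.completeSpace_coe
  haveI huag : IsUniformAddGroup L := .comap (AddSubmonoidClass.subtype L)
  haveI htr : IsTopologicalRing L := IsTopologicalSemiring.toIsTopologicalRing inferInstance
  refine ⟨hcompl, inferInstance, huag, htr, ?_, ?_, ?_, ?_⟩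
  -- 5. linear ring topology
  · choose a ha0 hadec haopen hafund using hB
    refine ⟨fun k => coordIdeal L (fun n => if n < k then a n k else ⊤), ?_, ?_, ?_, ?_⟩
    · ext f
      simp [mem_coordIdeal]
    · intro m k hkm
      rw [SetLike.le_def]
      intro f hf
      rw [mem_coordIdeal] at hf ⊢
      intro n
      by_cases hn : n < k
      · have hn' : n < m := lt_of_lt_of_le hn hkm
        have := hf n
        rw [if_pos hn'] at this
        rw [if_pos hn]
        exact hadec n m k hkm this
      · rw [if_neg hn]; trivial
    · intro k
      refine coordIdeal_isOpen L _ (fun n => ?_) k (fun n hn => ?_)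
      · by_cases hn : n < k
        · rw [if_pos hn]; exact haopen n k
        · rw [if_neg hn]; simp
      · rw [if_neg (not_lt.mpr hn)]
    · intro s hs
      rw [nhds_induced, Filter.mem_comap] at hs
      obtain ⟨t, ht, hts⟩ := hs
      have h0 : ((0 : L) : ∀ n, B n) = 0 := rfl
      rw [h0, nhds_pi, Filter.mem_pi] at ht
      obtain ⟨I, hIfin, u, hu, hsub⟩ := ht
      obtain ⟨N, hN⟩ : ∃ N : ℕ, ∀ i ∈ I, i < N := by
        obtain ⟨M, hM⟩ := hIfin.bddAbove
        exact ⟨M + 1, fun i hi => Nat.lt_succ_of_le (hM hi)⟩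
      choose kf hkf using fun i => hafund i (u i) (by simpa using hu i)
      refine ⟨N + Finset.sup (Finset.range N) kf, fun f hf => ?_⟩
      apply hts
      show (f : ∀ n, B n) ∈ t
      apply hsub
      intro i hi
      have hiN : i < N := hN i hi
      have hik : i < N + Finset.sup (Finset.range N) kf := lt_of_lt_of_le hiN (Nat.le_add_right _ _)
      have := (mem_coordIdeal.mp hf) i
      rw [if_pos hik] at this
      have hle : kf i ≤ N + Finset.sup (Finset.range N) kf :=
        le_trans (Finset.le_sup (Finset.mem_range.mpr hiN)) (Nat.le_add_left _ _)
      exact hkf i (hadec i _ _ hle this)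
  -- 6. algebraMap continuous
  · rw [continuous_induced_rng]
    have : (Subtype.val ∘ algebraMap A L) = fun x => (fun n => algebraMap A (B n) x) := rfl
    rw [this]
    exact continuous_pi fun n => halg n
  -- 7. projections
  · intro n
    refine ⟨(continuous_apply n).comp continuous_subtype_val, ?_⟩
    intro b
    obtain ⟨f, hf, hfn⟩ := invLimit_exists_compatible (fun m n h => p m n h)
      hp_id hp_comp hp_surj n b
    exact ⟨⟨f, hmk f hf⟩, hfn⟩
  -- 8. exponential system
  · have hliftmem : ∀ (i : ℕ) (f : L), (fun n => E n i ((f : ∀ k, B k) n)) ∈ L := by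
      intro i f
      apply hmk
      intro m n h
      show p m n h (E m i ((f : ∀ k, B k) m)) = E n i ((f : ∀ k, B k) n)
      rw [← hmem f m n h, hEcompat m n h i]
    refine ⟨fun i f => ⟨fun n => E n i ((f : ∀ k, B k) n), hliftmem i f⟩, ⟨?_, fun n i b => rfl⟩, ?_⟩
    · constructor
      · intro i b b'
        ext n
        show E n i (((b + b' : L) : ∀ k, B k) n) = _
        have : ((b + b' : L) : ∀ k, B k) n = (b : ∀ k, B k) n + (b' : ∀ k, B k) n := rfl
        rw [this]
        exact (hE n).map_add i _ _
      · intro i c b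
        ext n
        show E n i (((c • b : L) : ∀ k, B k) n) = _
        have : ((c • b : L) : ∀ k, B k) n = c • (b : ∀ k, B k) n := rfl
        rw [this]
        exact (hE n).map_smul i c _
      · intro i
        exact Continuous.subtype_mk (continuous_pi fun n =>
          ((hE n).continuous i).comp ((continuous_apply n).comp continuous_subtype_val)) _
      · intro b
        ext n
        exact (hE n).zeroth _
      · intro k b b'
        ext n
        show E n k (((b * b' : L) : ∀ j, B j) n) = _
        have h1 : ((b * b' : L) : ∀ j, B j) n = (b : ∀ j, B j) n * (b' : ∀ j, B j) n := rfl
        have h2 : ((∑ q ∈ Finset.HasAntidiagonal.antidiagonal k,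
            (⟨fun m => E m q.1 ((b : ∀ j, B j) m), hliftmem q.1 b⟩ : L) *
            (⟨fun m => E m q.2 ((b' : ∀ j, B j) m), hliftmem q.2 b'⟩ : L) : L) : ∀ j, B j) n
            = ∑ q ∈ Finset.HasAntidiagonal.antidiagonal k,
              E n q.1 ((b : ∀ j, B j) n) * E n q.2 ((b' : ∀ j, B j) n) := by
          rw [AddSubmonoidClass.coe_finset_sum, Finset.sum_apply]
          rfl
        rw [h1, h2]
        exact (hE n).leibniz k _ _
      · intro i j b
        ext n
        show E n j (E n i ((b : ∀ k, B k) n)) = _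
        have h2 : (((i + j).choose i •
            (⟨fun m => E m (i+j) ((b : ∀ k, B k) m), hliftmem (i+j) b⟩ : L) : L) : ∀ k, B k) n
            = (i + j).choose i • E n (i+j) ((b : ∀ k, B k) n) := by
          rw [AddSubmonoidClass.coe_nsmul, Pi.smul_apply]
        rw [h2]
        exact (hE n).comp i j _
      · -- continuous convergence to zero
        intro g H' hH'
        have h0H : (0 : L) ∈ H' := zero_mem H'
        have hnhds : (H' : Set L) ∈ nhds (0 : L) := hH'.mem_nhds h0H
        rw [nhds_induced, Filter.mem_comap] at hnhds
        obtain ⟨t, ht, hts⟩ := hnhds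
        have h0 : ((0 : L) : ∀ n, B n) = 0 := rfl
        rw [h0, nhds_pi, Filter.mem_pi] at ht
        obtain ⟨I, hIfin, u, hu, hsub⟩ := ht
        obtain ⟨N, hN⟩ : ∃ N : ℕ, ∀ i ∈ I, i < N := by
          obtain ⟨M, hM⟩ := hIfin.bddAbove
          exact ⟨M + 1, fun i hi => Nat.lt_succ_of_le (hM hi)⟩
        choose a ha0 hadec haopen hafund using hB
        choose kf hkf using fun i => hafund i (u i) (by simpa using hu i)
        -- apply continuous convergence of each coordinate system
        have hconv := fun n : ℕ => (hE n).conv_zero ((g : ∀ k, B k) n)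
          ((a n (kf n)).toAddSubgroup) (haopen n (kf n))
        choose Hc hHcopen n0 hHc using hconv
        -- coordinate projections as additive homs
        let π : ∀ n : ℕ, L →+ B n := fun n =>
          AddMonoidHom.mk' (fun f => (f : ∀ k, B k) n) (fun _ _ => rfl)
        refine ⟨⨅ n : Fin N, AddSubgroup.comap (π (n : ℕ)) (Hc (n : ℕ)), ?_, ?_⟩
        · rw [AddSubgroup.coe_iInf]
          exact isOpen_iInter_of_finite fun n =>
            (hHcopen (n : ℕ)).preimage ((continuous_apply ((n : ℕ))).comp continuous_subtype_val)
        · refine ⟨Finset.sup (Finset.range N) n0, fun x hx j hj => ?_⟩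
          rw [AddSubgroup.mem_iInf] at hx
          have key : ∀ i ∈ I, ((fun n => E n j (((g + x : L) : ∀ k, B k) n)) : ∀ k, B k) i ∈ u i := by
            intro i hi
            have hiN : i < N := hN i hi
            have hxi : (x : ∀ k, B k) i ∈ Hc i := hx ⟨i, hiN⟩
            have hj' : n0 i ≤ j :=
              le_trans (Finset.le_sup (Finset.mem_range.mpr hiN)) hj
            have := hHc i ((x : ∀ k, B k) i) hxi j hj'
            rw [sub_zero] at this
            show E i j (((g + x : L) : ∀ k, B k) i) ∈ u i
            have hcoord : ((g + x : L) : ∀ k, B k) i = (g : ∀ k, B k) i + (x : ∀ k, B k) i := rfl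
            rw [hcoord]
            exact hkf i this
          have hin : (⟨fun n => E n j (((g + x : L) : ∀ k, B k) n),
              hliftmem j (g + x)⟩ : L) ∈ H' := by
            apply hts
            show (fun n => E n j (((g + x : L) : ∀ k, B k) n)) ∈ t
            exact hsub key
          simpa [sub_zero] using hin
    · rintro e' ⟨_, hproj⟩
      funext i f
      ext n
      exact hproj n i f
end

section
/- Let A be a complete topological ring, B a complete topological A-algebra, and (e_i)_{i∈ℕ} a restricted exponential system on B over A. Then for every b ∈ B the families (e_i(b))_{i∈ℕ} and ((−1)^i e_i(b))_{i∈ℕ} are summable in B, and the maps φ, ψ : B → B defined by φ(b) = ∑_{i∈ℕ} e_i(b) and ψ(b) = ∑_{i∈ℕ} (−1)^i e_i(b) are continuous A-algebra automorphisms of B that are inverse to each other (φ ∘ ψ = ψ ∘ φ = id_B). -/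
open Filter Topology

section Helpers

set_option linter.unusedSectionVars false
set_option linter.unusedVariables false

variable {B : Type*} [CommRing B] [UniformSpace B] [IsUniformAddGroup B] [IsTopologicalRing B]
  [CompleteSpace B]

lemma RES.summable_of_finite_compl {ι : Type*} (a : ℕ → Ideal B)
    (hbasis : ∀ s ∈ nhds (0 : B), ∃ n, (a n : Set B) ⊆ s) (f : ι → B)
    (h : ∀ n, {i | f i ∉ a n}.Finite) : Summable f := by
  rw [summable_iff_vanishing]
  intro s hs
  obtain ⟨n, hn⟩ := hbasis s hs
  refine ⟨(h n).toFinset, fun t ht => hn ?_⟩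
  refine Submodule.sum_mem _ fun i hi => ?_
  by_contra hmem
  exact Finset.disjoint_left.mp ht hi ((h n).mem_toFinset.mpr hmem)

lemma RES.tsum_mem {ι : Type*} (I : Ideal B) (hI : IsClosed (I : Set B)) (f : ι → B)
    (hf : Summable f) (h : ∀ i, f i ∈ I) : (∑' i, f i) ∈ I :=
  hI.mem_of_tendsto hf.hasSum
    (Filter.Eventually.of_forall fun s => Submodule.sum_mem _ fun i _ => h i)

lemma RES.tsum_prod_eq [T2Space B] {f : ℕ × ℕ → B} (hf : Summable f) :
    ∑' p, f p = ∑' n, ∑ c ∈ Finset.HasAntidiagonal.antidiagonal n, f c := by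
  conv_rhs => congr; ext n; rw [← Finset.sum_finset_coe, ← tsum_fintype (L := .unconditional _)]
  rw [← Finset.HasAntidiagonal.sigmaAntidiagonalEquivProd.tsum_eq f]
  exact Summable.tsum_sigma' (fun n => (hasSum_fintype _).summable)
    (Finset.HasAntidiagonal.sigmaAntidiagonalEquivProd.summable_iff.mpr hf)

end Helpers

set_option maxHeartbeats 1600000 in
/-- for a restricted exponential system `(eᵢ)` on `B`, the families
`(eᵢ(b))` and `((-1)ⁱeᵢ(b))` are summable for every `b`, and the maps
`φ(b) = ∑ᵢ eᵢ(b)` and `ψ(b) = ∑ᵢ (-1)ⁱ eᵢ(b)` are mutually inverse continuous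
`A`-algebra automorphisms of `B`. -/
theorem evaluation_at_one_is_automorphism
    (A B : Type*) [CommRing A] [UniformSpace A] [IsUniformAddGroup A] [IsTopologicalRing A]
    [CompleteSpace A] [T2Space A]
    [CommRing B] [Algebra A B] [UniformSpace B] [IsUniformAddGroup B] [IsTopologicalRing B]
    [CompleteSpace B] [T2Space B]
    (hA : HasLinearRingTopology A) (hB : HasLinearRingTopology B)
    (halg : Continuous (algebraMap A B))
    (e : ℕ → B → B) (he : IsRestrictedExpSystem A B e) :
    (∀ b : B, Summable fun i => e i b) ∧
      (∀ b : B, Summable fun i => (-1 : B) ^ i * e i b) ∧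
      ∃ Φ : B ≃ₐ[A] B, Continuous Φ ∧ Continuous Φ.symm ∧
        (∀ b : B, Φ b = ∑' i, e i b) ∧
        (∀ b : B, Φ.symm b = ∑' i, (-1 : B) ^ i * e i b) := by
  classical
  obtain ⟨a, ha0, hmono, haopen, hbasis⟩ := hB
  have haclosed : ∀ n, IsClosed (a n : Set B) := fun n => by
    have := AddSubgroup.isClosed_of_isOpen (a n).toAddSubgroup
      (by rw [Submodule.coe_toAddSubgroup]; exact haopen n)
    rwa [Submodule.coe_toAddSubgroup] at this
  -- tail estimate coming from continuous convergence
  have htail : ∀ (b : B) (n : ℕ), ∃ H : AddSubgroup B, IsOpen (H : Set B) ∧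
      ∃ n₀ : ℕ, ∀ x ∈ H, ∀ m, n₀ ≤ m → e m (b + x) ∈ a n := by
    intro b n
    obtain ⟨H, hH, n₀, h⟩ := he.conv_zero b (a n).toAddSubgroup
      (by rw [Submodule.coe_toAddSubgroup]; exact haopen n)
    refine ⟨H, hH, n₀, fun x hx m hm => ?_⟩
    have := h x hx m hm
    simpa using this
  have hmem : ∀ (b : B) (n : ℕ), ∃ n₀ : ℕ, ∀ m, n₀ ≤ m → e m b ∈ a n := by
    intro b n
    obtain ⟨H, _, n₀, h⟩ := htail b n
    exact ⟨n₀, fun m hm => by simpa using h 0 H.zero_mem m hm⟩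
  -- summability of everything in sight
  have hsumgen : ∀ {ι : Type} (c : ι → ℤ) (m : ι → ℕ)
      (_ : ∀ n₀ : ℕ, {i : ι | m i < n₀}.Finite) (b : B),
      Summable fun i => c i • e (m i) b := by
    intro ι c m hm b
    refine RES.summable_of_finite_compl a hbasis _ fun n => ?_
    obtain ⟨n₀, h⟩ := hmem b n
    refine (hm n₀).subset fun i hi => ?_
    simp only [Set.mem_setOf_eq] at hi ⊢
    by_contra hlt
    exact hi (zsmul_mem (h _ (le_of_not_gt hlt)) _)
  have hfinid : ∀ n₀ : ℕ, {i : ℕ | i < n₀}.Finite := fun n₀ => Set.finite_Iio n₀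
  have hfinadd : ∀ n₀ : ℕ, {p : ℕ × ℕ | p.1 + p.2 < n₀}.Finite := by
    intro n₀
    refine ((Set.finite_Iio n₀).prod (Set.finite_Iio n₀)).subset fun p hp => ?_
    simp only [Set.mem_setOf_eq] at hp
    exact ⟨by simp only [Set.mem_Iio]; omega, by simp only [Set.mem_Iio]; omega⟩
  have hfinsh : ∀ j n₀ : ℕ, {i : ℕ | j + i < n₀}.Finite := by
    intro j n₀
    refine (Set.finite_Iio n₀).subset fun i hi => ?_
    simp only [Set.mem_setOf_eq] at hi
    simp only [Set.mem_Iio]; omega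
  have hsumz : ∀ (c : ℕ → ℤ) (b : B), Summable fun i => c i • e i b :=
    fun c b => hsumgen c id hfinid b
  have hsum1 : ∀ b : B, Summable fun i => e i b := fun b =>
    (hsumz 1 b).congr fun i => one_zsmul _
  have hsummul : ∀ b b' : B, Summable fun p : ℕ × ℕ => e p.1 b * e p.2 b' := by
    intro b b'
    refine RES.summable_of_finite_compl a hbasis _ fun n => ?_
    obtain ⟨n₀, h⟩ := hmem b n
    obtain ⟨n₁, h'⟩ := hmem b' n
    refine ((Set.finite_Iio n₀).prod (Set.finite_Iio n₁)).subset fun p hp => ?_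
    simp only [Set.mem_setOf_eq] at hp
    simp only [Set.mem_prod, Set.mem_Iio]
    by_contra hq
    push_neg at hq
    rcases le_or_gt n₀ p.1 with h1 | h1
    · exact hp (Ideal.mul_mem_right _ _ (h _ h1))
    · exact hp (Ideal.mul_mem_left _ _ (h' _ (hq h1)))
  have hneg : ∀ b : B, (fun i => (-1 : B) ^ i * e i b) = fun i => (-1 : ℤ) ^ i • e i b := by
    intro b; funext i; rw [zsmul_eq_mul]; push_cast; ring
  have hsum2 : ∀ b : B, Summable fun i => (-1 : B) ^ i * e i b := by
    intro b; rw [hneg b]; exact hsumz _ b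
  have hT' : ∀ b : B, (∑' i, (-1 : B) ^ i * e i b) = ∑' i, (-1 : ℤ) ^ i • e i b := by
    intro b; rw [hneg b]
  -- e j commutes with tsums
  have hej_tsum : ∀ (j : ℕ) (f : ℕ → B), Summable f →
      e j (∑' i, f i) = ∑' i, e j (f i) := fun j f hf =>
    (hf.hasSum.map (AddMonoidHom.mk' (e j) (he.map_add j)) (he.continuous j)).tsum_eq.symm
  have hsum_map : ∀ (j : ℕ) (f : ℕ → B), Summable f → Summable fun i => e j (f i) :=
    fun j f hf => hf.map (AddMonoidHom.mk' (e j) (he.map_add j)) (he.continuous j)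
  -- e n 1 = 0 for n ≠ 0
  have he_one : ∀ n : ℕ, n ≠ 0 → e n (1 : B) = 0 := by
    intro n
    induction n using Nat.strong_induction_on with
    | _ n ih =>
      intro hn
      have key : e n (1 : B) = ∑ p ∈ Finset.HasAntidiagonal.antidiagonal n, e p.1 1 * e p.2 1 := by
        rw [← he.leibniz, one_mul]
      rw [Finset.Nat.sum_antidiagonal_eq_sum_range_succ_mk, Finset.sum_range_succ] at key
      have hsum0 : ∑ k ∈ Finset.range n, e k (1 : B) * e (n - k) 1 = e n 1 := by
        rw [Finset.sum_eq_single_of_mem 0 (Finset.mem_range.mpr (Nat.pos_of_ne_zero hn))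
          (fun k hk hk0 => by rw [ih k (Finset.mem_range.mp hk) hk0, zero_mul])]
        rw [he.zeroth, Nat.sub_zero, one_mul]
      simp only at key
      rw [hsum0, Nat.sub_self, he.zeroth, mul_one] at key
      linear_combination -key
  -- the key inversion identity
  have inv_key : ∀ (c : ℕ × ℕ → ℤ) (b : B),
      (∀ n, (∑ p ∈ Finset.HasAntidiagonal.antidiagonal n, c p) = if n = 0 then 1 else 0) →
      ∑' p : ℕ × ℕ, c p • e (p.1 + p.2) b = b := by
    intro c b hc
    rw [RES.tsum_prod_eq (hsumgen c _ hfinadd b)]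
    have hterm : ∀ n, (∑ p ∈ Finset.HasAntidiagonal.antidiagonal n, c p • e (p.1 + p.2) b)
        = (if n = 0 then (1 : ℤ) else 0) • e n b := by
      intro n
      calc ∑ p ∈ Finset.HasAntidiagonal.antidiagonal n, c p • e (p.1 + p.2) b
          = ∑ p ∈ Finset.HasAntidiagonal.antidiagonal n, c p • e n b :=
            Finset.sum_congr rfl fun p hp => by rw [Finset.HasAntidiagonal.mem_antidiagonal.mp hp]
        _ = (∑ p ∈ Finset.HasAntidiagonal.antidiagonal n, c p) • e n b := (Finset.sum_smul).symm
        _ = (if n = 0 then (1 : ℤ) else 0) • e n b := by rw [hc n]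
    rw [tsum_congr hterm, tsum_eq_single 0 (fun n hn => by rw [if_neg hn, zero_smul])]
    simp [he.zeroth]
  -- the two coefficient identities
  have hc1 : ∀ n : ℕ, (∑ p ∈ Finset.HasAntidiagonal.antidiagonal n,
      ((-1 : ℤ) ^ p.1 * ((p.1 + p.2).choose p.2 : ℤ))) = if n = 0 then 1 else 0 := by
    intro n
    rw [Finset.Nat.sum_antidiagonal_eq_sum_range_succ_mk,
      ← Int.alternating_sum_range_choose (n := n)]
    refine Finset.sum_congr rfl fun k hk => ?_
    have hk' : k ≤ n := Nat.lt_succ_iff.mp (Finset.mem_range.mp hk)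
    simp only [Nat.add_sub_cancel' hk', Nat.choose_symm hk']
  have hc2 : ∀ n : ℕ, (∑ p ∈ Finset.HasAntidiagonal.antidiagonal n,
      ((-1 : ℤ) ^ p.2 * ((p.1 + p.2).choose p.2 : ℤ))) = if n = 0 then 1 else 0 := by
    intro n
    rw [Finset.Nat.sum_antidiagonal_eq_sum_range_succ_mk]
    calc ∑ k ∈ Finset.range (n + 1),
          ((-1 : ℤ) ^ (k, n - k).2 * (((k, n - k).1 + (k, n - k).2).choose (k, n - k).2 : ℤ))
        = ∑ k ∈ Finset.range (n + 1),
            (fun m => (-1 : ℤ) ^ m * (n.choose m : ℤ)) (n + 1 - 1 - k) := by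
          refine Finset.sum_congr rfl fun k hk => ?_
          have hk' : k ≤ n := Nat.lt_succ_iff.mp (Finset.mem_range.mp hk)
          show (-1 : ℤ) ^ (n - k) * ((k + (n - k)).choose (n - k) : ℤ)
            = (-1 : ℤ) ^ (n - k) * (n.choose (n - k) : ℤ)
          rw [Nat.add_sub_cancel' hk']
      _ = ∑ k ∈ Finset.range (n + 1), (-1 : ℤ) ^ k * (n.choose k : ℤ) :=
          Finset.sum_range_reflect (fun m => (-1 : ℤ) ^ m * (n.choose m : ℤ)) (n + 1)
      _ = if n = 0 then 1 else 0 := Int.alternating_sum_range_choose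
  -- composing the two maps
  have hTS : ∀ b : B, (∑' j, (-1 : ℤ) ^ j • e j (∑' i, e i b)) = b := by
    intro b
    have hF : Summable (fun p : ℕ × ℕ =>
        ((-1 : ℤ) ^ p.1 * ((p.1 + p.2).choose p.2 : ℤ)) • e (p.1 + p.2) b) :=
      hsumgen _ _ hfinadd b
    have hFinner : ∀ j : ℕ, Summable (fun i =>
        ((-1 : ℤ) ^ j * ((j + i).choose i : ℤ)) • e (j + i) b) :=
      fun j => hsumgen (fun i => (-1 : ℤ) ^ j * ((j + i).choose i : ℤ)) (fun i => j + i)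
        (hfinsh j) b
    have step : ∑' p : ℕ × ℕ,
        ((-1 : ℤ) ^ p.1 * ((p.1 + p.2).choose p.2 : ℤ)) • e (p.1 + p.2) b
        = ∑' j, (-1 : ℤ) ^ j • e j (∑' i, e i b) := by
      rw [Summable.tsum_prod' hF hFinner]
      refine tsum_congr fun j => ?_
      rw [hej_tsum j _ (hsum1 b), ← Summable.tsum_const_smul ((-1 : ℤ) ^ j) (hsum_map j _ (hsum1 b))]
      refine tsum_congr fun i => ?_
      show ((-1 : ℤ) ^ j * ((j + i).choose i : ℤ)) • e (j + i) b
        = (-1 : ℤ) ^ j • e j (e i b)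
      rw [he.comp, ← natCast_zsmul, smul_smul, add_comm j i]
    rw [← step]
    exact inv_key _ b hc1
  have hST : ∀ b : B, (∑' i, e i (∑' j, (-1 : ℤ) ^ j • e j b)) = b := by
    intro b
    have hF : Summable (fun p : ℕ × ℕ =>
        ((-1 : ℤ) ^ p.2 * ((p.1 + p.2).choose p.2 : ℤ)) • e (p.1 + p.2) b) :=
      hsumgen _ _ hfinadd b
    have hFinner : ∀ i : ℕ, Summable (fun j =>
        ((-1 : ℤ) ^ j * ((i + j).choose j : ℤ)) • e (i + j) b) :=
      fun i => hsumgen (fun j => (-1 : ℤ) ^ j * ((i + j).choose j : ℤ)) (fun j => i + j)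
        (hfinsh i) b
    have step : ∑' p : ℕ × ℕ,
        ((-1 : ℤ) ^ p.2 * ((p.1 + p.2).choose p.2 : ℤ)) • e (p.1 + p.2) b
        = ∑' i, e i (∑' j, (-1 : ℤ) ^ j • e j b) := by
      rw [Summable.tsum_prod' hF hFinner]
      refine tsum_congr fun i => ?_
      rw [hej_tsum i _ (hsumz _ b)]
      refine tsum_congr fun j => ?_
      show ((-1 : ℤ) ^ j * ((i + j).choose j : ℤ)) • e (i + j) b
        = e i ((-1 : ℤ) ^ j • e j b)
      rw [show e i ((-1 : ℤ) ^ j • e j b) = (-1 : ℤ) ^ j • e i (e j b) from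
        map_zsmul (AddMonoidHom.mk' (e i) (he.map_add i)) _ _]
      rw [he.comp, ← natCast_zsmul, smul_smul, add_comm j i]
    rw [← step]
    exact inv_key _ b hc2
  -- multiplicativity
  have hmul : ∀ b b' : B, (∑' n, e n (b * b')) = (∑' i, e i b) * ∑' i, e i b' := by
    intro b b'
    rw [tsum_congr fun n => he.leibniz n b b']
    exact (Summable.tsum_mul_tsum_eq_tsum_sum_antidiagonal (hsum1 b) (hsum1 b') (hsummul b b')).symm
  -- additivity
  have hadd : ∀ b b' : B, (∑' i, e i (b + b')) = (∑' i, e i b) + ∑' i, e i b' := by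
    intro b b'
    rw [tsum_congr fun i => he.map_add i b b']
    exact Summable.tsum_add (hsum1 b) (hsum1 b')
  -- algebra map
  have halgS : ∀ x : A, (∑' i, e i (algebraMap A B x)) = algebraMap A B x := by
    intro x
    have hx : ∀ i, e i (algebraMap A B x) = x • e i (1 : B) := fun i => by
      rw [Algebra.algebraMap_eq_smul_one, he.map_smul]
    rw [tsum_eq_single 0 (fun i hi => by rw [hx i, he_one i hi, smul_zero])]
    rw [hx 0, he.zeroth, Algebra.algebraMap_eq_smul_one]
  -- continuity
  have hcont : ∀ c : ℕ → ℤ, Continuous fun b => ∑' i, c i • e i b := by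
    intro c
    rw [continuous_iff_continuousAt]
    intro b₀
    rw [ContinuousAt, ← tendsto_sub_nhds_zero_iff, Filter.tendsto_def]
    intro s hs
    obtain ⟨n, hn⟩ := hbasis s hs
    obtain ⟨H, hHopen, n₀, hH⟩ := htail b₀ n
    have hgcont : Continuous fun x : B =>
        ∑ i ∈ Finset.range n₀, (c i • e i x - c i • e i b₀) :=
      continuous_finset_sum _ fun i _ => ((he.continuous i).fun_const_smul _).sub continuous_const
    have hV : (fun x : B => ∑ i ∈ Finset.range n₀, (c i • e i x - c i • e i b₀)) ⁻¹'
        (a n : Set B) ∈ 𝓝 b₀ := by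
      refine hgcont.continuousAt.preimage_mem_nhds ((haopen n).mem_nhds ?_)
      simp only [sub_self, Finset.sum_const_zero]
      exact (a n).zero_mem
    have hW : (fun x : B => x - b₀) ⁻¹' (H : Set B) ∈ 𝓝 b₀ := by
      refine ((continuous_id.sub continuous_const).continuousAt.preimage_mem_nhds
        (hHopen.mem_nhds ?_))
      simpa using H.zero_mem
    filter_upwards [hV, hW] with x hx hw
    apply hn
    have hsx := hsumz c x
    have hsb := hsumz c b₀
    have hdiff : Summable fun i => c i • e i x - c i • e i b₀ := hsx.sub hsb
    show (∑' i, c i • e i x) - (∑' i, c i • e i b₀) ∈ (a n : Set B)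
    rw [← Summable.tsum_sub hsx hsb, ← Summable.sum_add_tsum_nat_add n₀ hdiff]
    refine Submodule.add_mem _ hx ?_
    refine RES.tsum_mem _ (haclosed n) _ ((summable_nat_add_iff n₀).mpr hdiff) fun i => ?_
    have h1 : e (i + n₀) x ∈ a n := by
      have := hH (x - b₀) hw (i + n₀) (Nat.le_add_left n₀ i)
      simpa using this
    have h2 : e (i + n₀) b₀ ∈ a n := by
      simpa using hH 0 H.zero_mem (i + n₀) (Nat.le_add_left n₀ i)
    exact Submodule.sub_mem _ (zsmul_mem h1 _) (zsmul_mem h2 _)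
  have hcontS : Continuous fun b : B => ∑' i, e i b := by
    have := hcont 1
    simpa only [Pi.one_apply, one_zsmul] using this
  have hcontT : Continuous fun b : B => ∑' i, (-1 : B) ^ i * e i b := by
    have h := hcont fun i => (-1 : ℤ) ^ i
    have : (fun b : B => ∑' i, (-1 : B) ^ i * e i b)
        = fun b : B => ∑' i, (-1 : ℤ) ^ i • e i b := funext fun b => hT' b
    rw [this]; exact h
  -- assemble
  refine ⟨hsum1, hsum2, ?_⟩
  refine ⟨{ toFun := fun b => ∑' i, e i b
            invFun := fun b => ∑' i, (-1 : B) ^ i * e i b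
            left_inv := fun b => by
              show (∑' i, (-1 : B) ^ i * e i (∑' j, e j b)) = b
              rw [hT' (∑' j, e j b)]; exact hTS b
            right_inv := fun b => by
              show (∑' i, e i (∑' j, (-1 : B) ^ j * e j b)) = b
              rw [show (∑' j, (-1 : B) ^ j * e j b) = ∑' j, (-1 : ℤ) ^ j • e j b from hT' b]
              exact hST b
            map_mul' := fun b b' => hmul b b'
            map_add' := fun b b' => hadd b b'
            commutes' := halgS }, ?_, ?_, ?_, ?_⟩
  · exact hcontS
  · exact hcontT
  · intro b; rfl
  · intro b; rfl
end

section
/- Let A be a complete topological ring, B a complete topological A-algebra, (e_i)_{i∈ℕ} a restricted exponential system on B over A, and s ∈ B an element with e_1(s) = 1 and e_i(s) = 0 for all i ≥ 2. Then s is a regular element of B, i.e., for every b ∈ B, s·b = 0 implies b = 0. -/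
open Filter Topology

/-- if a restricted exponential system `(eᵢ)` on `B` admits a slice `s`
(i.e. `e₁(s) = 1` and `eᵢ(s) = 0` for `i ≥ 2`), then `s` is a regular element of `B`. -/
theorem slice_is_regular
    (A B : Type*) [CommRing A] [UniformSpace A] [IsUniformAddGroup A] [IsTopologicalRing A]
    [CompleteSpace A] [T2Space A]
    [CommRing B] [Algebra A B] [UniformSpace B] [IsUniformAddGroup B] [IsTopologicalRing B]
    [CompleteSpace B] [T2Space B]
    (hA : HasLinearRingTopology A) (hB : HasLinearRingTopology B)
    (halg : Continuous (algebraMap A B))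
    (e : ℕ → B → B) (he : IsRestrictedExpSystem A B e)
    (s : B) (hs1 : e 1 s = 1) (hs2 : ∀ i, 2 ≤ i → e i s = 0) :
    ∀ b : B, s * b = 0 → b = 0 := by
  intro b hb
  obtain ⟨a, ha0, hamono, haopen, hafund⟩ := hB
  -- e i 0 = 0
  have hzero : ∀ i : ℕ, e i (0 : B) = 0 := by
    intro i
    have h := he.map_smul i (0 : A) (0 : B)
    simpa using h
  -- key recursion: e n b = (-s) * e (n+1) b
  have hrec : ∀ n : ℕ, e n b = (-s) * e (n + 1) b := by
    intro n
    have h := he.leibniz (n + 1) s b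
    rw [hb, hzero] at h
    rw [Finset.Nat.sum_antidiagonal_eq_sum_range_succ_mk] at h
    rw [Finset.sum_range_succ', Finset.sum_range_succ'] at h
    have hz : ∀ i ∈ Finset.range n, e (i + 1 + 1) s * e (n + 1 - (i + 1 + 1)) b = 0 := by
      intro i _
      rw [hs2 (i + 1 + 1) (by omega), zero_mul]
    rw [Finset.sum_eq_zero hz] at h
    simp only [hs1, he.zeroth, one_mul, zero_add, Nat.sub_zero, Nat.add_sub_cancel] at h
    linear_combination -h
  -- hence b = (-s)^n * e n b
  have key : ∀ n : ℕ, b = (-s) ^ n * e n b := by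
    intro n
    induction n with
    | zero => simp [he.zeroth]
    | succ n ih =>
      calc b = (-s) ^ n * e n b := ih
        _ = (-s) ^ n * ((-s) * e (n + 1) b) := by rw [← hrec n]
        _ = (-s) ^ (n + 1) * e (n + 1) b := by ring
  -- the constant sequence b tends to 0
  have htend : Filter.Tendsto (fun n : ℕ => (-s) ^ n * e n b) Filter.atTop (𝓝 (0 : B)) := by
    intro U hU
    rw [Filter.mem_map]
    obtain ⟨k, hk⟩ := hafund U hU
    obtain ⟨H, hHopen, n₀, hn⟩ := he.conv_zero b (a k).toAddSubgroup (haopen k)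
    apply Filter.mem_of_superset (Filter.mem_atTop n₀)
    intro n hn'
    have := hn 0 H.zero_mem n hn'
    simp only [add_zero, sub_zero] at this
    exact hk (Ideal.mul_mem_left _ _ this)
  have hconst : Filter.Tendsto (fun _ : ℕ => b) Filter.atTop (𝓝 b) := tendsto_const_nhds
  have heq : (fun n : ℕ => (-s) ^ n * e n b) = fun _ : ℕ => b := by
    funext n; exact (key n).symm
  rw [heq] at htend
  exact tendsto_nhds_unique hconst htend
end

section
/- Let A be a complete topological ring, B a complete topological A-algebra, (e_i)_{i∈ℕ} a restricted exponential system on B over A, and s ∈ B an element with e_1(s) = 1 and e_i(s) = 0 for all i ≥ 2. For every b ∈ B the family (e_i(b)·(−s)^i)_{i∈ℕ} is summable; define the Dixmier–Reynolds operator R_s : B → B by R_s(b) = ∑_{i∈ℕ} e_i(b)·(−s)^i. Then: (i) R_s is a continuous A-algebra homomorphism; (ii) R_s restricts to the identity on the ring of invariants B^e; (iii) the image of R_s equals B^e; and (iv) R_s(R_s(b)·b') = R_s(b)·R_s(b') for all b, b' ∈ B. -/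
open Filter Topology

section DRAux

variable {B : Type*} [CommRing B] [UniformSpace B] [IsUniformAddGroup B] [IsTopologicalRing B]
  [CompleteSpace B] [T2Space B]

set_option linter.unusedSectionVars false in
private lemma dr_summable (hB : HasLinearRingTopology B) {ι : Type*} {f : ι → B}
    (h : ∀ a : Ideal B, IsOpen (a : Set B) → {i | f i ∉ a}.Finite) : Summable f := by
  rw [summable_iff_vanishing]
  intro U hU
  obtain ⟨a, -, -, haopen, hbasis⟩ := hB
  obtain ⟨n, hn⟩ := hbasis U hU
  refine ⟨(h (a n) (haopen n)).toFinset, fun t ht => hn ?_⟩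
  refine sum_mem fun i hi => ?_
  by_contra hne
  exact Finset.disjoint_left.mp ht hi ((h (a n) (haopen n)).mem_toFinset.mpr hne)

set_option linter.unusedSectionVars false in
private lemma dr_tsum_mem {ι : Type*} {f : ι → B} (hf : Summable f) {a : Ideal B}
    (hc : IsClosed (a : Set B)) (h : ∀ i, f i ∈ a) : (∑' i, f i) ∈ a :=
  hc.mem_of_tendsto hf.hasSum (Filter.Eventually.of_forall fun t => sum_mem fun i _ => h i)

private lemma dr_choose (j q k : ℕ) (hq : q ≤ j) :
    (k + j).choose (k + q) * (k + q).choose q = j.choose q * (k + j).choose k := by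
  have h1 := Nat.choose_mul (n := k + j) (Nat.le_add_left q k)
  rw [Nat.add_sub_cancel] at h1
  have h2 := Nat.choose_mul (n := k + j) hq
  have e2 : (k + j).choose k = (k + j).choose j := by
    have := Nat.choose_symm (Nat.le_add_left j k)
    rwa [Nat.add_sub_cancel] at this
  have e3 : (k + j - q).choose (k + q - q) = (k + j - q).choose (j - q) := by
    have := Nat.choose_symm (show j - q ≤ k + j - q by omega)
    have h4 : k + j - q - (j - q) = k + q - q := by omega
    rwa [h4] at this
  rw [Nat.add_sub_cancel] at e3
  rw [h1, e3, ← h2, e2]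
  ring

end DRAux

/-- given a restricted exponential system `(eᵢ)` on `B` with a slice `s`
(`e₁(s) = 1`, `eᵢ(s) = 0` for `i ≥ 2`), the families `(eᵢ(b)·(-s)ⁱ)` are summable, and the
Dixmier–Reynolds operator `R_s(b) = ∑ᵢ eᵢ(b)·(-s)ⁱ` is a continuous `A`-algebra
homomorphism which restricts to the identity on the ring of invariants `B^e`, has image
exactly `B^e`, and satisfies the Reynolds identity `R_s(R_s(b)·b') = R_s(b)·R_s(b')`. -/
theorem dixmierReynolds_operator
    (A B : Type*) [CommRing A] [UniformSpace A] [IsUniformAddGroup A] [IsTopologicalRing A]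
    [CompleteSpace A] [T2Space A]
    [CommRing B] [Algebra A B] [UniformSpace B] [IsUniformAddGroup B] [IsTopologicalRing B]
    [CompleteSpace B] [T2Space B]
    (hA : HasLinearRingTopology A) (hB : HasLinearRingTopology B)
    (halg : Continuous (algebraMap A B))
    (e : ℕ → B → B) (he : IsRestrictedExpSystem A B e)
    (s : B) (hs1 : e 1 s = 1) (hs2 : ∀ i, 2 ≤ i → e i s = 0) :
    (∀ b : B, Summable fun i => e i b * (-s) ^ i) ∧
      ∃ R : B →ₐ[A] B,
        (∀ b : B, R b = ∑' i, e i b * (-s) ^ i) ∧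
        Continuous R ∧
        (∀ b ∈ {b : B | ∀ i, 1 ≤ i → e i b = 0}, R b = b) ∧
        Set.range R = {b : B | ∀ i, 1 ≤ i → e i b = 0} ∧
        (∀ b b' : B, R (R b * b') = R b * R b') := by
  classical
  -- basic structure maps
  let E : ℕ → (B →+ B) := fun i => AddMonoidHom.mk' (e i) (he.map_add i)
  have e_zero : ∀ i, e i (0 : B) = 0 := fun i => map_zero (E i)
  have e_neg : ∀ (i : ℕ) (y : B), e i (-y) = - e i y := fun i y => map_neg (E i) y
  have comp' : ∀ (i j : ℕ) (b : B), e j (e i b) = (((i + j).choose i : ℕ) : B) * e (i + j) b :=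
    fun i j b => by rw [he.comp, nsmul_eq_mul]
  -- e_i(1) = 0 for i ≥ 1
  have e_one : ∀ i : ℕ, 1 ≤ i → e i (1 : B) = 0 := by
    intro i
    induction i using Nat.strong_induction_on with
    | _ i ih =>
      intro hi
      have h := he.leibniz i 1 1
      rw [mul_one] at h
      rw [Finset.Nat.sum_antidiagonal_eq_sum_range_succ (fun p q => e p (1:B) * e q (1:B))] at h
      have hsub : ({0, i} : Finset ℕ) ⊆ Finset.range (i + 1) := by
        intro t ht; simp only [Finset.mem_insert, Finset.mem_singleton] at ht
        simp only [Finset.mem_range]; omega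
      have hzero : ∀ k ∈ Finset.range (i + 1), k ∉ ({0, i} : Finset ℕ) →
          e k (1:B) * e (i - k) (1:B) = 0 := by
        intro k hk hk'
        simp only [Finset.mem_insert, Finset.mem_singleton, not_or] at hk'
        simp only [Finset.mem_range] at hk
        rw [ih k (by omega) (by omega), zero_mul]
      rw [← Finset.sum_subset hsub hzero] at h
      rw [Finset.sum_insert (by simp only [Finset.mem_singleton]; omega),
        Finset.sum_singleton] at h
      rw [he.zeroth, Nat.sub_zero, Nat.sub_self, he.zeroth, one_mul, mul_one] at h
      exact (left_eq_add.mp h)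
  -- convergence of e_i(b) to 0
  have e_mem : ∀ (b : B) (a : Ideal B), IsOpen (a : Set B) →
      ∃ N : ℕ, ∀ i, N ≤ i → e i b ∈ a := by
    intro b a ha
    obtain ⟨H, hHopen, n₀, hconv⟩ := he.conv_zero b a.toAddSubgroup (by simpa using ha)
    refine ⟨n₀, fun i hi => ?_⟩
    have := hconv 0 H.zero_mem i hi
    simpa using this
  -- summability of the defining family
  have hSum : ∀ b : B, Summable fun i => e i b * (-s) ^ i := by
    intro b
    apply dr_summable hB
    intro a ha
    obtain ⟨N, hN⟩ := e_mem b a ha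
    refine Set.Finite.subset (Set.finite_Iio N) fun i hi => ?_
    simp only [Set.mem_setOf_eq] at hi
    by_contra hge
    exact hi (Ideal.mul_mem_right _ _ (hN i (by simpa [Set.mem_Iio] using hge)))
  -- the power formula for e_n((-s)^i)
  have pow_formula : ∀ (i n : ℕ),
      e n ((-s) ^ i) = ((i.choose n : ℕ) : B) * ((-1 : B) ^ n * (-s) ^ (i - n)) := by
    intro i
    induction i with
    | zero =>
      intro n
      cases n with
      | zero => simp [he.zeroth]
      | succ m =>
        rw [pow_zero, e_one (m + 1) (by omega)]
        simp [Nat.choose_eq_zero_of_lt (by omega : 0 < m + 1)]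
    | succ i ih =>
      intro n
      rw [pow_succ, he.leibniz n]
      cases n with
      | zero =>
        rw [Finset.Nat.antidiagonal_zero, Finset.sum_singleton]
        simp [he.zeroth, pow_succ]
      | succ m =>
        rw [Finset.Nat.sum_antidiagonal_eq_sum_range_succ
          (fun p q => e p ((-s) ^ i) * e q (-s))]
        have hsub : ({m, m + 1} : Finset ℕ) ⊆ Finset.range (m + 2) := by
          intro t ht; simp only [Finset.mem_insert, Finset.mem_singleton] at ht
          simp only [Finset.mem_range]; omega
        have hzero : ∀ k ∈ Finset.range (m + 2), k ∉ ({m, m + 1} : Finset ℕ) →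
            e k ((-s) ^ i) * e (m + 1 - k) (-s) = 0 := by
          intro k hk hk'
          simp only [Finset.mem_insert, Finset.mem_singleton, not_or] at hk'
          simp only [Finset.mem_range] at hk
          rw [e_neg, hs2 (m + 1 - k) (by omega), neg_zero, mul_zero]
        rw [← Finset.sum_subset hsub hzero]
        rw [Finset.sum_insert (by simp only [Finset.mem_singleton]; omega),
          Finset.sum_singleton]
        have h1 : e (m + 1 - m) (-s) = -1 := by
          rw [show m + 1 - m = 1 by omega, e_neg, hs1]
        have h0 : e (m + 1 - (m + 1)) (-s) = -s := by
          rw [Nat.sub_self, he.zeroth]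
        rw [h1, h0, ih m, ih (m + 1), Nat.choose_succ_succ i m, Nat.succ_sub_succ]
        push_cast
        rcases le_or_gt (m + 1) i with h | h
        · have hxp : (-s) ^ (i - (m + 1)) * (-s) = (-s) ^ (i - m) := by
            rw [← pow_succ]; congr 1; omega
          linear_combination ((i.choose (m + 1) : B) * (-1 : B) ^ (m + 1)) * hxp
        · rw [Nat.choose_eq_zero_of_lt h]
          push_cast
          ring
  -- key invariance: e_j of the sum vanishes for j ≥ 1
  have hinv : ∀ (b : B) (j : ℕ), 1 ≤ j → e j (∑' i, e i b * (-s) ^ i) = 0 := by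
    intro b j hj
    have hmap : e j (∑' i, e i b * (-s) ^ i) = ∑' i, e j (e i b * (-s) ^ i) :=
      (hSum b).map_tsum (E j) (he.continuous j)
    set g : ℕ → ℕ → B := fun q i =>
      (((i + (j - q)).choose i : ℕ) : B) * e (i + (j - q)) b *
        (((i.choose q : ℕ) : B) * ((-1 : B) ^ q * (-s) ^ (i - q))) with hg
    have hterm : ∀ i, e j (e i b * (-s) ^ i) = ∑ q ∈ Finset.range (j + 1), g q i := by
      intro i
      rw [he.leibniz j]
      rw [Finset.Nat.sum_antidiagonal_eq_sum_range_succ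
        (fun u v => e u (e i b) * e v ((-s) ^ i)), ← Finset.sum_range_reflect]
      refine Finset.sum_congr rfl fun k hk => ?_
      simp only [Finset.mem_range] at hk
      have h1 : j + 1 - 1 - k = j - k := by omega
      have h2 : j - (j - k) = k := by omega
      rw [h1, h2, comp', pow_formula]
    have hgsum : ∀ q, q ≤ j → Summable (g q) := by
      intro q _
      apply dr_summable hB
      intro a ha
      obtain ⟨N, hN⟩ := e_mem b a ha
      refine Set.Finite.subset (Set.finite_Iio N) fun i hi => ?_
      simp only [Set.mem_setOf_eq] at hi
      by_contra hge
      refine hi ?_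
      simp only [hg]
      exact Ideal.mul_mem_right _ _
        (Ideal.mul_mem_left _ _ (hN _ (by simp [Set.mem_Iio] at hge; omega)))
    have hTsum : Summable fun k => (((k + j).choose k : ℕ) : B) * (e (k + j) b * (-s) ^ k) := by
      apply dr_summable hB
      intro a ha
      obtain ⟨N, hN⟩ := e_mem b a ha
      refine Set.Finite.subset (Set.finite_Iio N) fun k hk => ?_
      simp only [Set.mem_setOf_eq] at hk
      by_contra hge
      exact hk (Ideal.mul_mem_left _ _
        (Ideal.mul_mem_right _ _ (hN _ (by simp [Set.mem_Iio] at hge; omega))))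
    have hqval : ∀ q, q ≤ j → ∑' i, g q i =
        ((-1 : B) ^ q * ((j.choose q : ℕ) : B)) *
          ∑' k, (((k + j).choose k : ℕ) : B) * (e (k + j) b * (-s) ^ k) := by
      intro q hq
      have hinj : Function.Injective (fun k : ℕ => k + q) := add_left_injective q
      have hsupp : Function.support (g q) ⊆ Set.range (fun k : ℕ => k + q) := by
        intro i hi
        rcases le_or_gt q i with h | h
        · exact ⟨i - q, Nat.sub_add_cancel h⟩
        · exfalso; apply hi; simp [hg, Nat.choose_eq_zero_of_lt h]
      rw [← hinj.tsum_eq hsupp]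
      have hgq : ∀ k, g q (k + q) =
          ((-1 : B) ^ q * ((j.choose q : ℕ) : B)) *
            ((((k + j).choose k : ℕ) : B) * (e (k + j) b * (-s) ^ k)) := by
        intro k
        have e1 : k + q + (j - q) = k + j := by omega
        have e2 : k + q - q = k := by omega
        simp only [hg, e1, e2]
        have hc : (((k + j).choose (k + q) : ℕ) : B) * (((k + q).choose q : ℕ) : B)
            = ((j.choose q : ℕ) : B) * (((k + j).choose k : ℕ) : B) := by
          exact_mod_cast congrArg (fun m : ℕ => (m : B)) (dr_choose j q k hq)
        linear_combination (e (k + j) b * ((-1 : B) ^ q * (-s) ^ k)) * hc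
      rw [tsum_congr hgq, hTsum.tsum_mul_left]
    rw [hmap, tsum_congr hterm,
      Summable.tsum_finsetSum (fun q hq => hgsum q (by simpa [Nat.lt_succ_iff] using Finset.mem_range.mp hq))]
    rw [Finset.sum_congr rfl
      (fun q hq => hqval q (by simpa [Nat.lt_succ_iff] using Finset.mem_range.mp hq)),
      ← Finset.sum_mul]
    have h0 : (∑ m ∈ Finset.range (j + 1), ((-1 : ℤ) ^ m * (j.choose m : ℤ))) = 0 :=
      Int.alternating_sum_range_choose_of_ne (by omega)
    have h0' := congrArg (fun z : ℤ => (z : B)) h0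
    push_cast at h0'
    rw [h0', zero_mul]
  -- the pieces for the algebra-hom structure
  have R0_zero : (∑' i, e i (0 : B) * (-s) ^ i) = 0 := by
    rw [tsum_congr (fun i => by rw [e_zero i, zero_mul]), tsum_zero]
  have R0_one : (∑' i, e i (1 : B) * (-s) ^ i) = 1 := by
    rw [tsum_eq_single 0 (fun i hi => by rw [e_one i (by omega), zero_mul])]
    rw [he.zeroth, pow_zero, mul_one]
  have R0_add : ∀ b b' : B, (∑' i, e i (b + b') * (-s) ^ i) =
      (∑' i, e i b * (-s) ^ i) + ∑' i, e i b' * (-s) ^ i := by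
    intro b b'
    rw [tsum_congr (fun i => by rw [he.map_add]; ring :
        ∀ i, e i (b + b') * (-s) ^ i = e i b * (-s) ^ i + e i b' * (-s) ^ i)]
    exact Summable.tsum_add (hSum b) (hSum b')
  have hProd : ∀ b b' : B, Summable fun p : ℕ × ℕ =>
      (e p.1 b * (-s) ^ p.1) * (e p.2 b' * (-s) ^ p.2) := by
    intro b b'
    apply dr_summable hB
    intro a ha
    obtain ⟨N, hN⟩ := e_mem b a ha
    obtain ⟨N', hN'⟩ := e_mem b' a ha
    refine Set.Finite.subset ((Set.finite_Iio N).prod (Set.finite_Iio N'))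
      fun p hp => ?_
    simp only [Set.mem_setOf_eq] at hp
    constructor
    · by_contra hge
      exact hp (Ideal.mul_mem_right _ _ (Ideal.mul_mem_right _ _
        (hN _ (by simp [Set.mem_Iio] at hge; omega))))
    · by_contra hge
      exact hp (Ideal.mul_mem_left _ _ (Ideal.mul_mem_right _ _
        (hN' _ (by simp [Set.mem_Iio] at hge; omega))))
  have R0_mul : ∀ b b' : B, (∑' i, e i (b * b') * (-s) ^ i) =
      (∑' i, e i b * (-s) ^ i) * ∑' i, e i b' * (-s) ^ i := by
    intro b b'
    rw [Summable.tsum_mul_tsum_eq_tsum_sum_antidiagonal (hSum b) (hSum b') (hProd b b')]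
    refine tsum_congr fun n => ?_
    rw [he.leibniz n, Finset.sum_mul]
    refine Finset.sum_congr rfl fun p hp => ?_
    have hpn := Finset.HasAntidiagonal.mem_antidiagonal.mp hp
    rw [← hpn, pow_add]
    ring
  have hsmul : ∀ (a : A) (b : B), (∑' i, e i (a • b) * (-s) ^ i) =
      a • ∑' i, e i b * (-s) ^ i := by
    intro a b
    rw [tsum_congr (fun i => by rw [he.map_smul, Algebra.smul_def]; ring :
        ∀ i, e i (a • b) * (-s) ^ i = algebraMap A B a * (e i b * (-s) ^ i))]
    rw [(hSum b).tsum_mul_left, ← Algebra.smul_def]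
  -- assemble the algebra homomorphism
  let R0 : B →+* B :=
    { toFun := fun b => ∑' i, e i b * (-s) ^ i
      map_one' := R0_one
      map_mul' := R0_mul
      map_zero' := R0_zero
      map_add' := R0_add }
  let R : B →ₐ[A] B := AlgHom.mk' R0 hsmul
  -- identity on invariants
  have hid : ∀ b ∈ {b : B | ∀ i, 1 ≤ i → e i b = 0}, R b = b := by
    intro b hb
    show (∑' i, e i b * (-s) ^ i) = b
    rw [tsum_eq_single 0 (fun i hi => by rw [hb i (by omega), zero_mul])]
    rw [he.zeroth, pow_zero, mul_one]
  -- continuity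
  have hcont : Continuous R := by
    apply continuous_of_continuousAt_zero R
    unfold ContinuousAt
    rw [map_zero, tendsto_def]
    intro U hU
    obtain ⟨a, -, -, haopen, hbasis⟩ := hB
    obtain ⟨n, hn⟩ := hbasis U hU
    obtain ⟨H, hHopen, n₀, hconv⟩ :=
      he.conv_zero 0 (a n).toAddSubgroup (by simpa using haopen n)
    have hHmem : (H : Set B) ∈ 𝓝 (0 : B) := hHopen.mem_nhds H.zero_mem
    have hpre : ∀ i : ℕ, (e i) ⁻¹' (a n : Set B) ∈ 𝓝 (0 : B) := by
      intro i
      refine (he.continuous i).continuousAt.preimage_mem_nhds ?_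
      rw [e_zero i]
      exact (haopen n).mem_nhds (a n).zero_mem
    have hV : ((H : Set B) ∩ ⋂ i ∈ Finset.range n₀, (e i) ⁻¹' (a n : Set B)) ∈ 𝓝 (0 : B) :=
      Filter.inter_mem hHmem ((Filter.biInter_finset_mem _).mpr fun i _ => hpre i)
    refine Filter.mem_of_superset hV ?_
    intro y hy
    have hally : ∀ i, e i y ∈ a n := by
      intro i
      rcases lt_or_ge i n₀ with h | h
      · have := hy.2
        simp only [Set.mem_iInter] at this
        exact this i (Finset.mem_range.mpr h)
      · have := hconv y hy.1 i h
        simpa using this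
    show R y ∈ U
    refine hn ?_
    show (∑' i, e i y * (-s) ^ i) ∈ (a n : Set B)
    exact dr_tsum_mem (hSum y)
      (by simpa using AddSubgroup.isClosed_of_isOpen (a n).toAddSubgroup (by simpa using haopen n))
      (fun i => Ideal.mul_mem_right _ _ (hally i))
  refine ⟨hSum, R, fun b => rfl, hcont, hid, ?_, ?_⟩
  · ext b
    constructor
    · rintro ⟨b', rfl⟩
      intro i hi
      exact hinv b' i hi
    · intro hb
      exact ⟨b, hid b hb⟩
  · intro b b'
    have hRb : R (R b) = R b := hid (R b) (fun i hi => hinv b i hi)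
    rw [map_mul, hRb]
end

section
/- Let A be a complete topological ring, B a complete topological A-algebra, (e_i)_{i∈ℕ} a restricted exponential system on B over A, and s ∈ B an element with e_1(s) = 1 and e_i(s) = 0 for all i ≥ 2. Let R_s : B → B be the Dixmier–Reynolds operator R_s(b) = ∑_{i∈ℕ} e_i(b)·(−s)^i. Then: (i) for every b ∈ B the family (R_s(e_i(b))·s^i)_{i∈ℕ} is summable in B with sum b; (ii) if (a_i)_{i∈ℕ} is a family of elements of the ring of invariants B^e converging to 0 in B with ∑_{i∈ℕ} a_i·s^i = 0, then a_i = 0 for all i. Consequently, the map B^e{S} → B sending ∑ a_i S^i to ∑ a_i s^i is an isomorphism of topological B^e-algebras from the restricted power series ring B^e{S} onto B. -/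
open Filter Topology

section helpers

set_option linter.unusedSectionVars false

structure ES (B : Type*) [CommRing B] [TopologicalSpace B] (e : ℕ → B → B) : Prop where
  map_add : ∀ (i : ℕ) (b b' : B), e i (b + b') = e i b + e i b'
  continuous : ∀ i, Continuous (e i)
  zeroth : ∀ b, e 0 b = b
  leibniz : ∀ (n : ℕ) (b b' : B),
    e n (b * b') = ∑ p ∈ Finset.HasAntidiagonal.antidiagonal n, e p.1 b * e p.2 b'
  comp : ∀ (i j : ℕ) (b : B), e j (e i b) = (i + j).choose i • e (i + j) b
  conv_zero : ConvergesContinuouslyTo e (fun _ => 0)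

namespace ES

variable {B : Type*} [CommRing B] [TopologicalSpace B] {e : ℕ → B → B} {s : B}

/-- `e i` as an additive monoid hom. -/
def hom (hE : ES B e) (i : ℕ) : B →+ B := AddMonoidHom.mk' (e i) (hE.map_add i)

@[simp] theorem hom_apply (hE : ES B e) (i : ℕ) (b : B) : hE.hom i b = e i b := rfl

theorem map_zero' (hE : ES B e) (i : ℕ) : e i 0 = 0 := (hE.hom i).map_zero

theorem map_sub' (hE : ES B e) (i : ℕ) (x y : B) : e i (x - y) = e i x - e i y :=
  (hE.hom i).map_sub x y

theorem e_one (hE : ES B e) : ∀ j, 1 ≤ j → e j (1 : B) = 0 := by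
  intro j
  induction j using Nat.strong_induction_on with
  | _ j ih =>
    intro hj
    have h := hE.leibniz j 1 1
    rw [mul_one, Finset.Nat.sum_antidiagonal_eq_sum_range_succ_mk] at h
    obtain ⟨j, rfl⟩ : ∃ k, j = k + 1 := ⟨j - 1, by omega⟩
    rw [Finset.sum_range_succ] at h
    simp only [Nat.add_sub_cancel, Nat.sub_self, hE.zeroth, mul_one] at h
    rw [Finset.sum_range_succ'] at h
    simp only [hE.zeroth, one_mul] at h
    have hmid : ∀ i ∈ Finset.range j, e (i + 1) (1 : B) * e (j + 1 - (i + 1)) (1 : B) = 0 := by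
      intro i hi
      rw [Finset.mem_range] at hi
      rw [ih (i + 1) (by omega) (by omega), zero_mul]
    rw [Finset.sum_congr rfl hmid, Finset.sum_const, smul_zero, zero_add] at h
    simp only [Nat.sub_zero] at h
    exact right_eq_add.mp h

theorem e_leib_s (hE : ES B e) (hs1 : e 1 s = 1) (hs2 : ∀ i, 2 ≤ i → e i s = 0)
    (x : B) (j : ℕ) (hj : 1 ≤ j) :
    e j (x * s) = e j x * s + e (j - 1) x := by
  rw [hE.leibniz, Finset.Nat.sum_antidiagonal_eq_sum_range_succ_mk]
  have hmem₁ : j ∈ Finset.range (j + 1) := Finset.mem_range.mpr (by omega)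
  have hmem₂ : j - 1 ∈ Finset.range (j + 1) := Finset.mem_range.mpr (by omega)
  rw [Finset.sum_eq_add_of_mem j (j - 1) hmem₁ hmem₂ (by omega) ?_]
  · rw [Nat.sub_self, hE.zeroth, Nat.sub_sub_self hj, hs1, mul_one]
  · intro k hk hne
    have hk' : j - k ≥ 2 := by
      rw [Finset.mem_range] at hk
      omega
    rw [hs2 _ hk', mul_zero]

theorem e_pow (hE : ES B e) (hs1 : e 1 s = 1) (hs2 : ∀ i, 2 ≤ i → e i s = 0) :
    ∀ (i j : ℕ), e j (s ^ i) = i.choose j • s ^ (i - j) := by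
  intro i
  induction i with
  | zero =>
    intro j
    rcases j with _ | j
    · simp [hE.zeroth]
    · rw [pow_zero, hE.e_one _ (by omega), Nat.choose_eq_zero_of_lt (by omega), zero_smul]
  | succ i ih =>
    intro j
    rcases j with _ | q
    · rw [hE.zeroth, Nat.choose_zero_right, one_smul, Nat.sub_zero]
    · rw [pow_succ, e_leib_s hE hs1 hs2 _ _ (by omega), Nat.add_sub_cancel,
        ih (q + 1), ih q, Nat.choose_succ_succ, add_smul]
      have hexp : i + 1 - (q + 1) = i - q := by omega
      rw [hexp, add_comm]
      congr 1
      rcases le_or_gt (q + 1) i with h | h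
      · rw [smul_mul_assoc, ← pow_succ]
        congr 2
        omega
      · rw [Nat.choose_eq_zero_of_lt h, zero_smul, zero_mul, zero_smul]

end ES

section TopHelpers
open Filter Topology
variable {B : Type*} [CommRing B] [UniformSpace B] [IsUniformAddGroup B] [IsTopologicalRing B]
variable {𝔞 : ℕ → Ideal B}

theorem linear_basis (hB : HasLinearRingTopology B) :
    ∃ 𝔞 : ℕ → Ideal B, (∀ n, IsOpen ((𝔞 n : Submodule B B) : Set B)) ∧
      (𝓝 (0 : B)).HasBasis (fun _ : ℕ => True) fun n => ((𝔞 n : Submodule B B) : Set B) := by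
  obtain ⟨a, -, -, hopen, hsub⟩ := hB
  refine ⟨a, hopen, Filter.hasBasis_iff.mpr fun t => ⟨fun ht => ?_, ?_⟩⟩
  · obtain ⟨n, hn⟩ := hsub t ht
    exact ⟨n, trivial, hn⟩
  · rintro ⟨n, -, hn⟩
    exact Filter.mem_of_superset ((hopen n).mem_nhds (a n).zero_mem) hn

theorem nonarch (hopen : ∀ n, IsOpen ((𝔞 n : Submodule B B) : Set B))
    (hb : (𝓝 (0 : B)).HasBasis (fun _ : ℕ => True) fun n => ((𝔞 n : Submodule B B) : Set B)) :
    NonarchimedeanAddGroup B := by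
  refine ⟨fun U hU => ?_⟩
  rcases hb.mem_iff.mp hU with ⟨n, -, hsub⟩
  exact ⟨⟨(𝔞 n).toAddSubgroup, hopen n⟩, hsub⟩

theorem summable_of_cof [CompleteSpace B]
    (hopen : ∀ n, IsOpen ((𝔞 n : Submodule B B) : Set B))
    (hb : (𝓝 (0 : B)).HasBasis (fun _ : ℕ => True) fun n => ((𝔞 n : Submodule B B) : Set B))
    {ι : Type*} {f : ι → B} (h : Tendsto f cofinite (𝓝 0)) : Summable f := by
  haveI := nonarch hopen hb
  exact NonarchimedeanAddGroup.summable_of_tendsto_cofinite_zero h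

theorem tsum_mem_ideal (hopen : ∀ n, IsOpen ((𝔞 n : Submodule B B) : Set B))
    {ι : Type*} {f : ι → B} {x : B} (n : ℕ)
    (hf : HasSum f x) (hmem : ∀ i, f i ∈ 𝔞 n) : x ∈ 𝔞 n := by
  have hclosed : IsClosed ((𝔞 n : Submodule B B) : Set B) :=
    (𝔞 n).toAddSubgroup.isClosed_of_isOpen (hopen n)
  exact hclosed.mem_of_tendsto hf
    (Filter.Eventually.of_forall fun t => Ideal.sum_mem _ fun i _ => hmem i)

theorem tendsto_mul_absorb
    (hb : (𝓝 (0 : B)).HasBasis (fun _ : ℕ => True) fun n => ((𝔞 n : Submodule B B) : Set B))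
    {ι : Type*} {l : Filter ι} {f g : ι → B}
    (h : Tendsto f l (𝓝 0)) : Tendsto (fun i => f i * g i) l (𝓝 0) := by
  rw [hb.tendsto_right_iff] at h ⊢
  intro n _
  filter_upwards [h n trivial] with i hi
  exact Ideal.mul_mem_right _ _ hi

theorem summable_pair [CompleteSpace B]
    (hopen : ∀ n, IsOpen ((𝔞 n : Submodule B B) : Set B))
    (hb : (𝓝 (0 : B)).HasBasis (fun _ : ℕ => True) fun n => ((𝔞 n : Submodule B B) : Set B))
    {f : ℕ × ℕ → B}
    (h : ∀ n : ℕ, ∃ N, ∀ p : ℕ × ℕ, N ≤ p.1 ∨ N ≤ p.2 → f p ∈ 𝔞 n) : Summable f := by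
  apply summable_of_cof hopen hb
  rw [hb.tendsto_right_iff]
  intro n _
  rw [Filter.eventually_cofinite]
  obtain ⟨N, hN⟩ := h n
  apply Set.Finite.subset ((Finset.range N ×ˢ Finset.range N).finite_toSet)
  intro p hp
  simp only [Set.mem_setOf_eq] at hp
  simp only [Finset.coe_product, Set.mem_prod, Finset.mem_coe, Finset.mem_range]
  by_contra hcon
  push_neg at hcon
  rcases le_or_gt N p.1 with h1 | h1
  · exact hp (hN p (Or.inl h1))
  · exact hp (hN p (Or.inr (hcon h1)))

end TopHelpers
section Core
open Filter Topology
set_option linter.unusedSectionVars false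
variable {B : Type*} [CommRing B] [UniformSpace B] [IsUniformAddGroup B] [IsTopologicalRing B]
variable {𝔞 : ℕ → Ideal B} {e : ℕ → B → B} {s : B}

theorem neg_one_pow_sub' {R : Type*} [CommRing R] {n k : ℕ} (h : k ≤ n) :
    ((-1 : R)) ^ (n - k) = (-1) ^ n * (-1) ^ k := by
  have h2 : ((-1 : R)) ^ k * (-1) ^ k = 1 := by
    rw [← pow_add]; exact Even.neg_one_pow ⟨k, rfl⟩
  calc ((-1 : R)) ^ (n - k) = (-1) ^ (n - k) * ((-1) ^ k * (-1) ^ k) := by rw [h2, mul_one]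
    _ = (-1) ^ (n - k + k) * (-1) ^ k := by rw [pow_add]; ring
    _ = (-1) ^ n * (-1) ^ k := by rw [Nat.sub_add_cancel h]

theorem alt_sum_cast (n : ℕ) :
    ∑ k ∈ Finset.range (n + 1), (-1 : B) ^ k * (n.choose k : ℕ) =
      if n = 0 then 1 else 0 := by
  have h := congrArg (fun z : ℤ => (z : B)) (Int.alternating_sum_range_choose (n := n))
  push_cast at h
  simpa [apply_ite (fun z : ℤ => (z : B))] using h

theorem tendsto_e (hE : ES B e)
    (hopen : ∀ n, IsOpen ((𝔞 n : Submodule B B) : Set B))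
    (hb : (𝓝 (0 : B)).HasBasis (fun _ : ℕ => True) fun n => ((𝔞 n : Submodule B B) : Set B))
    (b : B) : Tendsto (fun m => e m b) atTop (𝓝 0) := by
  rw [hb.tendsto_right_iff]
  intro n _
  obtain ⟨H, hHopen, n₀, hH⟩ := hE.conv_zero b (𝔞 n).toAddSubgroup (hopen n)
  filter_upwards [eventually_ge_atTop n₀] with m hm
  have := hH 0 H.zero_mem m hm
  simpa using this

/-- the terms of the Reynolds operator are summable -/
theorem summable_R [CompleteSpace B] (hE : ES B e)
    (hopen : ∀ n, IsOpen ((𝔞 n : Submodule B B) : Set B))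
    (hb : (𝓝 (0 : B)).HasBasis (fun _ : ℕ => True) fun n => ((𝔞 n : Submodule B B) : Set B))
    (c : B) : Summable (fun j => e j c * (-s) ^ j) := by
  apply summable_of_cof hopen hb
  rw [Nat.cofinite_eq_atTop]
  exact tendsto_mul_absorb hb (tendsto_e hE hopen hb c)

theorem R_mem_ideal [CompleteSpace B] (hE : ES B e)
    (hopen : ∀ n, IsOpen ((𝔞 n : Submodule B B) : Set B))
    (hb : (𝓝 (0 : B)).HasBasis (fun _ : ℕ => True) fun n => ((𝔞 n : Submodule B B) : Set B))
    {c : B} {n : ℕ} (hmem : ∀ j, e j c ∈ 𝔞 n) :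
    (∑' j : ℕ, e j c * (-s) ^ j) ∈ 𝔞 n :=
  tsum_mem_ideal hopen n (summable_R hE hopen hb c).hasSum
    (fun j => Ideal.mul_mem_right _ _ (hmem j))

/-- Part (i): Taylor expansion. -/
theorem hasSum_taylor [CompleteSpace B] [T2Space B] (hE : ES B e)
    (hs1 : e 1 s = 1) (hs2 : ∀ i, 2 ≤ i → e i s = 0)
    (hopen : ∀ n, IsOpen ((𝔞 n : Submodule B B) : Set B))
    (hb : (𝓝 (0 : B)).HasBasis (fun _ : ℕ => True) fun n => ((𝔞 n : Submodule B B) : Set B))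
    (b : B) :
    HasSum (fun i : ℕ => (∑' j : ℕ, e j (e i b) * (-s) ^ j) * s ^ i) b := by
  classical
  set t : ℕ × ℕ → B := fun p => (e p.2 (e p.1 b) * (-s) ^ p.2) * s ^ p.1 with ht
  have hterm : ∀ p : ℕ × ℕ, t p =
      ((-1 : B) ^ p.2 * ((p.1 + p.2).choose p.1 : ℕ)) * (e (p.1 + p.2) b * s ^ (p.1 + p.2)) := by
    intro p
    rw [ht]
    simp only
    rw [hE.comp, neg_pow, nsmul_eq_mul]
    push_cast
    ring
  have hsummable : Summable t := by
    apply summable_pair hopen hb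
    intro n
    obtain ⟨N, hN⟩ := eventually_atTop.mp
      ((hb.tendsto_right_iff.mp (tendsto_e hE hopen hb b)) n trivial)
    refine ⟨N, fun p hp => ?_⟩
    rw [hterm]
    exact Ideal.mul_mem_left _ _ (Ideal.mul_mem_right _ _ (hN _ (by omega)))
  have hrow : ∀ i : ℕ, HasSum (fun j => t (i, j))
      ((∑' j : ℕ, e j (e i b) * (-s) ^ j) * s ^ i) := fun i =>
    ((summable_R hE hopen hb (e i b)).hasSum).mul_right _
  -- fiber sums over antidiagonals
  have hfiber : ∀ n : ℕ, HasSum (fun c : {x // x ∈ Finset.HasAntidiagonal.antidiagonal n} =>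
      t ((Finset.HasAntidiagonal.sigmaAntidiagonalEquivProd (A := ℕ)) ⟨n, c⟩)) (if n = 0 then b else 0) := by
    intro n
    have heq : ∀ c : {x // x ∈ Finset.HasAntidiagonal.antidiagonal n},
        t ((Finset.HasAntidiagonal.sigmaAntidiagonalEquivProd (A := ℕ)) ⟨n, c⟩) = t c.1 := fun c => rfl
    have h2 : ∑ p ∈ Finset.HasAntidiagonal.antidiagonal n, t p = if n = 0 then b else 0 := by
      have h3 : ∀ p ∈ Finset.HasAntidiagonal.antidiagonal n, t p =
          ((-1 : B) ^ p.2 * (n.choose p.1 : ℕ)) * (e n b * s ^ n) := by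
        intro p hp
        rw [Finset.HasAntidiagonal.mem_antidiagonal] at hp
        rw [hterm, hp]
      rw [Finset.sum_congr rfl h3, ← Finset.sum_mul,
        Finset.Nat.sum_antidiagonal_eq_sum_range_succ_mk]
      have h4 : ∀ k ∈ Finset.range (n + 1),
          (-1 : B) ^ (n - k) * (n.choose k : ℕ) =
            (-1 : B) ^ n * ((-1 : B) ^ k * (n.choose k : ℕ)) := by
        intro k hk
        rw [Finset.mem_range] at hk
        rw [neg_one_pow_sub' (by omega)]
        ring
      rw [Finset.sum_congr rfl h4, ← Finset.mul_sum, alt_sum_cast]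
      rcases Nat.eq_zero_or_pos n with rfl | hn
      · simp [hE.zeroth]
      · have : n ≠ 0 := by omega
        simp [this]
    rw [← h2]
    have := hasSum_fintype (fun c : {x // x ∈ Finset.HasAntidiagonal.antidiagonal n} => t c.1)
    rwa [Finset.sum_coe_sort (Finset.HasAntidiagonal.antidiagonal n) t] at this
  have hsigma : HasSum (t ∘ (Finset.HasAntidiagonal.sigmaAntidiagonalEquivProd (A := ℕ))) b := by
    refine HasSum.sigma_of_hasSum (hasSum_ite_eq 0 b) hfiber ?_
    exact (Equiv.summable_iff _).mpr hsummable
  have htotal : HasSum t b := (Equiv.hasSum_iff _).mp hsigma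
  exact htotal.prod_fiberwise hrow

end Core
section Invariance
open Filter Topology
set_option linter.unusedSectionVars false
variable {B : Type*} [CommRing B] [UniformSpace B] [IsUniformAddGroup B] [IsTopologicalRing B]
variable {𝔞 : ℕ → Ideal B} {e : ℕ → B → B} {s : B}

/-- The Reynolds operator takes values in the invariants. -/
theorem R_invariant [CompleteSpace B] [T2Space B] (hE : ES B e)
    (hs1 : e 1 s = 1) (hs2 : ∀ i, 2 ≤ i → e i s = 0)
    (hopen : ∀ n, IsOpen ((𝔞 n : Submodule B B) : Set B))
    (hb : (𝓝 (0 : B)).HasBasis (fun _ : ℕ => True) fun n => ((𝔞 n : Submodule B B) : Set B))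
    (c : B) (k : ℕ) (hk : 1 ≤ k) :
    e k (∑' j : ℕ, e j c * (-s) ^ j) = 0 := by
  classical
  set D : ℕ → ℕ → B := fun p j =>
    (-1 : B) ^ j * (((j + p).choose j : ℕ) : B) * ((j.choose (k - p) : ℕ) : B) *
      (e (j + p) c * s ^ (j - (k - p))) with hD
  set E : ℕ → ℕ → B := fun p m => if p ≤ m then D p (m - p) else 0 with hEdef
  have hu := summable_R (𝔞 := 𝔞) (s := s) hE hopen hb c
  have hmap : HasSum (fun j => e k (e j c * (-s) ^ j))
      (e k (∑' j : ℕ, e j c * (-s) ^ j)) := by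
    have := hu.hasSum.map (hE.hom k) (hE.continuous k)
    simpa [Function.comp_def] using this
  have hneg : ∀ j : ℕ, (-s : B) ^ j = ((-1 : ℤ) ^ j) • s ^ j := by
    intro j
    rw [zsmul_eq_mul, neg_pow]
    push_cast
    ring
  have hleib : ∀ j : ℕ, e k (e j c * (-s) ^ j) = ∑ p ∈ Finset.range (k + 1), D p j := by
    intro j
    rw [hE.leibniz, Finset.Nat.sum_antidiagonal_eq_sum_range_succ_mk]
    refine Finset.sum_congr rfl fun p hp => ?_
    rw [hE.comp, hneg, show e (k - p) (((-1 : ℤ) ^ j) • s ^ j)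
        = ((-1 : ℤ) ^ j) • e (k - p) (s ^ j) from (hE.hom (k - p)).map_zsmul _ _,
      hE.e_pow hs1 hs2 j (k - p), hD]
    simp only [nsmul_eq_mul, zsmul_eq_mul, smul_eq_mul]
    push_cast
    ring
  have hDsum : ∀ p, Summable (D p) := by
    intro p
    apply summable_of_cof hopen hb
    rw [Nat.cofinite_eq_atTop, hb.tendsto_right_iff]
    intro n _
    obtain ⟨N, hN⟩ := eventually_atTop.mp
      ((hb.tendsto_right_iff.mp (tendsto_e hE hopen hb c)) n trivial)
    filter_upwards [eventually_ge_atTop N] with j hj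
    exact Ideal.mul_mem_left _ _ (Ideal.mul_mem_right _ _ (hN _ (by omega)))
  have hEsum : ∀ p, HasSum (E p) (∑' j, D p j) := by
    intro p
    have hcomp : (E p) ∘ (fun j => j + p) = D p := by
      funext j
      simp [hEdef]
    have := ((add_left_injective p).hasSum_iff (f := E p) ?_).mp
      (by rw [hcomp]; exact (hDsum p).hasSum)
    · exact this
    · intro m hm
      rw [hEdef]
      simp only [Set.mem_range, not_exists] at hm
      have : ¬ p ≤ m := fun hpm => hm (m - p) (by omega)
      simp [this]
  have hstep : e k (∑' j : ℕ, e j c * (-s) ^ j)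
      = ∑' m : ℕ, ∑ p ∈ Finset.range (k + 1), E p m := by
    rw [← hmap.tsum_eq]
    calc ∑' j, e k (e j c * (-s) ^ j) = ∑' j, ∑ p ∈ Finset.range (k + 1), D p j := by
          exact tsum_congr hleib
      _ = ∑ p ∈ Finset.range (k + 1), ∑' j, D p j :=
          Summable.tsum_finsetSum fun p _ => hDsum p
      _ = ∑ p ∈ Finset.range (k + 1), ∑' m, E p m := by
          exact Finset.sum_congr rfl fun p _ => ((hEsum p).tsum_eq).symm
      _ = ∑' m, ∑ p ∈ Finset.range (k + 1), E p m :=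
          (Summable.tsum_finsetSum fun p _ => (hEsum p).summable).symm
  have hvanish : ∀ m : ℕ, ∑ p ∈ Finset.range (k + 1), E p m = 0 := by
    intro m
    rcases lt_or_ge m k with hmk | hkm
    · refine Finset.sum_eq_zero fun p hp => ?_
      rw [hEdef]
      simp only
      split_ifs with hpm
      · rw [hD]
        simp only
        rw [show (m - p).choose (k - p) = 0 from Nat.choose_eq_zero_of_lt (by omega)]
        simp
      · rfl
    · have hterm : ∀ p ∈ Finset.range (k + 1), E p m =
          ((-1 : B) ^ m * ((m.choose k : ℕ) : B) * (e m c * s ^ (m - k))) *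
            ((-1 : B) ^ p * ((k.choose p : ℕ) : B)) := by
        intro p hp
        rw [Finset.mem_range] at hp
        have hpk : p ≤ k := by omega
        have hpm : p ≤ m := by omega
        rw [hEdef]
        simp only [if_pos hpm]
        rw [hD]
        simp only
        rw [Nat.sub_add_cancel hpm, show m - p - (k - p) = m - k from by omega,
          Nat.choose_symm hpm]
        have hcm : m.choose p * (m - p).choose (k - p) = m.choose k * k.choose p :=
          (Nat.choose_mul (n := m) hpk).symm
        have hcast : ((m.choose p : ℕ) : B) * ((m - p).choose (k - p) : ℕ) =
            ((m.choose k : ℕ) : B) * ((k.choose p : ℕ) : B) := by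
          rw [← Nat.cast_mul, hcm, Nat.cast_mul]
        rw [neg_one_pow_sub' hpm]
        calc (-1 : B) ^ m * (-1 : B) ^ p * ((m.choose p : ℕ) : B) *
              ((m - p).choose (k - p) : ℕ) * (e m c * s ^ (m - k))
            = (-1 : B) ^ m * (-1 : B) ^ p *
              (((m.choose p : ℕ) : B) * ((m - p).choose (k - p) : ℕ)) *
              (e m c * s ^ (m - k)) := by ring
          _ = (-1 : B) ^ m * (-1 : B) ^ p *
              (((m.choose k : ℕ) : B) * ((k.choose p : ℕ) : B)) *
              (e m c * s ^ (m - k)) := by rw [hcast]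
          _ = (-1 : B) ^ m * ((m.choose k : ℕ) : B) * (e m c * s ^ (m - k)) *
              ((-1 : B) ^ p * ((k.choose p : ℕ) : B)) := by ring
      rw [Finset.sum_congr rfl hterm, ← Finset.mul_sum, alt_sum_cast,
        if_neg (by omega : ¬ k = 0), mul_zero]
  rw [hstep, tsum_congr hvanish, tsum_zero]

end Invariance
section Uniqueness
open Filter Topology
set_option linter.unusedSectionVars false
variable {B : Type*} [CommRing B] [UniformSpace B] [IsUniformAddGroup B] [IsTopologicalRing B]
variable {𝔞 : ℕ → Ideal B} {e : ℕ → B → B} {s : B}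

theorem e_mul_invariant (hE : ES B e) {x : B} (hx : ∀ q, 1 ≤ q → e q x = 0)
    (y : B) (j : ℕ) : e j (x * y) = x * e j y := by
  rw [hE.leibniz]
  rw [Finset.sum_eq_single (0, j)]
  · rw [hE.zeroth]
  · rintro ⟨p, q⟩ hmem hne
    rw [Finset.HasAntidiagonal.mem_antidiagonal] at hmem
    have hp : 1 ≤ p := by
      rcases Nat.eq_zero_or_pos p with rfl | h
      · exact absurd (by simpa using hmem) (by simpa using hne)
      · exact h
    rw [hx p hp, zero_mul]
  · intro h
    exact absurd (Finset.HasAntidiagonal.mem_antidiagonal.mpr (by omega)) h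

theorem vanish_zero [CompleteSpace B] [T2Space B] (hE : ES B e)
    (hs1 : e 1 s = 1) (hs2 : ∀ i, 2 ≤ i → e i s = 0)
    (hopen : ∀ n, IsOpen ((𝔞 n : Submodule B B) : Set B))
    (hb : (𝓝 (0 : B)).HasBasis (fun _ : ℕ => True) fun n => ((𝔞 n : Submodule B B) : Set B))
    (a : ℕ → B) (hinv : ∀ i j, 1 ≤ j → e j (a i) = 0)
    (ha : Tendsto a atTop (𝓝 0))
    (hsum : HasSum (fun i => a i * s ^ i) 0) : a 0 = 0 := by
  classical
  set t : ℕ × ℕ → B := fun q => e q.1 (a q.2 * s ^ q.2) * (-s) ^ q.1 with htdef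
  have hterm : ∀ q : ℕ × ℕ, t q = (a q.2 * (q.2.choose q.1 • s ^ (q.2 - q.1))) * (-s) ^ q.1 := by
    intro q
    rw [htdef]
    simp only
    rw [e_mul_invariant hE (fun p hp => hinv q.2 p hp), hE.e_pow hs1 hs2]
  have hsummable : Summable t := by
    apply summable_pair hopen hb
    intro n
    obtain ⟨N, hN⟩ := eventually_atTop.mp ((hb.tendsto_right_iff.mp ha) n trivial)
    refine ⟨N, fun p hp => ?_⟩
    rw [hterm]
    rcases le_or_gt N p.2 with h2 | h2
    · exact Ideal.mul_mem_right _ _ (Ideal.mul_mem_right _ _ (hN _ h2))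
    · have hgt : p.2 < p.1 := by omega
      rw [Nat.choose_eq_zero_of_lt hgt, zero_smul, mul_zero, zero_mul]
      exact Ideal.zero_mem _
  have hcol : ∀ j : ℕ, HasSum (fun i => t (j, i)) 0 := by
    intro j
    have h1 : HasSum (fun i => e j (a i * s ^ i)) 0 := by
      have := hsum.map (hE.hom j) (hE.continuous j)
      simpa [Function.comp_def, hE.map_zero'] using this
    have := h1.mul_right ((-s) ^ j)
    simpa using this
  obtain ⟨T, htot⟩ := hsummable
  have hT : T = 0 := by
    have := htot.prod_fiberwise (g := fun _ => (0 : B)) hcol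
    exact (this.unique hasSum_zero)
  rw [hT] at htot
  have hswap : HasSum (fun q : ℕ × ℕ => t (q.2, q.1)) 0 := by
    have : (fun q : ℕ × ℕ => t (q.2, q.1)) = t ∘ ⇑(Equiv.prodComm ℕ ℕ) := rfl
    rw [this, Equiv.hasSum_iff]
    exact htot
  have hrow : ∀ i : ℕ, HasSum (fun j => t (j, i)) (if i = 0 then a 0 else 0) := by
    intro i
    have hzero : ∀ j ∉ Finset.range (i + 1), t (j, i) = 0 := by
      intro j hj
      rw [Finset.mem_range] at hj
      rw [hterm]
      simp only
      rw [Nat.choose_eq_zero_of_lt (by omega), zero_smul, mul_zero, zero_mul]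
    have hfin : HasSum (fun j => t (j, i)) (∑ j ∈ Finset.range (i + 1), t (j, i)) :=
      hasSum_sum_of_ne_finset_zero hzero
    have hval : ∑ j ∈ Finset.range (i + 1), t (j, i) = if i = 0 then a 0 else 0 := by
      have hterm2 : ∀ j ∈ Finset.range (i + 1), t (j, i) =
          (a i * s ^ i) * ((-1 : B) ^ j * ((i.choose j : ℕ) : B)) := by
        intro j hj
        rw [Finset.mem_range] at hj
        rw [hterm]
        simp only
        rw [nsmul_eq_mul, neg_pow]
        have hpow : s ^ (i - j) * s ^ j = s ^ i := by
          rw [← pow_add]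
          congr 1
          omega
        calc a i * (((i.choose j : ℕ) : B) * s ^ (i - j)) * ((-1 : B) ^ j * s ^ j)
            = a i * ((i.choose j : ℕ) : B) * (-1 : B) ^ j * (s ^ (i - j) * s ^ j) := by ring
          _ = a i * ((i.choose j : ℕ) : B) * (-1 : B) ^ j * s ^ i := by rw [hpow]
          _ = (a i * s ^ i) * ((-1 : B) ^ j * ((i.choose j : ℕ) : B)) := by ring
      rw [Finset.sum_congr rfl hterm2, ← Finset.mul_sum, alt_sum_cast]
      rcases Nat.eq_zero_or_pos i with rfl | hi
      · simp [hE.zeroth]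
      · have : i ≠ 0 := by omega
        simp [this]
    rw [hval] at hfin
    exact hfin
  have hfinal : HasSum (fun i : ℕ => if i = 0 then a 0 else 0) 0 :=
    hswap.prod_fiberwise hrow
  exact (hasSum_ite_eq 0 (a 0)).unique hfinal

theorem vanish_all [CompleteSpace B] [T2Space B] (hE : ES B e)
    (hs1 : e 1 s = 1) (hs2 : ∀ i, 2 ≤ i → e i s = 0)
    (hopen : ∀ n, IsOpen ((𝔞 n : Submodule B B) : Set B))
    (hb : (𝓝 (0 : B)).HasBasis (fun _ : ℕ => True) fun n => ((𝔞 n : Submodule B B) : Set B))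
    (a : ℕ → B) (hinv : ∀ i j, 1 ≤ j → e j (a i) = 0)
    (ha : Tendsto a atTop (𝓝 0))
    (hsum : HasSum (fun i => a i * s ^ i) 0) : ∀ i, a i = 0 := by
  intro k
  set b : ℕ → B := fun i => (((i + k).choose k : ℕ) : B) * a (i + k) with hbdef
  have hbinv : ∀ i j, 1 ≤ j → e j (b i) = 0 := by
    intro i j hj
    rw [hbdef]
    simp only
    rw [← nsmul_eq_mul, show e j ((i + k).choose k • a (i + k))
        = (i + k).choose k • e j (a (i + k)) from (hE.hom j).map_nsmul _ _,
      hinv _ _ hj, smul_zero]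
  have hbtend : Tendsto b atTop (𝓝 0) := by
    rw [hb.tendsto_right_iff]
    intro n _
    obtain ⟨N, hN⟩ := eventually_atTop.mp ((hb.tendsto_right_iff.mp ha) n trivial)
    filter_upwards [eventually_ge_atTop N] with i hi
    exact Ideal.mul_mem_left _ _ (hN _ (by omega))
  have hbsum : HasSum (fun i => b i * s ^ i) 0 := by
    have h1 : HasSum (fun i => e k (a i * s ^ i)) 0 := by
      have := hsum.map (hE.hom k) (hE.continuous k)
      simpa [Function.comp_def, hE.map_zero'] using this
    have h2 : HasSum (fun i => a i * ((i.choose k : ℕ) • s ^ (i - k))) 0 := by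
      have heq : (fun i => e k (a i * s ^ i)) =
          fun i => a i * ((i.choose k : ℕ) • s ^ (i - k)) := by
        funext i
        rw [e_mul_invariant hE (fun p hp => hinv i p hp), hE.e_pow hs1 hs2]
      rwa [heq] at h1
    set F : ℕ → B := fun i => a i * ((i.choose k : ℕ) • s ^ (i - k)) with hF
    have hcomp : (F ∘ (fun i => i + k)) = fun i => b i * s ^ i := by
      funext i
      rw [hF, hbdef]
      simp only [Function.comp_apply, nsmul_eq_mul, Nat.add_sub_cancel]
      ring
    have := ((add_left_injective k).hasSum_iff (f := F) ?_).mpr h2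
    · rwa [hcomp] at this
    · intro x hx
      simp only [Set.mem_range, not_exists] at hx
      have hxk : x < k := by
        by_contra hcon
        exact hx (x - k) (by omega)
      rw [hF]
      simp only
      rw [Nat.choose_eq_zero_of_lt hxk, zero_smul, mul_zero]
  have := vanish_zero hE hs1 hs2 hopen hb b hbinv hbtend hbsum
  rw [hbdef] at this
  simpa using this

end Uniqueness
section Rho
open Filter Topology
set_option linter.unusedSectionVars false
variable {B : Type*} [CommRing B] [UniformSpace B] [IsUniformAddGroup B] [IsTopologicalRing B]
variable {𝔞 : ℕ → Ideal B} {e : ℕ → B → B} {s : B}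

theorem comp_mem_ideal (hE : ES B e) {d : B} {n : ℕ} {i : ℕ}
    (h : ∀ m, i ≤ m → e m d ∈ 𝔞 n) : ∀ j, e j (e i d) ∈ 𝔞 n := by
  intro j
  rw [hE.comp, nsmul_eq_mul]
  exact Ideal.mul_mem_left _ _ (h _ (by omega))

theorem rho_invariant [CompleteSpace B] [T2Space B] (hE : ES B e)
    (hs1 : e 1 s = 1) (hs2 : ∀ i, 2 ≤ i → e i s = 0)
    (hopen : ∀ n, IsOpen ((𝔞 n : Submodule B B) : Set B))
    (hb : (𝓝 (0 : B)).HasBasis (fun _ : ℕ => True) fun n => ((𝔞 n : Submodule B B) : Set B))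
    (b : B) : ∀ i j, 1 ≤ j → e j (∑' m : ℕ, e m (e i b) * (-s) ^ m) = 0 := fun i j hj =>
  R_invariant hE hs1 hs2 hopen hb (e i b) j hj

theorem rho_tendsto [CompleteSpace B] (hE : ES B e)
    (hopen : ∀ n, IsOpen ((𝔞 n : Submodule B B) : Set B))
    (hb : (𝓝 (0 : B)).HasBasis (fun _ : ℕ => True) fun n => ((𝔞 n : Submodule B B) : Set B))
    (b : B) :
    Tendsto (fun i => ∑' m : ℕ, e m (e i b) * (-s) ^ m) atTop (𝓝 0) := by
  rw [hb.tendsto_right_iff]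
  intro n _
  obtain ⟨N, hN⟩ := eventually_atTop.mp ((hb.tendsto_right_iff.mp (tendsto_e hE hopen hb b)) n trivial)
  filter_upwards [eventually_ge_atTop N] with i hi
  exact R_mem_ideal hE hopen hb (comp_mem_ideal hE (fun m hm => hN m (by omega)))

theorem rho_mem [CompleteSpace B] (hE : ES B e)
    (hopen : ∀ n, IsOpen ((𝔞 n : Submodule B B) : Set B))
    (hb : (𝓝 (0 : B)).HasBasis (fun _ : ℕ => True) fun n => ((𝔞 n : Submodule B B) : Set B))
    {d : B} {n : ℕ} (hd : ∀ m, e m d ∈ 𝔞 n) (i : ℕ) :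
    (∑' m : ℕ, e m (e i d) * (-s) ^ m) ∈ 𝔞 n :=
  R_mem_ideal hE hopen hb (comp_mem_ideal hE (fun m _ => hd m))

theorem rho_sub [CompleteSpace B] [T2Space B] (hE : ES B e)
    (hopen : ∀ n, IsOpen ((𝔞 n : Submodule B B) : Set B))
    (hb : (𝓝 (0 : B)).HasBasis (fun _ : ℕ => True) fun n => ((𝔞 n : Submodule B B) : Set B))
    (x y : B) (i : ℕ) :
    (∑' m : ℕ, e m (e i (x - y)) * (-s) ^ m) =
      (∑' m : ℕ, e m (e i x) * (-s) ^ m) - ∑' m : ℕ, e m (e i y) * (-s) ^ m := by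
  have hx := summable_R (𝔞 := 𝔞) (s := s) hE hopen hb (e i x)
  have hy := summable_R (𝔞 := 𝔞) (s := s) hE hopen hb (e i y)
  rw [← Summable.tsum_sub hx hy]
  apply tsum_congr
  intro m
  rw [hE.map_sub' i, hE.map_sub' m, sub_mul]

theorem summable_coeff [CompleteSpace B]
    (hopen : ∀ n, IsOpen ((𝔞 n : Submodule B B) : Set B))
    (hb : (𝓝 (0 : B)).HasBasis (fun _ : ℕ => True) fun n => ((𝔞 n : Submodule B B) : Set B))
    {a : ℕ → B} (ha : Tendsto a atTop (𝓝 0)) :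
    Summable (fun i => a i * s ^ i) := by
  apply summable_of_cof hopen hb
  rw [Nat.cofinite_eq_atTop]
  exact tendsto_mul_absorb hb ha

/-- uniqueness of coefficients -/
theorem coeff_eq_rho [CompleteSpace B] [T2Space B] (hE : ES B e)
    (hs1 : e 1 s = 1) (hs2 : ∀ i, 2 ≤ i → e i s = 0)
    (hopen : ∀ n, IsOpen ((𝔞 n : Submodule B B) : Set B))
    (hb : (𝓝 (0 : B)).HasBasis (fun _ : ℕ => True) fun n => ((𝔞 n : Submodule B B) : Set B))
    {a : ℕ → B} {b : B} (hinv : ∀ i j, 1 ≤ j → e j (a i) = 0)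
    (ha : Tendsto a atTop (𝓝 0)) (hsum : HasSum (fun i => a i * s ^ i) b) :
    ∀ i, a i = ∑' m : ℕ, e m (e i b) * (-s) ^ m := by
  have hdiff := vanish_all hE hs1 hs2 hopen hb
    (fun i => a i - ∑' m : ℕ, e m (e i b) * (-s) ^ m) ?_ ?_ ?_
  · intro i
    exact sub_eq_zero.mp (hdiff i)
  · intro i j hj
    rw [hE.map_sub' j, hinv i j hj, rho_invariant hE hs1 hs2 hopen hb b i j hj, sub_zero]
  · have := ha.sub (rho_tendsto (𝔞 := 𝔞) (s := s) hE hopen hb b)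
    rwa [sub_zero] at this
  · have h1 := hasSum_taylor hE hs1 hs2 hopen hb b
    have h2 := hsum.sub h1
    rw [sub_self] at h2
    have heq : (fun i => a i * s ^ i - (∑' m : ℕ, e m (e i b) * (-s) ^ m) * s ^ i) =
        fun i => (a i - ∑' m : ℕ, e m (e i b) * (-s) ^ m) * s ^ i := by
      funext i; rw [sub_mul]
    rwa [heq] at h2

end Rho

end helpers

/-- given a restricted exponential system `(eᵢ)` on `B` with a slice `s`
(`e₁(s) = 1`, `eᵢ(s) = 0` for `i ≥ 2`), with Dixmier–Reynolds operator
`R_s(b) = ∑ᵢ eᵢ(b)·(-s)ⁱ`: (i) for every `b` the family `(R_s(eᵢ(b))·sⁱ)` is summable with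
sum `b`; (ii) an invariant coefficient family tending to `0` with `∑ aᵢ sⁱ = 0` vanishes;
consequently the evaluation map `θ : B^e{S} → B`, `∑ aᵢ Sⁱ ↦ ∑ aᵢ sⁱ`, defined on the
ring `B^e{S}` of restricted power series (invariant coefficient families tending to `0`,
with the topology induced by uniform convergence) is an isomorphism of topological
`B^e`-algebras: bijective, continuous, open, additive, multiplicative for the Cauchy
product, and `B^e`-linear. -/
theorem slice_gives_restricted_polynomial_ring
    (A B : Type*) [CommRing A] [UniformSpace A] [IsUniformAddGroup A] [IsTopologicalRing A]
    [CompleteSpace A] [T2Space A]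
    [CommRing B] [Algebra A B] [UniformSpace B] [IsUniformAddGroup B] [IsTopologicalRing B]
    [CompleteSpace B] [T2Space B]
    (hA : HasLinearRingTopology A) (hB : HasLinearRingTopology B)
    (halg : Continuous (algebraMap A B))
    (e : ℕ → B → B) (he : IsRestrictedExpSystem A B e)
    (s : B) (hs1 : e 1 s = 1) (hs2 : ∀ i, 2 ≤ i → e i s = 0) :
    let RS := {a : UniformFun ℕ B // (∀ i j : ℕ, 1 ≤ j → e j (UniformFun.toFun a i) = 0) ∧
      Tendsto (UniformFun.toFun a) atTop (nhds 0)}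
    let θ : RS → B := fun a => ∑' i, UniformFun.toFun a.1 i * s ^ i
    (∀ b : B, HasSum (fun i => (∑' j, e j (e i b) * (-s) ^ j) * s ^ i) b) ∧
      (∀ a : ℕ → B, (∀ i j : ℕ, 1 ≤ j → e j (a i) = 0) → Tendsto a atTop (nhds 0) →
        HasSum (fun i => a i * s ^ i) 0 → ∀ i, a i = 0) ∧
      Function.Bijective θ ∧ Continuous θ ∧ IsOpenMap θ ∧
      (∀ a b : RS, θ a + θ b =
        ∑' n, (UniformFun.toFun a.1 n + UniformFun.toFun b.1 n) * s ^ n) ∧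
      (∀ a b : RS, θ a * θ b =
        ∑' n, (∑ p ∈ Finset.HasAntidiagonal.antidiagonal n,
          UniformFun.toFun a.1 p.1 * UniformFun.toFun b.1 p.2) * s ^ n) ∧
      (∀ c : B, (∀ j, 1 ≤ j → e j c = 0) → ∀ a : RS,
        c * θ a = ∑' n, (c * UniformFun.toFun a.1 n) * s ^ n) := by
  
  classical
  intro RS θ
  obtain ⟨𝔞, hopen, hb⟩ := linear_basis hB
  have hE : ES B e := ⟨he.map_add, he.continuous, he.zeroth, he.leibniz, he.comp, he.conv_zero⟩
  set ρ : B → ℕ → B := fun b i => ∑' m : ℕ, e m (e i b) * (-s) ^ m with hρ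
  have hRS_sum : ∀ a : RS, HasSum (fun i => UniformFun.toFun a.1 i * s ^ i) (θ a) :=
    fun a => (summable_coeff hopen hb a.2.2).hasSum
  have hσmem : ∀ b : B, (∀ i j : ℕ, 1 ≤ j →
        e j (UniformFun.toFun (UniformFun.ofFun (ρ b)) i) = 0) ∧
      Tendsto (UniformFun.toFun (UniformFun.ofFun (ρ b))) atTop (𝓝 0) := fun b =>
    ⟨rho_invariant hE hs1 hs2 hopen hb b, rho_tendsto hE hopen hb b⟩
  set σ : B → RS := fun b => ⟨UniformFun.ofFun (ρ b), hσmem b⟩ with hσ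
  have hθσ : ∀ b : B, θ (σ b) = b := fun b =>
    (hasSum_taylor hE hs1 hs2 hopen hb b).tsum_eq
  have hcoeff : ∀ a : RS, ∀ i, UniformFun.toFun a.1 i = ρ (θ a) i := fun a =>
    coeff_eq_rho hE hs1 hs2 hopen hb a.2.1 a.2.2 (hRS_sum a)
  have hinj : Function.Injective θ := by
    intro a a' h
    apply Subtype.ext
    funext i
    show UniformFun.toFun a.1 i = UniformFun.toFun a'.1 i
    rw [hcoeff a i, hcoeff a' i, h]
  -- bases
  have hUB : (uniformity B).HasBasis (fun _ : ℕ => True)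
      (fun n => (fun p : B × B => p.2 - p.1) ⁻¹' ((𝔞 n : Submodule B B) : Set B)) := by
    rw [uniformity_eq_comap_nhds_zero]
    exact hb.comap _
  have hnhds : ∀ a : RS, (𝓝 a).HasBasis (fun _ : ℕ => True)
      (fun n => Subtype.val ⁻¹' {g | (a.1, g) ∈ UniformFun.gen ℕ B
        ((fun p : B × B => p.2 - p.1) ⁻¹' ((𝔞 n : Submodule B B) : Set B))}) := by
    intro a
    rw [nhds_induced]
    exact (UniformFun.hasBasis_nhds_of_basis ℕ B a.1 hUB).comap _
  have hnhdsB : ∀ x : B, (𝓝 x).HasBasis (fun _ : ℕ => True)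
      (fun n => (fun y => y - x) ⁻¹' ((𝔞 n : Submodule B B) : Set B)) := by
    intro x
    rw [← nhds_translation_sub x]
    exact hb.comap _
  have hdiff_hasSum : ∀ a a' : RS, HasSum
      (fun i => (UniformFun.toFun a'.1 i - UniformFun.toFun a.1 i) * s ^ i) (θ a' - θ a) := by
    intro a a'
    have h1 := (hRS_sum a').sub (hRS_sum a)
    have heq : (fun i => UniformFun.toFun a'.1 i * s ^ i - UniformFun.toFun a.1 i * s ^ i) =
        fun i => (UniformFun.toFun a'.1 i - UniformFun.toFun a.1 i) * s ^ i :=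
      funext fun i => (sub_mul _ _ _).symm
    rwa [heq] at h1
  have hcont : Continuous θ := by
    rw [continuous_iff_continuousAt]
    intro a
    rw [ContinuousAt, (hnhds a).tendsto_iff (hnhdsB (θ a))]
    intro n _
    refine ⟨n, trivial, fun a' ha' => ?_⟩
    simp only [Set.mem_preimage, Set.mem_setOf_eq] at ha' ⊢
    exact tsum_mem_ideal hopen n (hdiff_hasSum a a')
      (fun i => Ideal.mul_mem_right _ _ (ha' i))
  have hopenmap : IsOpenMap θ := by
    intro O hO
    rw [isOpen_iff_mem_nhds]
    rintro y ⟨aO, haO, rfl⟩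
    obtain ⟨n, -, hball⟩ := ((hnhds aO).mem_iff).mp (hO.mem_nhds haO)
    obtain ⟨H, hHopen, n₀, hH⟩ := hE.conv_zero 0 (𝔞 n).toAddSubgroup (hopen n)
    set U : Set B := (H : Set B) ∩ ⋂ m ∈ Finset.range n₀, (e m) ⁻¹' ((𝔞 n : Submodule B B) : Set B)
      with hUdef
    have hU0 : U ∈ 𝓝 (0 : B) := by
      refine Filter.inter_mem (hHopen.mem_nhds H.zero_mem) ?_
      refine (Filter.biInter_mem (Finset.range n₀).finite_toSet).mpr fun m _ => ?_
      refine (hE.continuous m).continuousAt.preimage_mem_nhds ?_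
      rw [hE.map_zero']
      exact (hopen n).mem_nhds (𝔞 n).zero_mem
    have hUmem : ∀ d ∈ U, ∀ m, e m d ∈ 𝔞 n := by
      intro d hd m
      rcases le_or_gt n₀ m with hm | hm
      · have := hH d hd.1 m hm
        simpa using this
      · have := Set.mem_iInter₂.mp hd.2 m (Finset.mem_range.mpr hm)
        exact this
    have hnb : (fun z => z - θ aO) ⁻¹' U ∈ 𝓝 (θ aO) := by
      rw [← nhds_translation_sub (θ aO)]
      exact Filter.preimage_mem_comap hU0
    refine Filter.mem_of_superset hnb ?_
    intro y hy
    refine ⟨σ y, hball ?_, hθσ y⟩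
    simp only [Set.mem_preimage, Set.mem_setOf_eq]
    intro i
    show UniformFun.toFun (σ y).1 i - UniformFun.toFun aO.1 i ∈ 𝔞 n
    have h1 : UniformFun.toFun (σ y).1 i = ρ y i := rfl
    rw [h1, hcoeff aO i]
    have h2 : ρ y i - ρ (θ aO) i = ρ (y - θ aO) i := (rho_sub hE hopen hb y (θ aO) i).symm
    rw [h2]
    exact rho_mem hE hopen hb (hUmem _ hy) i
  refine ⟨fun b => hasSum_taylor hE hs1 hs2 hopen hb b,
    fun a hinv ha hsum => vanish_all hE hs1 hs2 hopen hb a hinv ha hsum,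
    ⟨hinj, fun b => ⟨σ b, hθσ b⟩⟩, hcont, hopenmap, ?_, ?_, ?_⟩
  · -- additivity
    intro a b
    have h := (hRS_sum a).add (hRS_sum b)
    have heq : (fun n => UniformFun.toFun a.1 n * s ^ n + UniformFun.toFun b.1 n * s ^ n) =
        fun n => (UniformFun.toFun a.1 n + UniformFun.toFun b.1 n) * s ^ n :=
      funext fun n => (add_mul _ _ _).symm
    rw [heq] at h
    exact h.tsum_eq.symm
  · -- multiplicativity
    intro a b
    have hsa := summable_coeff (𝔞 := 𝔞) (s := s) hopen hb a.2.2
    have hsb := summable_coeff (𝔞 := 𝔞) (s := s) hopen hb b.2.2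
    have hprod : Summable (fun p : ℕ × ℕ =>
        (UniformFun.toFun a.1 p.1 * s ^ p.1) * (UniformFun.toFun b.1 p.2 * s ^ p.2)) := by
      apply summable_pair hopen hb
      intro n
      obtain ⟨Na, hNa⟩ := eventually_atTop.mp ((hb.tendsto_right_iff.mp a.2.2) n trivial)
      obtain ⟨Nb, hNb⟩ := eventually_atTop.mp ((hb.tendsto_right_iff.mp b.2.2) n trivial)
      refine ⟨max Na Nb, fun p hp => ?_⟩
      rcases hp with h1 | h2
      · exact Ideal.mul_mem_right _ _ (Ideal.mul_mem_right _ _ (hNa _ (by omega)))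
      · exact Ideal.mul_mem_left _ _ (Ideal.mul_mem_right _ _ (hNb _ (by omega)))
    have hmul := (hRS_sum a).mul (hRS_sum b) hprod
    have hsig := (Equiv.hasSum_iff (Finset.HasAntidiagonal.sigmaAntidiagonalEquivProd (A := ℕ))).mpr hmul
    have hfib : ∀ n : ℕ, HasSum (fun c : {x // x ∈ Finset.HasAntidiagonal.antidiagonal n} =>
        (UniformFun.toFun a.1 (c.1).1 * s ^ (c.1).1) *
          (UniformFun.toFun b.1 (c.1).2 * s ^ (c.1).2))
        ((∑ p ∈ Finset.HasAntidiagonal.antidiagonal n,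
          UniformFun.toFun a.1 p.1 * UniformFun.toFun b.1 p.2) * s ^ n) := by
      intro n
      have hval : ∑ p ∈ Finset.HasAntidiagonal.antidiagonal n,
          (UniformFun.toFun a.1 p.1 * s ^ p.1) * (UniformFun.toFun b.1 p.2 * s ^ p.2) =
          (∑ p ∈ Finset.HasAntidiagonal.antidiagonal n,
            UniformFun.toFun a.1 p.1 * UniformFun.toFun b.1 p.2) * s ^ n := by
        rw [Finset.sum_mul]
        refine Finset.sum_congr rfl fun p hp => ?_
        rw [Finset.HasAntidiagonal.mem_antidiagonal] at hp
        rw [← hp, pow_add]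
        ring
      have := hasSum_fintype (fun c : {x // x ∈ Finset.HasAntidiagonal.antidiagonal n} =>
        (UniformFun.toFun a.1 (c.1).1 * s ^ (c.1).1) *
          (UniformFun.toFun b.1 (c.1).2 * s ^ (c.1).2))
      rwa [Finset.sum_coe_sort (Finset.HasAntidiagonal.antidiagonal n)
        (fun p : ℕ × ℕ => (UniformFun.toFun a.1 p.1 * s ^ p.1) *
          (UniformFun.toFun b.1 p.2 * s ^ p.2)), hval] at this
    have hfinal := hsig.sigma hfib
    exact hfinal.tsum_eq.symm
  · -- linearity
    intro c hc a
    have h := (hRS_sum a).mul_left c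
    have heq : (fun n => c * (UniformFun.toFun a.1 n * s ^ n)) =
        fun n => (c * UniformFun.toFun a.1 n) * s ^ n :=
      funext fun n => (mul_assoc _ _ _).symm
    rw [heq] at h
    exact h.tsum_eq.symm
end

section
/- Let G be a topological abelian group and G' a Hausdorff topological abelian group, both with linear topologies admitting countable fundamental systems of open subgroups, and let c : G → Ĝ and c' : G' → Ĝ' be their separated completions. Let f_n : G → G' (n ∈ ℕ) be continuous homomorphisms converging continuously to a homomorphism f : G → G'. Then the sequence (c' ∘ f_n) converges continuously to c' ∘ f, and the sequence (f̂_n) of continuous homomorphisms Ĝ → Ĝ' obtained by extending the maps c' ∘ f_n through the universal property of the separated completion converges continuously to the continuous extension f̂ : Ĝ → Ĝ' of c' ∘ f. -/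
open Filter Topology

/-- A sequence of maps between topological additive groups *converges pointwise* to `f₀`. -/
def ConvergesPointwiseTo {G G' : Type*} [AddCommGroup G] [TopologicalSpace G]
    [AddCommGroup G'] [TopologicalSpace G'] (f : ℕ → G → G') (f₀ : G → G') : Prop :=
  ∀ g : G, ∀ H' : AddSubgroup G', IsOpen (H' : Set G') →
    ∃ n₀ : ℕ, ∀ n, n₀ ≤ n → f n g - f₀ g ∈ H'

/-- A topological abelian group has a linear topology admitting a countable decreasing
fundamental system of open subgroups starting with the whole group. -/
def HasLinearGroupTopology (G : Type*) [AddCommGroup G] [TopologicalSpace G] : Prop :=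
  ∃ H : ℕ → AddSubgroup G, H 0 = ⊤ ∧ (∀ m n : ℕ, n ≤ m → H m ≤ H n) ∧
    (∀ n, IsOpen (H n : Set G)) ∧ ∀ s ∈ nhds (0 : G), ∃ n, (H n : Set G) ⊆ s

open UniformSpace in
/-- The closure of the image of an open subgroup in the completion is an open subgroup. -/
lemma aux_isOpen_closure_map {G : Type*} [AddCommGroup G] [UniformSpace G] [IsUniformAddGroup G]
    (H : AddSubgroup G) (hH : IsOpen (H : Set G)) :
    IsOpen (((H.map (Completion.toCompl)).topologicalClosure : Set (Completion G))) := by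
  apply AddSubgroup.isOpen_of_mem_nhds
  have h0 : (H : Set G) ∈ nhds (0 : G) := hH.mem_nhds H.zero_mem
  have h1 := (Completion.isDenseInducing_coe (α := G)).closure_image_mem_nhds h0
  rw [Completion.coe_zero] at h1
  have : (((H.map (Completion.toCompl)).topologicalClosure : Set (Completion G)))
      = closure (((↑) : G → Completion G) '' (H : Set G)) := by
    rw [AddSubgroup.topologicalClosure_coe, AddSubgroup.coe_map]
    rfl
  rwa [this]

set_option maxHeartbeats 1000000 in
open UniformSpace in
/-- continuous convergence is preserved by composing with the separated
completion map of the target and by extending to the separated completions: if `(fₙ)`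
converges continuously to `f`, then `(c' ∘ fₙ)` converges continuously to `c' ∘ f`, and
the extensions `f̂ₙ : Ĝ → Ĝ'` converge continuously to `f̂`. -/
theorem convergesContinuously_completion
    (G G' : Type*) [AddCommGroup G] [UniformSpace G] [IsUniformAddGroup G]
    [AddCommGroup G'] [UniformSpace G'] [IsUniformAddGroup G'] [T2Space G']
    (hG : HasLinearGroupTopology G) (hG' : HasLinearGroupTopology G')
    (f : ℕ → G →+ G') (hf : ∀ n, Continuous (f n)) (f₀ : G →+ G')
    (hconv : ConvergesContinuouslyTo (fun n x => f n x) f₀) :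
    ConvergesContinuouslyTo (fun n x => ((f n x : G') : Completion G'))
        (fun x => ((f₀ x : G') : Completion G')) ∧
      ConvergesContinuouslyTo (fun n => Completion.map (f n)) (Completion.map f₀) := by
  -- Part 1: composition with the completion map of the target.
  have part1 : ConvergesContinuouslyTo (fun n x => ((f n x : G') : Completion G'))
      (fun x => ((f₀ x : G') : Completion G')) := by
    intro g Kc hKc
    have hH'open : IsOpen ((Kc.comap (Completion.toCompl (α := G')) : AddSubgroup G') : Set G') :=
      hKc.preimage Completion.continuous_toCompl
    obtain ⟨H, hHopen, n₀, hn₀⟩ := hconv g _ hH'open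
    refine ⟨H, hHopen, n₀, fun x hx n hn => ?_⟩
    have h1 := hn₀ x hx n hn
    have h2 : ((f n (g + x) - f₀ (g + x) : G') : Completion G') ∈ Kc := h1
    rwa [Completion.coe_sub] at h2
  refine ⟨part1, ?_⟩
  -- `f₀` is continuous.
  have hf₀ : Continuous f₀ := by
    apply continuous_of_continuousAt_zero f₀
    rw [ContinuousAt, map_zero]
    intro s hs
    obtain ⟨K, _, _, Kopen, Kbasis⟩ := hG'
    obtain ⟨k, hk⟩ := Kbasis s hs
    obtain ⟨H, hHopen, n₀, hn₀⟩ := hconv 0 (K k) (Kopen k)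
    rw [Filter.mem_map]
    have hmem : ((H : Set G) ∩ (f n₀) ⁻¹' (K k)) ∈ nhds (0 : G) := by
      apply Filter.inter_mem (hHopen.mem_nhds H.zero_mem)
      apply ((Kopen k).preimage (hf n₀)).mem_nhds
      simp [map_zero]
    refine Filter.mem_of_superset hmem ?_
    rintro x ⟨hx1, hx2⟩
    apply hk
    have h1 := hn₀ x hx1 n₀ le_rfl
    rw [zero_add] at h1
    have : f₀ x = f n₀ x - (f n₀ x - f₀ x) := by abel
    rw [this]
    exact (K k).sub_mem hx2 h1
  -- the extensions agree with the bundled completions.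
  have hmapeq : ∀ (g : G →+ G') (hg : Continuous g),
      Completion.map (g : G → G') = ⇑(g.completion hg) := by
    intro g hg
    apply Completion.ext Completion.continuous_map (AddMonoidHom.continuous_completion g hg)
    intro a
    rw [Completion.map_coe (uniformContinuous_addMonoidHom_of_continuous hg),
      AddMonoidHom.completion_coe]
  -- Key: continuous convergence of the extensions at points of the dense image.
  have key : ∀ g : G, ∀ Kc : AddSubgroup (Completion G'), IsOpen (Kc : Set (Completion G')) →
      ∃ Kh : AddSubgroup (Completion G), IsOpen (Kh : Set (Completion G)) ∧ ∃ n₀ : ℕ,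
        ∀ xc ∈ Kh, ∀ n, n₀ ≤ n →
          Completion.map (f n) ((g : Completion G) + xc)
            - Completion.map f₀ ((g : Completion G) + xc) ∈ Kc := by
    intro g Kc hKc
    have hH'open : IsOpen ((Kc.comap (Completion.toCompl (α := G')) : AddSubgroup G') : Set G') :=
      hKc.preimage Completion.continuous_toCompl
    obtain ⟨H, hHopen, n₀, hn₀⟩ := hconv g _ hH'open
    refine ⟨(H.map (Completion.toCompl)).topologicalClosure, ?_, n₀, ?_⟩
    · exact aux_isOpen_closure_map H hHopen
    intro xc hxc n hn
    have hclosed : IsClosed (Kc : Set (Completion G')) := Kc.isClosed_of_isOpen hKc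
    set Φ : Completion G → Completion G' := fun yc =>
      Completion.map (f n) ((g : Completion G) + yc)
        - Completion.map f₀ ((g : Completion G) + yc) with hΦ
    have hcont : Continuous Φ := by
      apply Continuous.sub
      · exact Completion.continuous_map.comp (continuous_const.add continuous_id)
      · exact Completion.continuous_map.comp (continuous_const.add continuous_id)
    have hmaps : Set.MapsTo Φ (((↑) : G → Completion G) '' (H : Set G))
        (Kc : Set (Completion G')) := by
      rintro _ ⟨x, hx, rfl⟩
      have h1 := hn₀ x hx n hn
      have h2 : ((f n (g + x) - f₀ (g + x) : G') : Completion G') ∈ Kc := h1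
      rw [Completion.coe_sub] at h2
      have e1 : (g : Completion G) + (x : Completion G) = ((g + x : G) : Completion G) :=
        (Completion.coe_add g x).symm
      have e2 : Φ (x : Completion G) = ((f n (g + x) : G') : Completion G')
          - ((f₀ (g + x) : G') : Completion G') := by
        rw [hΦ]
        simp only [e1]
        rw [Completion.map_coe (uniformContinuous_addMonoidHom_of_continuous (hf n)),
          Completion.map_coe (uniformContinuous_addMonoidHom_of_continuous hf₀)]
      rw [e2]
      exact h2
    have hhxc2 : xc ∈ closure (((↑) : G → Completion G) '' (H : Set G)) := by
      have : ((H.map (Completion.toCompl)).topologicalClosure : Set (Completion G))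
          = closure (((↑) : G → Completion G) '' (H : Set G)) := by
        rw [AddSubgroup.topologicalClosure_coe, AddSubgroup.coe_map]
        rfl
      rwa [← this]
    have := (hmaps.closure hcont) hhxc2
    rwa [hclosed.closure_eq] at this
  -- Part 2: continuous convergence everywhere via additivity.
  intro gc Kc hKc
  obtain ⟨Kc0, hKc0open, n₀, h₀⟩ := key 0 Kc hKc
  -- choose `g` with `↑g - gc ∈ Kc0`, using density of the image.
  obtain ⟨g, hg⟩ : ∃ g : G, (g : Completion G) - gc ∈ Kc0 := by
    have hopen : IsOpen {x : Completion G | x - gc ∈ Kc0} :=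
      hKc0open.preimage (continuous_id.sub continuous_const)
    have hne : {x : Completion G | x - gc ∈ Kc0}.Nonempty :=
      ⟨gc, by simp [Kc0.zero_mem]⟩
    obtain ⟨g, hg⟩ := Completion.denseRange_coe.exists_mem_open hopen hne
    exact ⟨g, hg⟩
  obtain ⟨Kc1, hKc1open, n₁, h₁⟩ := key g Kc hKc
  refine ⟨Kc0 ⊓ Kc1, (hKc0open.inter hKc1open), max n₀ n₁, ?_⟩
  rintro xc ⟨hxc₀, hxc₁⟩ n hn
  have hA := h₁ xc hxc₁ n (le_trans (le_max_right n₀ n₁) hn)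
  have hB : Completion.map (f n) (gc - (g : Completion G))
      - Completion.map f₀ (gc - (g : Completion G)) ∈ Kc := by
    have hmem : gc - (g : Completion G) ∈ Kc0 := by
      have := Kc0.neg_mem hg
      rwa [neg_sub] at this
    have := h₀ (gc - (g : Completion G)) hmem n (le_trans (le_max_left n₀ n₁) hn)
    rwa [Completion.coe_zero, zero_add] at this
  -- additivity of the extensions.
  simp only [hmapeq (f n) (hf n), hmapeq f₀ hf₀] at hA hB ⊢
  have hsplit : gc + xc = ((g : Completion G) + xc) + (gc - (g : Completion G)) := by abel
  have : ((f n).completion (hf n)) (gc + xc) - (f₀.completion hf₀) (gc + xc)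
      = (((f n).completion (hf n)) ((g : Completion G) + xc)
          - (f₀.completion hf₀) ((g : Completion G) + xc))
        + (((f n).completion (hf n)) (gc - (g : Completion G))
          - (f₀.completion hf₀) (gc - (g : Completion G))) := by
    simp only [hsplit, map_add]
    abel
  rw [this]
  exact Kc.add_mem hA hB
end

section
/- Let G be a topological abelian group and G' a Hausdorff topological abelian group, both with linear topologies admitting countable fundamental systems of open subgroups, and let c' : G' → Ĝ' be the separated completion of G'. Let h_n : G → G' (n ∈ ℕ) be continuous homomorphisms converging continuously to the zero homomorphism. Then for every g ∈ G the family (c'(h_n(g)))_{n∈ℕ} is summable in Ĝ', the map s : G → Ĝ' defined by s(g) = ∑_{n∈ℕ} c'(h_n(g)) is a continuous homomorphism, and the sequence of partial sums s_N = ∑_{n=0}^{N} c' ∘ h_n converges continuously to s. -/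
set_option maxHeartbeats 1000000


open Filter Topology

open UniformSpace in
/-- If each term of a summable family lies in a closed additive subgroup, so does the sum. -/
theorem tsum_mem_of_forall_mem {α : Type*} [AddCommGroup α] [UniformSpace α]
    [IsUniformAddGroup α] {f : ℕ → α} (hf : Summable f) (K : AddSubgroup α)
    (hK : IsClosed (K : Set α)) (hmem : ∀ n, f n ∈ K) : (∑' n, f n) ∈ K :=
  hK.mem_of_tendsto hf.hasSum
    (Filter.Eventually.of_forall fun s => sum_mem fun i _ => hmem i)

open UniformSpace in
/-- In the completion of a linearly topologized abelian group, every neighborhood of `0`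
contains a closed subgroup which absorbs the image of some open subgroup of the base. -/
theorem exists_closed_subgroup_subset {G' : Type*} [AddCommGroup G'] [UniformSpace G']
    [IsUniformAddGroup G'] (hG' : HasLinearGroupTopology G') {U : Set (Completion G')}
    (hU : U ∈ 𝓝 (0 : Completion G')) :
    ∃ (K : AddSubgroup (Completion G')) (H' : AddSubgroup G'),
      IsClosed (K : Set (Completion G')) ∧ (K : Set (Completion G')) ⊆ U ∧
      IsOpen (H' : Set G') ∧ ∀ y : G', y ∈ H' → (y : Completion G') ∈ K := by
  obtain ⟨V, hVn, hVc, hVU⟩ := exists_mem_nhds_isClosed_subset hU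
  have hcoe : Continuous ((↑) : G' → Completion G') := Completion.continuous_coe G'
  have hpre : ((↑) : G' → Completion G') ⁻¹' V ∈ 𝓝 (0 : G') := by
    have := hcoe.continuousAt (x := (0 : G'))
    rw [ContinuousAt, Completion.coe_zero] at this
    exact this hVn
  obtain ⟨Hs, -, -, hHso, hHsb⟩ := hG'
  obtain ⟨n, hn⟩ := hHsb _ hpre
  refine ⟨((Hs n).map (UniformSpace.Completion.toCompl)).topologicalClosure, Hs n,
    (((Hs n).map (UniformSpace.Completion.toCompl)).isClosed_topologicalClosure), ?_, hHso n, ?_⟩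
  · have h1 : (((Hs n).map (UniformSpace.Completion.toCompl)) : Set (Completion G')) ⊆ V := by
      rintro _ ⟨y, hy, rfl⟩
      exact hn hy
    exact Set.Subset.trans (hVc.closure_subset_iff.2 h1) hVU
  · intro y hy
    exact AddSubgroup.le_topologicalClosure _ ⟨y, hy, rfl⟩

open UniformSpace in
/-- if a sequence of continuous homomorphisms `(hₙ)` converges continuously
to the zero homomorphism, then for every `g` the family `(c'(hₙ(g)))` is summable in the
separated completion `Ĝ'`, the sum `s(g) = ∑ₙ c'(hₙ(g))` defines a continuous
homomorphism `s : G → Ĝ'`, and the partial sums `s_N = ∑_{n=0}^{N} c' ∘ hₙ` converge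
continuously to `s`. -/
theorem sum_of_continuously_convergent_sequence
    (G G' : Type*) [AddCommGroup G] [UniformSpace G] [IsUniformAddGroup G]
    [AddCommGroup G'] [UniformSpace G'] [IsUniformAddGroup G'] [T2Space G']
    (hG : HasLinearGroupTopology G) (hG' : HasLinearGroupTopology G')
    (h : ℕ → G →+ G') (hcont : ∀ n, Continuous (h n))
    (hconv : ConvergesContinuouslyTo (fun n x => h n x) (fun _ => 0)) :
    (∀ g : G, Summable fun n => ((h n g : G') : Completion G')) ∧
      Continuous (fun g : G => ∑' n, ((h n g : G') : Completion G')) ∧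
      (∀ g g' : G, (∑' n, ((h n (g + g') : G') : Completion G')) =
        (∑' n, ((h n g : G') : Completion G')) + ∑' n, ((h n g' : G') : Completion G')) ∧
      ConvergesContinuouslyTo
        (fun N g => ∑ n ∈ Finset.range (N + 1), ((h n g : G') : Completion G'))
        (fun g => ∑' n, ((h n g : G') : Completion G')) := by
  classical
  have key : ∀ (g : G) (H' : AddSubgroup G'), IsOpen (H' : Set G') →
      ∃ H : AddSubgroup G, IsOpen (H : Set G) ∧ ∃ n₀ : ℕ,
        ∀ x ∈ H, ∀ n, n₀ ≤ n → h n (g + x) ∈ H' := by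
    intro g H' hH'
    obtain ⟨H, hH, n₀, hmem⟩ := hconv g H' hH'
    exact ⟨H, hH, n₀, fun x hx n hn => by simpa using hmem x hx n hn⟩
  -- summability
  have hS : ∀ g : G, Summable fun n => ((h n g : G') : Completion G') := by
    intro g
    rw [summable_iff_vanishing]
    intro e he
    obtain ⟨K, H', hKc, hKU, hH'o, hKmem⟩ := exists_closed_subgroup_subset hG' he
    obtain ⟨H, -, n₀, hmem⟩ := key g H' hH'o
    refine ⟨Finset.range n₀, fun t ht => hKU (sum_mem fun i hi => hKmem _ ?_)⟩
    have hin₀ : n₀ ≤ i := by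
      by_contra hlt
      exact (Finset.disjoint_left.mp ht hi) (Finset.mem_range.2 (Nat.lt_of_not_le hlt))
    simpa using hmem 0 H.zero_mem i hin₀
  -- additivity
  have hadd : ∀ g g' : G, (∑' n, ((h n (g + g') : G') : Completion G')) =
      (∑' n, ((h n g : G') : Completion G')) + ∑' n, ((h n g' : G') : Completion G') := by
    intro g g'
    calc ∑' n, ((h n (g + g') : G') : Completion G')
        = ∑' n, (((h n g : G') : Completion G') + ((h n g' : G') : Completion G')) :=
          tsum_congr fun n => by rw [map_add]; exact_mod_cast rfl
      _ = _ := Summable.tsum_add (hS g) (hS g')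
  -- continuity
  set S : G →+ Completion G' :=
    { toFun := fun g => ∑' n, ((h n g : G') : Completion G')
      map_zero' := by simp
      map_add' := hadd } with hSdef
  have hScont : Continuous fun g : G => ∑' n, ((h n g : G') : Completion G') := by
    have hC0 : ContinuousAt S 0 := by
      rw [ContinuousAt, map_zero, Filter.tendsto_def]
      intro U hU
      obtain ⟨K, H', hKc, hKU, hH'o, hKmem⟩ := exists_closed_subgroup_subset hG' hU
      obtain ⟨H, hHo, n₀, hmem⟩ := key 0 H' hH'o
      have hW : ((H : Set G) ∩ ⋂ k ∈ Finset.range n₀, (h k) ⁻¹' (H' : Set G')) ∈ 𝓝 (0 : G) := by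
        refine Filter.inter_mem (hHo.mem_nhds H.zero_mem) ?_
        refine (Filter.biInter_finset_mem _).2 fun k _ =>
          (hH'o.preimage (hcont k)).mem_nhds ?_
        simpa using H'.zero_mem
      refine Filter.mem_of_superset hW ?_
      rintro x ⟨hxH, hxrest⟩
      refine hKU (tsum_mem_of_forall_mem (hS x) K hKc fun n => ?_)
      rcases lt_or_ge n n₀ with hlt | hle
      · exact hKmem _ (Set.mem_iInter₂.mp hxrest n (Finset.mem_range.2 hlt))
      · exact hKmem _ (by simpa using hmem x hxH n hle)
    exact continuous_of_continuousAt_zero S hC0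
  -- continuous convergence of partial sums
  have hcc : ConvergesContinuouslyTo
      (fun N g => ∑ n ∈ Finset.range (N + 1), ((h n g : G') : Completion G'))
      (fun g => ∑' n, ((h n g : G') : Completion G')) := by
    intro g W hW
    obtain ⟨K, H', hKc, hKW, hH'o, hKmem⟩ :=
      exists_closed_subgroup_subset hG' (hW.mem_nhds W.zero_mem)
    obtain ⟨H, hHo, n₀, hmem⟩ := key g H' hH'o
    refine ⟨H, hHo, n₀, fun x hx N hN => ?_⟩
    have htail : Summable fun i => ((h (i + (N + 1)) (g + x) : G') : Completion G') :=
      (summable_nat_add_iff (N + 1)).2 (hS (g + x))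
    have hsplit := Summable.sum_add_tsum_nat_add
      (f := fun n => ((h n (g + x) : G') : Completion G')) (N + 1) (hS (g + x))
    have hdiff : (∑ n ∈ Finset.range (N + 1), ((h n (g + x) : G') : Completion G')) -
        (∑' n, ((h n (g + x) : G') : Completion G')) =
        -(∑' i, ((h (i + (N + 1)) (g + x) : G') : Completion G')) := by
      rw [← hsplit]; abel
    show (∑ n ∈ Finset.range (N + 1), ((h n (g + x) : G') : Completion G')) -
        (∑' n, ((h n (g + x) : G') : Completion G')) ∈ W
    rw [hdiff]
    refine hKW (neg_mem (tsum_mem_of_forall_mem htail K hKc fun i => hKmem _ ?_))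
    exact hmem x hx (i + (N + 1)) (by omega)
  exact ⟨hS, hScont, hadd, hcc⟩
end

section
/- Let A be a topological ring, let B be a Hausdorff topological ring with separated completion c : B → B̂, and let h_n : A → B (n ∈ ℕ) be additive group homomorphisms such that for every a ∈ A the sequence (h_n(a))_{n∈ℕ} converges to 0 in B. Then the map s : A → B̂{T} defined by s(a) = ∑_{n∈ℕ} c(h_n(a))·Tⁿ is a well-defined additive group homomorphism, and s is continuous if and only if every h_n is continuous and the sequence (h_n) converges continuously to the zero homomorphism. -/
open Filter Topology

open scoped Uniformity

open UniformSpace in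
/-- given additive homomorphisms `hₙ : A → B` whose values at each point
tend to `0`, the map `s : A → B̂{T}`, `s(a) = ∑ₙ c(hₙ(a))·Tⁿ` (encoded by its coefficient
family, landing in the restricted power series, i.e. in the functions `ℕ → B̂` with
coefficients tending to `0`, with the topology of uniform convergence) is a well-defined
additive homomorphism, and it is continuous iff each `hₙ` is continuous and the sequence
`(hₙ)` converges continuously to the zero homomorphism. -/
theorem restricted_series_map_continuous_iff
    (A B : Type*) [CommRing A] [TopologicalSpace A] [IsTopologicalRing A]
    [CommRing B] [UniformSpace B] [IsUniformAddGroup B] [IsTopologicalRing B] [T2Space B]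
    (hA : HasLinearRingTopology A) (hB : HasLinearRingTopology B)
    (h : ℕ → A →+ B)
    (hpt : ∀ a : A, Tendsto (fun n => h n a) atTop (nhds 0)) :
    (∀ a : A, Tendsto (fun n => ((h n a : B) : Completion B)) atTop (nhds 0)) ∧
      (∀ a a' : A,
        (UniformFun.ofFun fun n => ((h n (a + a') : B) : Completion B)) =
          (UniformFun.ofFun fun n => ((h n a : B) : Completion B)) +
            UniformFun.ofFun fun n => ((h n a' : B) : Completion B)) ∧
      (Continuous (fun a : A =>
          UniformFun.ofFun fun n => ((h n a : B) : Completion B)) ↔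
        ((∀ n, Continuous (h n)) ∧
          ConvergesContinuouslyTo (fun n a => h n a) (fun _ => 0))) := by
  obtain ⟨𝔞, -, -, hAopen, hAbasis⟩ := hA
  obtain ⟨𝔟, -, -, hBopen, hBbasis⟩ := hB
  have hc : Continuous ((↑) : B → Completion B) := Completion.continuous_coe B
  refine ⟨?_, ?_, ?_⟩
  · intro a
    have := (hc.tendsto 0).comp (hpt a)
    rw [Completion.coe_zero] at this; exact this
  · intro a a'
    have : (fun n => ((h n (a + a') : B) : Completion B)) =
        fun n => ((h n a : B) : Completion B) + ((h n a' : B) : Completion B) := by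
      funext n; rw [map_add, Completion.coe_add]
    rw [this]; rfl
  · constructor
    · intro hcont
      constructor
      · intro n
        have h1 : Continuous fun a : A => ((h n a : B) : Completion B) :=
          (UniformFun.uniformContinuous_eval (Completion B) n).continuous.comp hcont
        exact ((Completion.isUniformEmbedding_coe B).isInducing.continuous_iff).mpr h1
      · intro g H' hH'open
        set S : Set (Completion B) := closure (((↑) : B → Completion B) '' H') with hSdef
        have hS : S ∈ 𝓝 (0 : Completion B) := by
          have := Completion.isDenseInducing_coe.closure_image_mem_nhds
            (hH'open.mem_nhds H'.zero_mem)
          rw [Completion.coe_zero] at this; exact this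
        have hVmem : {p : Completion B × Completion B | p.2 - p.1 ∈ S} ∈ 𝓤 (Completion B) := by
          rw [uniformity_eq_comap_nhds_zero]
          exact preimage_mem_comap hS
        have hcg := hcont.continuousAt (x := g)
        rw [ContinuousAt, (UniformFun.hasBasis_nhds ℕ (Completion B) _).tendsto_right_iff] at hcg
        have hev := hcg _ hVmem
        have key : ∀ b b' : B, ((b' : Completion B) - (b : B) ∈ S) → b' - b ∈ H' := by
          intro b b' hbb
          have h2 : ((b' - b : B) : Completion B) ∈ S := by
            rwa [Completion.coe_sub]
          have hcl : ((↑) : B → Completion B) ⁻¹' S = closure (H' : Set B) :=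
            ((Completion.isUniformEmbedding_coe B).isInducing.closure_eq_preimage_closure_image
              (H' : Set B)).symm
          have h3 : (b' - b) ∈ closure (H' : Set B) := by
            rw [← hcl]; exact h2
          rwa [(H'.isClosed_of_isOpen hH'open).closure_eq] at h3
        have hmap : Tendsto (fun x : A => g + x) (𝓝 0) (𝓝 g) := by
          have := (continuous_add_left g).tendsto (0 : A)
          simpa using this
        have hT : {x : A | ∀ n : ℕ, h n (g + x) - h n g ∈ H'} ∈ 𝓝 (0 : A) := by
          refine (hmap.eventually hev).mono ?_
          intro x hx n
          exact key _ _ (hx n)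
        obtain ⟨m, hm⟩ := hAbasis _ hT
        obtain ⟨n₀, hn₀⟩ := eventually_atTop.mp
          ((hpt g).eventually (hH'open.mem_nhds H'.zero_mem))
        refine ⟨(𝔞 m).toAddSubgroup, hAopen m, n₀, ?_⟩
        intro x hx n hn
        have h4 : h n (g + x) - h n g ∈ H' := hm hx n
        have h5 : h n g ∈ H' := hn₀ n hn
        have : h n (g + x) ∈ H' := by
          have h6 := H'.add_mem h4 h5
          rwa [sub_add_cancel] at h6
        simpa using this
    · rintro ⟨hcts, hcc⟩
      rw [continuous_iff_continuousAt]
      intro g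
      rw [ContinuousAt, (UniformFun.hasBasis_nhds ℕ (Completion B) _).tendsto_right_iff]
      intro V hV
      rw [uniformity_eq_comap_nhds_zero] at hV
      obtain ⟨S, hS, hSV⟩ := hV
      have hpre : ((↑) : B → Completion B) ⁻¹' S ∈ 𝓝 (0 : B) := by
        apply hc.continuousAt.preimage_mem_nhds
        rw [Completion.coe_zero]; exact hS
      obtain ⟨m, hm⟩ := hBbasis _ hpre
      obtain ⟨H, hHopen, n₀, hH⟩ := hcc g (𝔟 m).toAddSubgroup (hBopen m)
      have E1 : ∀ᶠ a in 𝓝 g, ∀ n ∈ Finset.range n₀, h n a - h n g ∈ 𝔟 m := by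
        rw [eventually_all_finset]
        intro n _
        exact ((hcts n).sub continuous_const).continuousAt.preimage_mem_nhds
          ((hBopen m).mem_nhds (by simp))
      have E2 : ∀ᶠ a in 𝓝 g, a - g ∈ H := by
        exact (continuous_id.sub continuous_const).continuousAt.preimage_mem_nhds
          (hHopen.mem_nhds (by simpa using H.zero_mem))
      refine (E1.and E2).mono ?_
      intro a ⟨ha1, ha2⟩
      have hall : ∀ n : ℕ, h n a - h n g ∈ 𝔟 m := by
        intro n
        rcases lt_or_ge n n₀ with hlt | hle
        · exact ha1 n (Finset.mem_range.mpr hlt)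
        · have hga : h n a ∈ 𝔟 m := by
            have := hH (a - g) ha2 n hle
            simpa using this
          have hgg : h n g ∈ 𝔟 m := by
            have := hH 0 H.zero_mem n hle
            simpa using this
          exact (𝔟 m).sub_mem hga hgg
      intro n
      apply hSV
      show ((h n a : B) : Completion B) - ((h n g : B) : Completion B) ∈ S
      rw [← Completion.coe_sub]
      exact hm (hall n)
end
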